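/- arXiv:1910.00586 — 15 statements merged into one kernel-verified Lean document; each statement's English description precedes it below -/
import Mathlib

section
/- Let n ≥ 2, ω = e^{2πi/n}, ν ∈ ℤ/nℤ, and let C be the n×n circulant matrix with generator (n/2 − 1, −ω^ν, −ω^{2ν}, …, −ω^{(n−1)ν}). Then C C* = (n/2)² I, i.e., C satisfies C C* = (d² + n − 1) I with d = n/2 − 1. -/
open Matrix Complex

theorem stmt0 (n : ℕ) [NeZero n] (hn : 2 ≤ n) (ν : ZMod n)
    (c : ZMod n → ℂ)
    (hc0 : c 0 = (n : ℂ) / 2 - 1)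
    (hcj : ∀ j : ZMod n, j ≠ 0 →
      c j = -Complex.exp (2 * Real.pi * Complex.I / n) ^ (j.val * ν.val))
    (C : Matrix (ZMod n) (ZMod n) ℂ)
    (hC : ∀ j k, C j k = c (k - j)) :
    C * C.conjTranspose = (((n : ℂ) / 2) ^ 2) • 1 := by
  have hn0 : (n : ℂ) ≠ 0 := Nat.cast_ne_zero.mpr (NeZero.ne n)
  set ζ : ℂ := Complex.exp (2 * Real.pi * Complex.I / n) with hζ
  have hζn : ζ ^ n = 1 := by
    rw [hζ, ← Complex.exp_nat_mul]
    rw [show (n : ℂ) * (2 * Real.pi * Complex.I / n) = 2 * Real.pi * Complex.I by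
      field_simp]
    exact Complex.exp_two_pi_mul_I
  set f : ZMod n → ℂ := fun a => ζ ^ a.val with hf
  have hf_nat : ∀ k : ℕ, ζ ^ k = f (k : ZMod n) := by
    intro k
    have h1 : f (k : ZMod n) = ζ ^ (k % n) := by simp [hf, ZMod.val_natCast]
    conv_lhs => rw [← Nat.div_add_mod k n]
    rw [pow_add, pow_mul, hζn, one_pow, one_mul, h1]
  have hval : ∀ a : ZMod n, ((a.val : ZMod n)) = a := by
    intro a; simp [ZMod.natCast_val, ZMod.cast_id]
  have hf_add : ∀ a b : ZMod n, f (a + b) = f a * f b := by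
    intro a b
    have h2 : f a * f b = ζ ^ (a.val + b.val) := by rw [pow_add]
    rw [h2, hf_nat (a.val + b.val)]
    push_cast
    rw [hval, hval]
  have hf0 : f 0 = 1 := by simp [hf]
  have hfinv : ∀ a : ZMod n, f a * f (-a) = 1 := by
    intro a; rw [← hf_add, add_neg_cancel, hf0]
  have hconjζ : (starRingEnd ℂ) ζ = ζ⁻¹ := by
    rw [hζ, ← Complex.exp_conj, ← Complex.exp_neg]
    congr 1
    simp only [map_div₀, _root_.map_mul, Complex.conj_I, Complex.conj_natCast,
      Complex.conj_ofReal, map_ofNat]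
    ring
  have hζ0 : ζ ≠ 0 := Complex.exp_ne_zero _
  have hconjf : ∀ a : ZMod n, (starRingEnd ℂ) (f a) = f (-a) := by
    intro a
    have h1 : (starRingEnd ℂ) (f a) = (f a)⁻¹ := by
      rw [hf, map_pow, hconjζ, inv_pow]
    have h2 : f (-a) * f a = 1 := by
      have := hfinv (-a); rwa [neg_neg] at this
    rw [h1, eq_inv_of_mul_eq_one_left h2]
  set s : ℂ := (n : ℂ) / 2 with hs
  have hc : ∀ a : ZMod n, c a = -f (a * ν) + (if a = 0 then s else 0) := by
    intro a
    by_cases ha : a = 0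
    · subst ha
      rw [if_pos rfl, hc0, zero_mul, hf0]
      ring
    · rw [hcj a ha, if_neg ha, add_zero, hf_nat (a.val * ν.val)]
      push_cast
      rw [hval, hval]
  ext j k
  rw [Matrix.mul_apply, Matrix.smul_apply, Matrix.one_apply]
  have expand : ∀ l : ZMod n, C j l * (C.conjTranspose) l k =
      f ((k - j) * ν)
      + (if l = j then s * (-f ((k - l) * ν)) else 0)
      + (if l = k then (-f ((l - j) * ν)) * s else 0)
      + (if l = j then (if l = k then s * s else 0) else 0) := by
    intro l
    rw [Matrix.conjTranspose_apply, hC, hC, hc (l - j), hc (l - k)]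
    have hstars : star s = s := by
      simp [hs, Complex.star_def, map_div₀]
    have hstarf : star (f ((l - k) * ν)) = f ((k - l) * ν) := by
      rw [Complex.star_def, hconjf]
      congr 1; ring
    rw [star_add, star_neg, hstarf, apply_ite star, hstars, star_zero]
    have hAB : -f ((l - j) * ν) * -f ((k - l) * ν) = f ((k - j) * ν) := by
      rw [neg_mul_neg, ← hf_add]
      congr 1; ring
    simp only [sub_eq_zero]
    by_cases h1 : l = j <;> by_cases h2 : l = k
    · simp only [if_pos h1, if_pos h2]; rw [← hAB]; ring
    · simp only [if_pos h1, if_neg h2]; rw [← hAB]; ring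
    · simp only [if_neg h1, if_pos h2]; rw [← hAB]; ring
    · simp only [if_neg h1, if_neg h2]; rw [← hAB]; ring
  rw [Finset.sum_congr rfl (fun l _ => expand l)]
  rw [Finset.sum_add_distrib, Finset.sum_add_distrib, Finset.sum_add_distrib]
  rw [Finset.sum_const, Finset.sum_ite_eq', Finset.sum_ite_eq', Finset.sum_ite_eq']
  simp only [Finset.mem_univ, if_true, Finset.card_univ, ZMod.card, nsmul_eq_mul]
  have hns : (n : ℂ) = 2 * s := by rw [hs]; ring
  by_cases hjk : j = k
  · subst hjk
    simp only [sub_self, zero_mul, hf0, eq_self_iff_true, if_true, smul_eq_mul, mul_one]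
    rw [hns]; ring
  · simp only [if_neg hjk, smul_zero]
    rw [hns]; ring
end

section
/- Let C be a Hermitian n×n circulant matrix with generator (c₀,…,c_{n−1}) satisfying c₀ = d ≥ 0, |c_j| = 1 for j = 1,…,n−1, C C* = (d² + n − 1) I, and suppose n is even. Then there exists a positive integer k ≤ n/(2√(n−1)) such that √(d² + n − 1) = n/(2k). -/
open Matrix Complex

theorem stmt2 (n : ℕ) [NeZero n] (hn : 2 ≤ n) (hne : Even n)
    (c : ZMod n → ℂ) (C : Matrix (ZMod n) (ZMod n) ℂ)
    (hC : ∀ j k, C j k = c (k - j))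
    (d : ℝ) (hd : 0 ≤ d) (hc0 : c 0 = (d : ℂ))
    (hunit : ∀ j : ZMod n, j ≠ 0 → ‖c j‖ = 1)
    (hHerm : C.IsHermitian)
    (horth : C * C.conjTranspose = ((d ^ 2 + n - 1 : ℝ) : ℂ) • 1) :
    ∃ k : ℕ, 0 < k ∧ (k : ℝ) ≤ n / (2 * Real.sqrt (n - 1)) ∧
      Real.sqrt (d ^ 2 + n - 1) = n / (2 * k) := by
  classical
  have hn1 : (1:ℝ) ≤ (n:ℝ) - 1 := by
    have : (2:ℝ) ≤ (n:ℝ) := by exact_mod_cast hn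
    linarith
  set r : ℝ := d ^ 2 + n - 1 with hr
  have hr1 : (1:ℝ) ≤ r := by nlinarith [sq_nonneg d]
  have hr0 : (0:ℝ) ≤ r := by linarith
  set s : ℝ := Real.sqrt r with hs
  have hs2 : s ^ 2 = r := Real.sq_sqrt hr0
  have hspos : 0 < s := Real.sqrt_pos.mpr (by linarith)
  -- conjugation
  have hconj : ∀ a : ZMod n, (starRingEnd ℂ) (c a) = c (-a) := by
    intro a
    have := congrFun (congrFun hHerm a) 0
    simpa [Matrix.conjTranspose_apply, hC] using this
  -- convolution identity
  have hconv : ∀ a : ZMod n, (∑ l : ZMod n, c l * c (a - l)) =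
      ((r:ℂ)) * (if a = 0 then 1 else 0) := by
    intro a
    have := congrFun (congrFun horth 0) a
    simp only [Matrix.mul_apply, Matrix.conjTranspose_apply, hC, Matrix.smul_apply,
      Matrix.one_apply, smul_eq_mul] at this
    have h2 : ∀ l : ZMod n, star (c (l - a)) = c (a - l) := by
      intro l
      have := hconj (l - a)
      rw [starRingEnd_apply] at this
      rw [this, neg_sub]
    calc (∑ l : ZMod n, c l * c (a - l))
        = ∑ l : ZMod n, c (l - 0) * star (c (l - a)) := by
          refine Finset.sum_congr rfl fun l _ => ?_
          rw [h2, sub_zero]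
      _ = (r:ℂ) * (if a = 0 then 1 else 0) := by
          rw [this]; by_cases h : a = 0 <;> simp [h, eq_comm]
  -- the character
  have hnne : (n:ℕ) ≠ 0 := NeZero.ne n
  set ζ : ℂ := Complex.exp (2 * Real.pi * Complex.I / n) with hzeta
  have hprim : IsPrimitiveRoot ζ n := Complex.isPrimitiveRoot_exp n hnne
  set ψ : AddChar (ZMod n) ℂ :=
    AddChar.zmodChar n ((IsPrimitiveRoot.iff_def ζ n).mp hprim).left with hpsi
  have hpsiprim : ψ.IsPrimitive :=
    AddChar.zmodChar_primitive_of_primitive_root n hprim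
  have horthchar : ∀ b : ZMod n, (∑ x : ZMod n, ψ (x * b)) =
      if b = 0 then (n:ℂ) else 0 := by
    intro b
    have := AddChar.sum_mulShift b hpsiprim
    simpa [ZMod.card] using this
  -- eigenvalues
  set lam : ZMod n → ℂ := fun m => ∑ j : ZMod n, c j * ψ (j * m) with hlam
  have lam_sq : ∀ m : ZMod n, lam m ^ 2 = (r:ℂ) := by
    intro m
    have step1 : lam m ^ 2 = ∑ j : ZMod n, ∑ a : ZMod n,
        c j * c (a - j) * ψ (a * m) := by
      rw [sq, hlam, Finset.sum_mul_sum]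
      refine Finset.sum_congr rfl fun j _ => ?_
      refine Fintype.sum_equiv (Equiv.addLeft j) _ _ fun l => ?_
      simp only [Equiv.coe_addLeft]
      rw [add_sub_cancel_left, add_mul, AddChar.map_add_eq_mul]
      ring
    rw [step1, Finset.sum_comm]
    have step2 : ∀ a : ZMod n, (∑ j : ZMod n, c j * c (a - j) * ψ (a * m)) =
        ((r:ℂ)) * (if a = 0 then 1 else 0) * ψ (a * m) := by
      intro a
      rw [← Finset.sum_mul, hconv a]
    rw [Finset.sum_congr rfl fun a _ => step2 a]
    simp [Finset.sum_ite_eq']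
  -- the half element
  set hh : ZMod n := ((n / 2 : ℕ) : ZMod n) with hhh
  have hhlt : n / 2 < n := Nat.div_lt_self (by omega) (by norm_num)
  have hhne : hh ≠ 0 := by
    rw [hhh, Ne, ZMod.natCast_eq_zero_iff]
    intro hdvd
    have := Nat.le_of_dvd (by omega) hdvd
    omega
  have hh2 : hh + hh = 0 := by
    rw [hhh, ← Nat.cast_add]
    obtain ⟨t, ht⟩ := hne
    have : n / 2 + n / 2 = n := by omega
    rw [this, ZMod.natCast_self]
  have hhneg : -hh = hh := by rw [neg_eq_iff_add_eq_zero, hh2]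
  -- inversion sum
  have hsum : (∑ m : ZMod n, lam m * ψ (hh * m)) = (n : ℂ) * c hh := by
    have step1 : ∀ m : ZMod n, lam m * ψ (hh * m) =
        ∑ j : ZMod n, c j * ψ (m * (j + hh)) := by
      intro m
      rw [hlam, Finset.sum_mul]
      refine Finset.sum_congr rfl fun j _ => ?_
      rw [mul_assoc, ← AddChar.map_add_eq_mul]
      ring_nf
    rw [Finset.sum_congr rfl fun m _ => step1 m, Finset.sum_comm]
    have step2 : ∀ j : ZMod n, (∑ m : ZMod n, c j * ψ (m * (j + hh))) =
        c j * (if j + hh = 0 then (n:ℂ) else 0) := by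
      intro j
      rw [← Finset.mul_sum, horthchar]
    rw [Finset.sum_congr rfl fun j _ => step2 j]
    have hiff : ∀ j : ZMod n, j + hh = 0 ↔ j = hh := by
      intro j
      constructor
      · intro h; have : j = -hh := by linear_combination h
        rwa [hhneg] at this
      · intro h; rw [h, hh2]
    simp only [hiff, mul_ite, mul_zero]
    rw [Finset.sum_ite_eq' Finset.univ hh (fun j => c j * (n:ℂ))]
    simp [mul_comm]
  -- each term is ± s
  set t : ZMod n → ℂ := fun m => lam m * ψ (hh * m) with ht
  have hpm : ∀ m : ZMod n, t m = (s:ℂ) ∨ t m = -(s:ℂ) := by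
    intro m
    have hlampm : lam m = (s:ℂ) ∨ lam m = -(s:ℂ) := by
      have : lam m * lam m = (s:ℂ) * (s:ℂ) := by
        rw [← sq, ← sq, lam_sq m]
        norm_cast
        rw [hs2]
      exact mul_self_eq_mul_self_iff.mp this
    have hpsipm : ψ (hh * m) = 1 ∨ ψ (hh * m) = -1 := by
      have : ψ (hh * m) * ψ (hh * m) = 1 := by
        rw [← AddChar.map_add_eq_mul]
        have : hh * m + hh * m = 0 := by
          rw [← add_mul, hh2, zero_mul]
        rw [this, AddChar.map_zero_eq_one]
      exact mul_self_eq_one_iff.mp this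
    rcases hlampm with h1 | h1 <;> rcases hpsipm with h2 | h2 <;>
      simp [ht, h1, h2]
  -- counting
  set P : Finset (ZMod n) := Finset.univ.filter (fun m => t m = (s:ℂ)) with hP
  set p : ℕ := P.card with hp
  set q : ℕ := (Finset.univ.filter (fun m => ¬ t m = (s:ℂ))).card with hq
  have hpq : p + q = n := by
    rw [hp, hq, hP, Finset.card_filter_add_card_filter_not]
    simp [ZMod.card]
  have hsumval : (∑ m : ZMod n, t m) = (p:ℂ) * (s:ℂ) - (q:ℂ) * (s:ℂ) := by
    rw [← Finset.sum_filter_add_sum_filter_not Finset.univ (fun m => t m = (s:ℂ))]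
    rw [Finset.sum_congr rfl (fun m hm => (Finset.mem_filter.mp hm).2)]
    have : ∀ m ∈ Finset.univ.filter (fun m => ¬ t m = (s:ℂ)), t m = -(s:ℂ) := by
      intro m hm
      rcases hpm m with h | h
      · exact absurd h (Finset.mem_filter.mp hm).2
      · exact h
    rw [Finset.sum_congr rfl this]
    simp [hp, hq, hP, mul_comm, sub_eq_add_neg]
  have hkey : (n:ℂ) * c hh = ((p:ℝ) - (q:ℝ) : ℝ) * (s:ℂ) := by
    rw [← hsum, hsumval]
    push_cast
    ring
  -- take absolute values
  have habs : (n:ℝ) = |(p:ℝ) - (q:ℝ)| * s := by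
    have h1 : ‖(n:ℂ) * c hh‖ = n := by
      rw [norm_mul, hunit hh hhne]
      simp [Complex.norm_natCast]
    have h2 : ‖(((p:ℝ) - (q:ℝ) : ℝ) : ℂ) * (s:ℂ)‖ = |(p:ℝ) - (q:ℝ)| * s := by
      rw [norm_mul, Complex.norm_real, Complex.norm_real, Real.norm_eq_abs, Real.norm_eq_abs, abs_of_pos hspos]
    rw [← h1, hkey, h2]
  -- parity
  set z : ℤ := (p:ℤ) - (q:ℤ) with hz
  have hzeven : Even z := by
    obtain ⟨u, hu⟩ := hne
    refine ⟨(p:ℤ) - u, ?_⟩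
    have h5 : (p:ℤ) + q = (u:ℤ) + u := by exact_mod_cast hpq.trans hu
    rw [hz]
    omega
  obtain ⟨k, hk⟩ : ∃ k : ℕ, z.natAbs = 2 * k := by
    obtain ⟨w, hw⟩ := Int.natAbs_even.mpr hzeven
    exact ⟨w, by omega⟩
  have habs2 : (n:ℝ) = 2 * k * s := by
    rw [habs]
    have : |(p:ℝ) - (q:ℝ)| = (z.natAbs : ℝ) := by
      rw [hz]
      push_cast [Nat.cast_natAbs]
      norm_num
    rw [this, hk]
    push_cast
    ring
  have hkpos : 0 < k := by
    rcases Nat.eq_zero_or_pos k with h | h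
    · exfalso
      rw [h] at habs2
      simp at habs2
      omega
    · exact h
  refine ⟨k, hkpos, ?_, ?_⟩
  · have hsn : Real.sqrt ((n:ℝ) - 1) ≤ s := by
      rw [hs]
      apply Real.sqrt_le_sqrt
      nlinarith [sq_nonneg d]
    have hsq : 0 < Real.sqrt ((n:ℝ) - 1) := Real.sqrt_pos.mpr (by linarith)
    rw [le_div_iff₀ (by positivity)]
    nlinarith
  · show s = (n:ℝ) / (2 * k)
    rw [eq_div_iff (by positivity : (2 * (k:ℝ)) ≠ 0)]
    linarith [habs2]
end

section
/- Let C be a Hermitian n×n circulant matrix (n even) with generator (c₀,…,c_{n−1}) satisfying c₀ = d ≥ 0, |c_j| = 1 for j = 1,…,n−1, and C C* = (d² + n − 1) I. Then d is rational. -/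
open Matrix Complex

set_option maxHeartbeats 2000000 in
theorem stmt3 (n : ℕ) [NeZero n] (hn : 2 ≤ n) (hne : Even n)
    (c : ZMod n → ℂ) (C : Matrix (ZMod n) (ZMod n) ℂ)
    (hC : ∀ j k, C j k = c (k - j))
    (d : ℝ) (hd : 0 ≤ d) (hc0 : c 0 = (d : ℂ))
    (hunit : ∀ j : ZMod n, j ≠ 0 → ‖c j‖ = 1)
    (hHerm : C.IsHermitian)
    (horth : C * C.conjTranspose = ((d ^ 2 + n - 1 : ℝ) : ℂ) • 1) :
    ∃ q : ℚ, d = (q : ℝ) := by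
  classical
  set ψ : AddChar (ZMod n) ℂ := ZMod.stdAddChar with hψdef
  have hprim : ψ.IsPrimitive := ZMod.isPrimitive_stdAddChar n
  have hn0 : (n : ℝ) ≠ 0 := Nat.cast_ne_zero.2 (NeZero.ne n)
  -- |ψ a| = 1 and conj (ψ a) = ψ (-a)
  have habs : ∀ a : ZMod n, ‖ψ a‖ = 1 := by
    intro a; rw [hψdef, ZMod.stdAddChar_apply]; exact Circle.norm_coe _
  have hψne : ∀ a : ZMod n, ψ a ≠ 0 := by
    intro a h; have := habs a; rw [h] at this; simp at this
  have hconj : ∀ a : ZMod n, (starRingEnd ℂ) (ψ a) = ψ (-a) := by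
    intro a
    have h1 : ψ a * ψ (-a) = 1 := by
      rw [← AddChar.map_add_eq_mul]; simp
    have h2 : ψ a * (starRingEnd ℂ) (ψ a) = 1 := by
      rw [Complex.mul_conj, Complex.normSq_eq_norm_sq, habs a]; norm_num
    have := h1.trans h2.symm
    exact (mul_left_cancel₀ (hψne a) this).symm
  -- Hermitian: conj (c j) = c (-j)
  have hsym : ∀ j : ZMod n, (starRingEnd ℂ) (c j) = c (-j) := by
    intro j
    have h := congrFun (congrFun hHerm.eq j) 0
    rw [Matrix.conjTranspose_apply, hC, hC] at h
    simpa using h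
  -- eigenvalues
  set lam : ZMod n → ℂ := fun k => ∑ j : ZMod n, c j * ψ (j * k) with hlamdef
  -- matrix action on Fourier vectors
  have haction : ∀ k j : ZMod n,
      (∑ m : ZMod n, C j m * ψ (m * k)) = ψ (j * k) * lam k := by
    intro k j
    rw [hlamdef, Finset.mul_sum]
    refine Fintype.sum_equiv (Equiv.subRight j) _ _ ?_
    intro m
    simp only [Equiv.subRight_apply]
    rw [hC]
    have he : ψ (j * k) * ψ ((m - j) * k) = ψ (m * k) := by
      rw [← AddChar.map_add_eq_mul]; congr 1; ring
    rw [← he]; ring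
  -- C * C = s² • 1
  have hC2 : C * C = ((d ^ 2 + n - 1 : ℝ) : ℂ) • 1 := by
    rw [hHerm.eq] at horth; exact horth
  -- lam k ^ 2 = s²
  have hlamsq : ∀ k : ZMod n, lam k * lam k = ((d ^ 2 + n - 1 : ℝ) : ℂ) := by
    intro k
    have h1 : (∑ p : ZMod n, (C * C) 0 p * ψ (p * k))
        = ((d ^ 2 + n - 1 : ℝ) : ℂ) := by
      rw [hC2]
      simp [Matrix.smul_apply, Matrix.one_apply, Finset.sum_ite_eq',
        mul_comm]
    have h2 : (∑ p : ZMod n, (C * C) 0 p * ψ (p * k))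
        = lam k * lam k := by
      simp only [Matrix.mul_apply, Finset.sum_mul]
      rw [Finset.sum_comm]
      have : ∀ m : ZMod n, (∑ p : ZMod n, C 0 m * C m p * ψ (p * k))
          = C 0 m * (ψ (m * k) * lam k) := by
        intro m
        rw [← haction k m, Finset.mul_sum]
        congr 1; funext p; ring
      rw [Finset.sum_congr rfl (fun m _ => this m)]
      have := haction k 0
      simp only [zero_mul, AddChar.map_zero_eq_one, one_mul] at this
      calc (∑ m : ZMod n, C 0 m * (ψ (m * k) * lam k))
          = (∑ m : ZMod n, C 0 m * ψ (m * k)) * lam k := by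
            rw [Finset.sum_mul]; congr 1; funext m; ring
        _ = lam k * lam k := by rw [this]
    rw [← h2, h1]
  -- lam k is real
  have hlamreal : ∀ k : ZMod n, ((lam k).re : ℂ) = lam k := by
    intro k
    rw [← Complex.conj_eq_iff_re]
    rw [hlamdef]
    simp only [map_sum, _root_.map_mul]
    refine Fintype.sum_equiv (Equiv.neg (ZMod n)) _ _ ?_
    intro j
    simp only [Equiv.neg_apply, hsym, hconj, neg_mul, neg_neg]
  set r : ZMod n → ℝ := fun k => (lam k).re with hrdef
  have hr2 : ∀ k, r k ^ 2 = d ^ 2 + n - 1 := by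
    intro k
    have h1 := hlamsq k
    rw [← hlamreal k] at h1
    have h2 : ((r k * r k : ℝ) : ℂ) = ((d ^ 2 + (n : ℝ) - 1 : ℝ) : ℂ) := by
      rw [Complex.ofReal_mul]; exact h1
    have h3 := Complex.ofReal_injective h2
    nlinarith [h3]
  -- s
  set s : ℝ := Real.sqrt (d ^ 2 + n - 1) with hsdef
  have hn2 : (2 : ℝ) ≤ (n : ℝ) := by exact_mod_cast hn
  have hs2pos : 0 < d ^ 2 + n - 1 := by nlinarith
  have hs_sq : s ^ 2 = d ^ 2 + n - 1 := Real.sq_sqrt hs2pos.le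
  have hspos : 0 < s := Real.sqrt_pos.2 hs2pos
  have hrs : ∀ k, r k = s ∨ r k = -s := by
    intro k
    have h : (r k - s) * (r k + s) = 0 := by nlinarith [hr2 k, hs_sq]
    rcases mul_eq_zero.1 h with h | h
    · left; linarith
    · right; linarith
  -- half element
  obtain ⟨m, hm⟩ := hne
  set h : ZMod n := ((n / 2 : ℕ) : ZMod n) with hhdef
  have hmn : n / 2 = m := by omega
  have hh2 : h + h = 0 := by
    rw [hhdef, ← Nat.cast_add]
    have : n / 2 + n / 2 = n := by omega
    rw [this, ZMod.natCast_self]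
  have hhneg : -h = h := by
    have := hh2; linear_combination -this
  have hhne : h ≠ 0 := by
    rw [hhdef, Ne, ZMod.natCast_eq_zero_iff]
    intro hdvd
    have h1 : 1 ≤ n / 2 := by omega
    have := Nat.le_of_dvd (by omega) hdvd
    omega
  -- c h = ±1
  have hchreal : (starRingEnd ℂ) (c h) = c h := by rw [hsym, hhneg]
  obtain ⟨ch, hch⟩ := Complex.conj_eq_iff_real.1 hchreal
  have hch1 : ch = 1 ∨ ch = -1 := by
    have := hunit h hhne
    rw [hch] at this
    rw [Complex.norm_real, Real.norm_eq_abs] at this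
    exact (abs_eq zero_le_one).1 this
  -- sign function σ k = ψ (h * k) = ±1
  have hσpm : ∀ k : ZMod n, ψ (h * k) = 1 ∨ ψ (h * k) = -1 := by
    intro k
    have : ψ (h * k) * ψ (h * k) = 1 := by
      rw [← AddChar.map_add_eq_mul, ← add_mul, hh2, zero_mul]
      simp
    exact mul_self_eq_one_iff.1 this
  -- orthogonality sums
  have horthsum : ∀ a : ZMod n, (∑ k : ZMod n, ψ (k * a))
      = if a = 0 then (n : ℂ) else 0 := by
    intro a
    have := AddChar.sum_mulShift (ψ := ψ) a hprim
    rw [ZMod.card] at this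
    simpa using this
  have hsum1 : (∑ k : ZMod n, lam k) = (n : ℂ) * c 0 := by
    rw [hlamdef]
    rw [Finset.sum_comm]
    have : ∀ j : ZMod n, (∑ k : ZMod n, c j * ψ (j * k))
        = c j * (if j = 0 then (n : ℂ) else 0) := by
      intro j
      rw [← Finset.mul_sum]
      congr 1
      rw [← horthsum j]
      congr 1; funext k; rw [mul_comm]
    rw [Finset.sum_congr rfl (fun j _ => this j)]
    simp [Finset.sum_ite_eq', mul_comm]
  have hsum2 : (∑ k : ZMod n, ψ (h * k) * lam k) = (n : ℂ) * c h := by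
    rw [hlamdef]
    simp only [Finset.mul_sum]
    rw [Finset.sum_comm]
    have : ∀ j : ZMod n, (∑ k : ZMod n, ψ (h * k) * (c j * ψ (j * k)))
        = c j * (if j + h = 0 then (n : ℂ) else 0) := by
      intro j
      have he : ∀ k : ZMod n, ψ (h * k) * (c j * ψ (j * k))
          = c j * ψ (k * (j + h)) := by
        intro k
        rw [mul_comm k (j + h), add_mul, AddChar.map_add_eq_mul]
        ring
      rw [Finset.sum_congr rfl (fun k _ => he k), ← Finset.mul_sum,
        horthsum (j + h)]
    rw [Finset.sum_congr rfl (fun j _ => this j)]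
    have hkey : ∀ j : ZMod n, j + h = 0 ↔ j = h := by
      intro j
      constructor
      · intro hj; have : j = -h := by linear_combination hj
        rw [this, hhneg]
      · intro hj; rw [hj, hh2]
    rw [Finset.sum_congr rfl (fun j _ => by rw [if_congr (hkey j) rfl rfl])]
    simp [Finset.sum_ite_eq', mul_comm]
  -- integer sign sequences
  set a : ZMod n → ℤ := fun k => if r k = s then 1 else -1 with hadef
  have hra : ∀ k, r k = s * a k := by
    intro k
    rcases hrs k with hk | hk
    · simp only [hadef]; rw [if_pos hk, hk]; push_cast; ring
    · have hne' : ¬ r k = s := by rw [hk]; intro hcon; nlinarith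
      simp only [hadef]; rw [if_neg hne', hk]; push_cast; ring
  set σ : ZMod n → ℤ := fun k => if ψ (h * k) = 1 then 1 else -1 with hσdef
  have hσc : ∀ k, ψ (h * k) = ((σ k : ℝ) : ℂ) := by
    intro k
    rcases hσpm k with hk | hk
    · simp only [hσdef]; rw [if_pos hk, hk]; norm_num
    · have hne' : ¬ ψ (h * k) = 1 := by rw [hk]; norm_num
      simp only [hσdef]; rw [if_neg hne', hk]; norm_num
  -- real versions of the two sums
  have hreal1 : s * (∑ k : ZMod n, (a k : ℝ)) = n * d := by
    have : ((∑ k : ZMod n, (s * a k : ℝ) : ℝ) : ℂ) = ((n * d : ℝ) : ℂ) := by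
      push_cast
      calc (∑ k : ZMod n, (s : ℂ) * (a k : ℂ))
          = ∑ k : ZMod n, lam k := by
            refine Finset.sum_congr rfl (fun k _ => ?_)
            have h5 : ((r k : ℝ) : ℂ) = lam k := hlamreal k
            rw [← h5, hra k]
            push_cast
            ring
        _ = (n : ℂ) * c 0 := hsum1
        _ = (n : ℂ) * d := by rw [hc0]
    have h6 := Complex.ofReal_injective this
    rw [Finset.mul_sum]
    exact h6
  have hreal2 : s * (∑ k : ZMod n, (σ k * a k : ℝ)) = n * ch := by
    have : ((∑ k : ZMod n, (s * (σ k * a k) : ℝ) : ℝ) : ℂ)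
        = ((n * ch : ℝ) : ℂ) := by
      push_cast
      calc (∑ k : ZMod n, (s : ℂ) * ((σ k : ℂ) * (a k : ℂ)))
          = ∑ k : ZMod n, ψ (h * k) * lam k := by
            refine Finset.sum_congr rfl (fun k _ => ?_)
            have h5 : ((r k : ℝ) : ℂ) = lam k := hlamreal k
            rw [← h5, hra k, hσc k]
            push_cast
            ring
        _ = (n : ℂ) * c h := hsum2
        _ = (n : ℂ) * ch := by rw [hch]
    have h6 := Complex.ofReal_injective this
    rw [Finset.mul_sum]
    exact h6
  -- assemble
  set A : ℤ := ∑ k : ZMod n, a k with hAdef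
  set B : ℤ := ∑ k : ZMod n, σ k * a k with hBdef
  have hA : s * (A : ℝ) = n * d := by
    rw [hAdef]; push_cast; exact hreal1
  have hB : s * (B : ℝ) = n * ch := by
    rw [hBdef]
    push_cast
    exact hreal2
  have hBne : (B : ℝ) ≠ 0 := by
    intro h0
    rw [h0, mul_zero] at hB
    rcases hch1 with hc1 | hc1 <;> rw [hc1] at hB <;> nlinarith
  -- d = ch * A / B
  have hd_eq : d = ch * A / B := by
    have h1 : d = s * A / n := by
      field_simp at hA ⊢
      linarith [hA]
    have h2 : s = n * ch / B := by
      field_simp at hB ⊢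
      linarith [hB]
    rw [h1, h2]
    field_simp
  rcases hch1 with hc1 | hc1
  · refine ⟨(A : ℚ) / (B : ℚ), ?_⟩
    rw [hd_eq, hc1]; push_cast; ring
  · refine ⟨-(A : ℚ) / (B : ℚ), ?_⟩
    rw [hd_eq, hc1]; push_cast; ring
end

section
/- Let C be a Hermitian n×n circulant matrix (n even) with generator (c₀,…,c_{n−1}) satisfying c₀ = d ≥ 0, |c_j| = 1 for j = 1,…,n−1, and C C* = (d² + n − 1) I. Then d ≤ n/2 − 1. -/
open Matrix Complex

theorem stmt4 (n : ℕ) [NeZero n] (hn : 2 ≤ n) (hne : Even n)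
    (c : ZMod n → ℂ) (C : Matrix (ZMod n) (ZMod n) ℂ)
    (hC : ∀ j k, C j k = c (k - j))
    (d : ℝ) (hd : 0 ≤ d) (hc0 : c 0 = (d : ℂ))
    (hunit : ∀ j : ZMod n, j ≠ 0 → ‖c j‖ = 1)
    (hHerm : C.IsHermitian)
    (horth : C * C.conjTranspose = ((d ^ 2 + n - 1 : ℝ) : ℂ) • 1) :
    d ≤ (n : ℝ) / 2 - 1 := by
  haveI : Fact (1 < n) := ⟨hn⟩
  have hnR : (2:ℝ) ≤ (n:ℝ) := by exact_mod_cast hn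
  have hCT : C.conjTranspose = C := hHerm
  rw [hCT] at horth
  set α : ℝ := d ^ 2 + n - 1 with hα
  have hα1 : (1:ℝ) ≤ α := by nlinarith [sq_nonneg d]
  have hα0 : (0:ℝ) ≤ α := by linarith
  set x := Real.sqrt α with hxdef
  have hx2 : x ^ 2 = α := Real.sq_sqrt hα0
  have hx0 : 0 < x := Real.sqrt_pos.mpr (by linarith)
  set μ := hHerm.eigenvalues with hμ
  -- every eigenvalue squares to α
  have hsq : ∀ i, μ i ^ 2 = α := by
    intro i
    have hv := hHerm.mulVec_eigenvectorBasis i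
    have hvne : ⇑(hHerm.eigenvectorBasis i) ≠ 0 := by
      intro h
      exact hHerm.eigenvectorBasis.orthonormal.ne_zero i (by ext j; exact congrFun h j)
    have h2 : (C * C) *ᵥ ⇑(hHerm.eigenvectorBasis i)
        = ((α : ℂ)) • ⇑(hHerm.eigenvectorBasis i) := by
      rw [horth, Matrix.smul_mulVec, Matrix.one_mulVec]
    rw [← Matrix.mulVec_mulVec, hv, Matrix.mulVec_smul, hv, smul_smul] at h2
    obtain ⟨j, hj⟩ := Function.ne_iff.mp hvne
    have h3 := congrFun h2 j
    simp only [Pi.smul_apply, Complex.real_smul, smul_eq_mul] at h3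
    have h4 : (α : ℂ) = ((μ i * μ i : ℝ) : ℂ) := by
      push_cast at h3 ⊢
      exact (mul_right_cancel₀ hj h3).symm
    have := Complex.ofReal_inj.mp h4
    nlinarith [this]
  have hμx : ∀ i, μ i = x ∨ μ i = -x := by
    intro i
    have h0 : (μ i - x) * (μ i + x) = 0 := by linear_combination hsq i - hx2
    rcases mul_eq_zero.mp h0 with h | h
    · left; linarith
    · right; linarith
  -- not every eigenvalue equals x
  have hex : ∃ i, μ i = -x := by
    by_contra h
    push_neg at h
    have hall : ∀ i, μ i = x := fun i => (hμx i).resolve_right (h i)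
    have hdiag : Matrix.diagonal (RCLike.ofReal ∘ μ) = (x:ℂ) • (1 : Matrix (ZMod n) (ZMod n) ℂ) := by
      ext i j
      by_cases hij : i = j <;>
        simp [Matrix.diagonal, hij, hall, Matrix.one_apply]
    have hst := hHerm.spectral_theorem
    rw [hdiag, Unitary.conjStarAlgAut_apply, Matrix.mul_smul, Matrix.mul_one, Matrix.smul_mul,
      (Matrix.mem_unitaryGroup_iff).mp (hHerm.eigenvectorUnitary).2] at hst
    have h01 : C 0 1 = 0 := by
      rw [hst]
      simp [Matrix.one_apply, (zero_ne_one : (0:ZMod n) ≠ 1)]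
    rw [hC 0 1, sub_zero] at h01
    have := hunit 1 one_ne_zero
    rw [h01] at this
    simp at this
  -- trace computations
  have htr : Matrix.trace C = ((n * d : ℝ) : ℂ) := by
    have : Matrix.trace C = ∑ i : ZMod n, c 0 := by
      simp [Matrix.trace, Matrix.diag, hC]
    rw [this, Finset.sum_const, hc0, Finset.card_univ, ZMod.card]
    push_cast
    ring
  have htr2 : Matrix.trace C = ((∑ i, μ i : ℝ) : ℂ) := by
    conv_lhs => rw [hHerm.spectral_theorem]
    rw [Unitary.conjStarAlgAut_apply, Matrix.trace_mul_cycle,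
      (Matrix.mem_unitaryGroup_iff').mp (hHerm.eigenvectorUnitary).2, Matrix.one_mul,
      Matrix.trace_diagonal]
    push_cast
    rfl
  have hsum : (n : ℝ) * d = ∑ i, μ i := by
    exact_mod_cast htr.symm.trans htr2
  obtain ⟨i0, hi0⟩ := hex
  have hbound : ∑ i, μ i ≤ ((n:ℝ) - 2) * x := by
    have h1 : ∑ i, μ i = μ i0 + ∑ i ∈ Finset.univ.erase i0, μ i :=
      (Finset.add_sum_erase _ _ (Finset.mem_univ i0)).symm
    have h2 : ∑ i ∈ Finset.univ.erase i0, μ i ≤ (Finset.univ.erase i0).card • x := by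
      apply Finset.sum_le_card_nsmul
      intro i _
      rcases hμx i with h | h
      · rw [h]
      · rw [h]; linarith
    have h3 : (Finset.univ.erase i0).card = n - 1 := by
      rw [Finset.card_erase_of_mem (Finset.mem_univ i0), Finset.card_univ, ZMod.card]
    rw [h3] at h2
    have h4 : ((n - 1 : ℕ) : ℝ) = (n:ℝ) - 1 := by
      have : 1 ≤ n := by omega
      push_cast [this]
      ring
    rw [nsmul_eq_mul, h4] at h2
    rw [h1, hi0]
    linarith
  have hnd : (n:ℝ) * d ≤ ((n:ℝ) - 2) * x := by rw [hsum]; exact hbound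
  have hnd0 : (0:ℝ) ≤ (n:ℝ) * d := by positivity
  have key : ((n:ℝ) * d) ^ 2 ≤ (((n:ℝ) - 2) * x) ^ 2 := pow_le_pow_left₀ hnd0 hnd 2
  have key' : (n:ℝ)^2 * d^2 ≤ ((n:ℝ) - 2)^2 * α := by
    rw [mul_pow, mul_pow, hx2] at key
    exact key
  nlinarith [key', hd, hnR, sq_nonneg d, sq_nonneg ((n:ℝ) - 2 - 2*d),
    mul_nonneg (mul_nonneg hd hd) (by linarith : (0:ℝ) ≤ (n:ℝ) - 2)]
end

section
/- Let C be a Hermitian n×n circulant matrix (n even) satisfying c₀ = d with d a nonnegative integer, |c_j| = 1 for j = 1,…,n−1, and C C* = (d² + n − 1) I. Then d² + n − 1 is a perfect square. -/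
set_option maxHeartbeats 1000000


open Matrix Complex

theorem stmt5 (n : ℕ) [NeZero n] (hn : 2 ≤ n) (hne : Even n)
    (c : ZMod n → ℂ) (C : Matrix (ZMod n) (ZMod n) ℂ)
    (hC : ∀ j k, C j k = c (k - j))
    (d : ℕ)  (hc0 : c 0 = (d : ℂ))
    (hunit : ∀ j : ZMod n, j ≠ 0 → ‖c j‖ = 1)
    (hHerm : C.IsHermitian)
    (horth : C * C.conjTranspose = (((d : ℝ) ^ 2 + n - 1 : ℝ) : ℂ) • 1)
     :
    ∃ ℓ : ℕ, ℓ ^ 2 = d ^ 2 + n - 1 := by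
  classical
  obtain ⟨h, hn2⟩ := hne
  have hh : n = 2 * h := by omega
  have hh1 : 1 ≤ h := by omega
  have hhn : h < n := by omega
  have hn0 : (n : ℕ) ≠ 0 := NeZero.ne n
  set s : ℝ := (d : ℝ) ^ 2 + n - 1 with hsdef
  set ζ : ℂ := Complex.exp (2 * Real.pi * Complex.I / n) with hζdef
  have hprim : IsPrimitiveRoot ζ n := Complex.isPrimitiveRoot_exp n hn0
  have hζn : ζ ^ n = 1 := hprim.pow_eq_one
  set ψ : AddChar (ZMod n) ℂ := AddChar.zmodChar n hζn with hψdef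
  have hψprim : ψ.IsPrimitive :=
    AddChar.zmodChar_primitive_of_primitive_root n hprim
  have hconjζ : (starRingEnd ℂ) ζ = ζ⁻¹ := by
    rw [hζdef, ← Complex.exp_conj, ← Complex.exp_neg]
    congr 1
    rw [map_div₀, map_mul (starRingEnd ℂ), map_mul (starRingEnd ℂ), Complex.conj_I,
      Complex.conj_ofReal, Complex.conj_natCast]
    have h2 : (starRingEnd ℂ) 2 = 2 := by
      rw [show (2 : ℂ) = ((2 : ℝ) : ℂ) by norm_num, Complex.conj_ofReal]
    rw [h2]
    ring
  have hψconj : ∀ x : ZMod n, (starRingEnd ℂ) (ψ x) = ψ (-x) := by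
    intro x
    rw [AddChar.map_neg_eq_inv, hψdef, AddChar.zmodChar_apply, map_pow, hconjζ, inv_pow]
  obtain ⟨lam, hlamdef⟩ : ∃ lam : ZMod n → ℂ, lam = fun m => ∑ j, c j * ψ (m * j) := ⟨_, rfl⟩
  -- conj of c
  have hcc : ∀ t : ZMod n, (starRingEnd ℂ) (c t) = c (-t) := by
    intro t
    have := hHerm.apply t 0
    rw [hC, hC] at this
    simpa using this
  -- autocorrelation
  have hauto : ∀ r : ZMod n,
      (∑ l, c l * (starRingEnd ℂ) (c (l + r))) = if r = 0 then (s : ℂ) else 0 := by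
    intro r
    have h1 := congrFun (congrFun horth 0) (-r)
    rw [Matrix.mul_apply] at h1
    simp only [Matrix.conjTranspose_apply, Matrix.smul_apply, Matrix.one_apply,
      Matrix.star_apply, hC, sub_zero, RCLike.star_def] at h1
    have h2 : ∀ l : ZMod n, l - -r = l + r := fun l => by ring
    simp only [h2] at h1
    rw [h1]
    by_cases hr : r = 0 <;> simp [hr, eq_comm, smul_eq_mul]
  -- lam is real
  have hreal : ∀ m, (starRingEnd ℂ) (lam m) = lam m := by
    intro m
    simp only [hlamdef]
    simp only [map_sum, map_mul (starRingEnd ℂ), hψconj, hcc]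
    rw [← Equiv.sum_comp (Equiv.neg (ZMod n)) (fun j => c j * ψ (m * j))]
    refine Finset.sum_congr rfl (fun j _ => ?_)
    simp only [Equiv.neg_apply]
    have e3 : m * -j = -(m * j) := by ring
    rw [e3]
  -- |lam|^2 = s
  have hsq : ∀ m, lam m * (starRingEnd ℂ) (lam m) = (s : ℂ) := by
    intro m
    have e2 : ∀ a b : ZMod n, ψ a * (starRingEnd ℂ) (ψ b) = ψ (a - b) := by
      intro a b
      rw [hψconj, ← AddChar.map_add_eq_mul, sub_eq_add_neg]
    calc lam m * (starRingEnd ℂ) (lam m)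
        = ∑ j, ∑ k, (c j * (starRingEnd ℂ) (c k)) * ψ (m * j - m * k) := by
          simp only [hlamdef]
          simp only [map_sum, Finset.sum_mul_sum]
          refine Finset.sum_congr rfl (fun j _ => Finset.sum_congr rfl (fun k _ => ?_))
          rw [map_mul (starRingEnd ℂ), ← e2]
          ring
      _ = ∑ j, ∑ r, (c j * (starRingEnd ℂ) (c (j + r))) * ψ (-(m * r)) := by
          refine Finset.sum_congr rfl (fun j _ => ?_)
          rw [← Equiv.sum_comp (Equiv.addLeft j)
            (fun k => (c j * (starRingEnd ℂ) (c k)) * ψ (m * j - m * k))]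
          refine Finset.sum_congr rfl (fun r _ => ?_)
          simp only [Equiv.coe_addLeft]
          have e4 : m * j - m * (j + r) = -(m * r) := by ring
          rw [e4]
      _ = ∑ r, (∑ j, c j * (starRingEnd ℂ) (c (j + r))) * ψ (-(m * r)) := by
          rw [Finset.sum_comm]
          simp only [Finset.sum_mul]
      _ = (s : ℂ) := by
          simp only [hauto, ite_mul, zero_mul]
          rw [Finset.sum_ite_eq' Finset.univ (0 : ZMod n)]
          simp
  -- real values
  obtain ⟨L, hLdef⟩ : ∃ L : ZMod n → ℝ, L = fun m => (lam m).re := ⟨_, rfl⟩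
  have hL : ∀ m, lam m = ((L m : ℝ) : ℂ) := by
    intro m
    simp only [hLdef]
    exact (Complex.conj_eq_iff_re.mp (hreal m)).symm
  have hs1 : (1 : ℝ) ≤ s := by
    rw [hsdef]
    have : (2 : ℝ) ≤ n := by exact_mod_cast hn
    nlinarith [sq_nonneg ((d : ℝ))]
  have hLsq : ∀ m, L m ^ 2 = s := by
    intro m
    have h5 := hsq m
    rw [hL m, Complex.conj_ofReal] at h5
    have h6 : (L m) * (L m) = s := by exact_mod_cast h5
    rw [pow_two]
    exact h6
  -- the half point
  set h' : ZMod n := (h : ZMod n) with hh'def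
  have hvalh : h'.val = h := ZMod.val_natCast_of_lt hhn
  have hh'0 : h' ≠ 0 := by
    intro h0
    rw [hh'def, ZMod.natCast_eq_zero_iff] at h0
    have := Nat.le_of_dvd (by omega) h0
    omega
  have h2h' : 2 * h' = 0 := by
    have : ((2 * h : ℕ) : ZMod n) = 0 := by
      rw [← hh, ZMod.natCast_self]
    rw [hh'def]
    push_cast at this
    exact this
  have htwo : ∀ j : ZMod n, 2 * j = 0 ↔ j = 0 ∨ j = h' := by
    intro j
    constructor
    · intro hj
      have hjv : ((2 * j.val : ℕ) : ZMod n) = 0 := by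
        push_cast
        rw [ZMod.natCast_rightInverse j]
        exact hj
      rw [ZMod.natCast_eq_zero_iff] at hjv
      obtain ⟨k, hk⟩ := hjv
      have hjlt : j.val < n := ZMod.val_lt j
      have hval : j.val = 0 ∨ j.val = h := by
        rcases Nat.lt_or_ge k 2 with hk2 | hk2
        · interval_cases k <;> omega
        · have h9 : n * 2 ≤ n * k := Nat.mul_le_mul_left n hk2
          omega
      rename' hval => this
      rcases this with h1 | h1
      · left
        rw [← ZMod.natCast_rightInverse j, h1]
        simp
      · right
        rw [← ZMod.natCast_rightInverse j, h1, hh'def]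
    · rintro (rfl | rfl)
      · rw [mul_zero]
      · exact h2h'
  have hψh : ψ h' = -1 := by
    have e1 : ψ h' = ζ ^ h := by rw [hψdef, AddChar.zmodChar_apply, hvalh]
    rw [e1, hζdef, ← Complex.exp_nat_mul]
    have hn' : (n : ℂ) = 2 * h := by
      rw [hh]; push_cast; ring
    have hh0 : (h : ℂ) ≠ 0 := Nat.cast_ne_zero.mpr (by omega)
    have harg : (h : ℂ) * (2 * (Real.pi : ℂ) * Complex.I / n) = Real.pi * Complex.I := by
      rw [hn']
      field_simp
    rw [harg, Complex.exp_pi_mul_I]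
  have hch : c h' = 1 ∨ c h' = -1 := by
    have hr : (starRingEnd ℂ) (c h') = c h' := by
      rw [hcc]
      congr 1
      have hadd : h' + h' = 0 := by rw [← two_mul]; exact h2h'
      exact neg_eq_of_add_eq_zero_left hadd
    have hre : c h' = (((c h').re : ℝ) : ℂ) := (Complex.conj_eq_iff_re.mp hr).symm
    have habs := hunit h' hh'0
    rw [hre, Complex.norm_real, Real.norm_eq_abs] at habs
    rcases (abs_eq (by norm_num : (0:ℝ) ≤ 1)).mp habs with h1 | h1
    · left; rw [hre, h1]; norm_num
    · right; rw [hre, h1]; norm_num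
  -- character sums
  have hsum : ∀ a : ZMod n,
      ∑ m : ZMod n, lam (2 * m + a) = (n : ℂ) * (c 0 + c h' * ψ (a * h')) := by
    intro a
    calc ∑ m : ZMod n, lam (2 * m + a)
        = ∑ m : ZMod n, ∑ j, (c j * ψ (a * j)) * ψ (m * (2 * j)) := by
          refine Finset.sum_congr rfl (fun m _ => ?_)
          simp only [hlamdef]
          refine Finset.sum_congr rfl (fun j _ => ?_)
          rw [show (2 * m + a) * j = a * j + m * (2 * j) by ring, AddChar.map_add_eq_mul]
          ring
      _ = ∑ j, (c j * ψ (a * j)) * ∑ m : ZMod n, ψ (m * (2 * j)) := by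
          rw [Finset.sum_comm]
          exact Finset.sum_congr rfl (fun j _ => (Finset.mul_sum _ _ _).symm)
      _ = ∑ j, (c j * ψ (a * j)) * (if 2 * j = 0 then ((Fintype.card (ZMod n) : ℂ)) else 0) := by
          refine Finset.sum_congr rfl (fun j _ => ?_)
          rw [AddChar.sum_mulShift _ hψprim]
          split_ifs <;> simp
      _ = (n : ℂ) * (c 0 + c h' * ψ (a * h')) := by
          simp only [mul_ite, mul_zero]
          rw [← Finset.sum_filter]
          have hf : Finset.univ.filter (fun j : ZMod n => 2 * j = 0) = {0, h'} := by
            ext j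
            simp [htwo j]
          rw [hf]
          have h0m : (0 : ZMod n) ∉ ({h'} : Finset (ZMod n)) := by
            simp [Ne.symm hh'0]
          rw [Finset.sum_insert h0m, Finset.sum_singleton, ZMod.card]
          rw [mul_zero, AddChar.map_zero_eq_one]
          ring
  -- a choice of coset giving n(d+1)
  obtain ⟨a, ha⟩ : ∃ a : ZMod n,
      ∑ m : ZMod n, lam (2 * m + a) = (n : ℂ) * ((d : ℂ) + 1) := by
    rcases hch with h1 | h1
    · refine ⟨0, ?_⟩
      rw [hsum 0, zero_mul, AddChar.map_zero_eq_one, hc0, h1]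
      ring
    · refine ⟨1, ?_⟩
      rw [hsum 1, one_mul, hψh, hc0, h1]
      ring
  -- signs
  obtain ⟨t, htdef⟩ : ∃ t : ℝ, t = Real.sqrt s := ⟨_, rfl⟩
  have hts : t ^ 2 = s := by rw [htdef]; exact Real.sq_sqrt (by linarith)
  obtain ⟨ε, hεdef⟩ : ∃ ε : ZMod n → ℤ, ε = fun m => if L m = t then 1 else -1 := ⟨_, rfl⟩
  have hLt : ∀ m, L m = (ε m : ℝ) * t := by
    intro m
    by_cases hm : L m = t
    · simp [hεdef, hm]
    · have hz : (L m - t) * (L m + t) = 0 := by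
        have := hLsq m
        nlinarith [hts]
      rcases mul_eq_zero.mp hz with h1 | h1
      · exact absurd (by linarith) hm
      · simp only [hεdef, hm, if_false]
        push_cast
        linarith
  obtain ⟨Z, hZdef⟩ : ∃ z : ℤ, z = ∑ m : ZMod n, ε (2 * m + a) := ⟨_, rfl⟩
  have hsum2 : ∑ m : ZMod n, lam (2 * m + a) = (((Z : ℝ) * t : ℝ) : ℂ) := by
    calc ∑ m : ZMod n, lam (2 * m + a)
        = ∑ m : ZMod n, (((ε (2 * m + a) : ℝ) : ℂ) * ((t : ℝ) : ℂ)) := by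
          refine Finset.sum_congr rfl (fun m _ => ?_)
          rw [hL, hLt]
          push_cast
          ring
      _ = (∑ m : ZMod n, ((ε (2 * m + a) : ℝ) : ℂ)) * ((t : ℝ) : ℂ) :=
          (Finset.sum_mul _ _ _).symm
      _ = (((Z : ℝ) * t : ℝ) : ℂ) := by
          rw [hZdef]
          push_cast
          ring
  have hZt : (Z : ℝ) * t = (n : ℝ) * ((d : ℝ) + 1) := by
    have h7 : (((Z : ℝ) * t : ℝ) : ℂ) = (((n : ℝ) * ((d : ℝ) + 1) : ℝ) : ℂ) := by
      rw [← hsum2, ha]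
      push_cast
      ring
    exact_mod_cast h7
  have hZsq : (Z : ℝ) ^ 2 * s = (((n * (d + 1) : ℕ)) : ℝ) ^ 2 := by
    calc (Z : ℝ) ^ 2 * s = ((Z : ℝ) * t) ^ 2 := by rw [← hts]; ring
      _ = ((n : ℝ) * ((d : ℝ) + 1)) ^ 2 := by rw [hZt]
      _ = (((n * (d + 1) : ℕ)) : ℝ) ^ 2 := by push_cast; ring
  obtain ⟨sN, hsNdef⟩ : ∃ sN : ℕ, sN = d ^ 2 + (n - 1) := ⟨_, rfl⟩
  have hsN : (sN : ℝ) = s := by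
    rw [hsNdef, hsdef]
    push_cast [Nat.cast_sub (by omega : 1 ≤ n)]
    ring
  have hZ0 : Z ≠ 0 := by
    intro h0
    rw [h0] at hZt
    simp only [Int.cast_zero, zero_mul] at hZt
    have hpos : (0 : ℝ) < (n : ℝ) * ((d : ℝ) + 1) := by positivity
    rw [← hZt] at hpos
    exact lt_irrefl _ hpos
  obtain ⟨K, hKdef⟩ : ∃ K : ℕ, K = Z.natAbs := ⟨_, rfl⟩
  have hKs : ((K : ℝ)) ^ 2 = (Z : ℝ) ^ 2 := by
    rw [hKdef]
    push_cast [Nat.cast_natAbs]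
    rw [_root_.sq_abs]
  have hNat : K ^ 2 * sN = (n * (d + 1)) ^ 2 := by
    have h8 : ((K : ℝ)) ^ 2 * (sN : ℝ) = (((n * (d + 1) : ℕ)) : ℝ) ^ 2 := by
      rw [hKs, hsN]
      exact hZsq
    exact_mod_cast h8
  have hK0 : K ≠ 0 := fun h0 => hZ0 (Int.natAbs_eq_zero.mp (hKdef ▸ h0))
  have hdvd : K ∣ n * (d + 1) :=
    (Nat.pow_dvd_pow_iff two_ne_zero).mp ⟨sN, hNat.symm⟩
  obtain ⟨ℓ, hℓ⟩ := hdvd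
  have hKℓ : K ^ 2 * sN = K ^ 2 * ℓ ^ 2 := by
    rw [hNat, hℓ]
    ring
  have hfin : sN = ℓ ^ 2 := Nat.eq_of_mul_eq_mul_left (by positivity) hKℓ
  refine ⟨ℓ, ?_⟩
  rw [Nat.add_sub_assoc (by omega : 1 ≤ n)]
  rw [hsNdef] at hfin
  exact hfin.symm
end

section
/- Let C be a Hermitian n×n circulant matrix (n even) satisfying c₀ = d with d a nonnegative integer, |c_j| = 1 for j = 1,…,n−1, and C C* = (d² + n − 1) I. Then ℓ := √(d² + n − 1) is an integer dividing n/2. -/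
open Matrix Complex Finset

theorem stmt6 (n : ℕ) [NeZero n] (hn : 2 ≤ n) (hne : Even n)
    (c : ZMod n → ℂ) (C : Matrix (ZMod n) (ZMod n) ℂ)
    (hC : ∀ j k, C j k = c (k - j))
    (d : ℕ)  (hc0 : c 0 = (d : ℂ))
    (hunit : ∀ j : ZMod n, j ≠ 0 → ‖c j‖ = 1)
    (hHerm : C.IsHermitian)
    (horth : C * C.conjTranspose = (((d : ℝ) ^ 2 + n - 1 : ℝ) : ℂ) • 1)
     :
    ∃ ℓ : ℕ, ℓ ^ 2 = d ^ 2 + n - 1 ∧ ℓ ∣ n / 2 := by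
  classical
  haveI : Fact (1 < n) := ⟨hn⟩
  set ψ : AddChar (ZMod n) ℂ := ZMod.stdAddChar with hψdef
  have hψsum : ∀ b : ZMod n, ∑ x : ZMod n, ψ (x * b) = if b = 0 then (n : ℂ) else 0 := by
    intro b
    have := AddChar.sum_mulShift b (ZMod.isPrimitive_stdAddChar n)
    simpa [ZMod.card] using this
  have hψstar : ∀ a : ZMod n, (starRingEnd ℂ) (ψ a) = ψ (-a) := by
    intro a
    rw [hψdef, ZMod.stdAddChar_apply, ZMod.stdAddChar_apply, AddChar.map_neg_eq_inv]
    exact (Circle.coe_inv_eq_conj _).symm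
  -- K : the norm constant
  set K : ℕ := d ^ 2 + (n - 1) with hKdef
  have hKpos : 1 ≤ K := by omega
  have hKcastR : ((K : ℝ)) = (d : ℝ) ^ 2 + n - 1 := by
    have : ((n : ℝ)) - 1 = ((n - 1 : ℕ) : ℝ) := by
      rw [Nat.cast_sub (by omega)]; norm_num
    rw [hKdef]; push_cast [Nat.cast_sub (by omega : 1 ≤ n)]; ring
  have hKcast : ((K : ℂ)) = ((d : ℝ) ^ 2 + (n : ℝ) - 1 : ℝ) := by
    rw [← hKcastR]; norm_num
  -- Hermitian: star (c j) = c (-j)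
  have hstar : ∀ j : ZMod n, (starRingEnd ℂ) (c j) = c (-j) := by
    intro j
    have h := hHerm.apply 0 (-j)
    rw [hC, hC] at h
    simpa using h
  -- autocorrelation from orthogonality
  have hr : ∀ s : ZMod n,
      ∑ t : ZMod n, c t * (starRingEnd ℂ) (c (t - s)) = if s = 0 then (K : ℂ) else 0 := by
    intro s
    have h := congrFun (congrFun horth 0) s
    rw [Matrix.mul_apply] at h
    simp only [Matrix.conjTranspose_apply, Matrix.smul_apply, Matrix.one_apply, hC] at h
    have h2 : ∑ t : ZMod n, c t * (starRingEnd ℂ) (c (t - s)) =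
        (((d : ℝ) ^ 2 + n - 1 : ℝ) : ℂ) * if (0 : ZMod n) = s then 1 else 0 := by
      simpa [sub_zero, RCLike.star_def, smul_eq_mul] using h
    rw [h2, hKcast]
    by_cases hs : s = 0 <;> simp [hs, eq_comm]
  -- eigenvalues
  set lam : ZMod n → ℂ := fun m => ∑ j : ZMod n, c j * ψ (j * m) with hlamdef
  have hreal : ∀ m, (starRingEnd ℂ) (lam m) = lam m := by
    intro m
    rw [hlamdef]
    simp only [map_sum, _root_.map_mul, hψstar, hstar]
    exact Fintype.sum_equiv (Equiv.neg (ZMod n)) _ _ (fun j => by simp [neg_mul])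
  have hψsum' : ∀ b : ZMod n, ∑ x : ZMod n, ψ (b * x) = if b = 0 then (n : ℂ) else 0 := by
    intro b
    rw [← hψsum b]
    exact Finset.sum_congr rfl fun x _ => by rw [mul_comm]
  have hsq : ∀ m, lam m * (starRingEnd ℂ) (lam m) = (K : ℂ) := by
    intro m
    calc lam m * (starRingEnd ℂ) (lam m)
        = ∑ j : ZMod n, ∑ t : ZMod n, (c j * (starRingEnd ℂ) (c t)) * ψ ((j - t) * m) := by
          simp only [hlamdef, map_sum, _root_.map_mul]
          rw [Finset.sum_mul_sum]
          refine Finset.sum_congr rfl fun j _ => Finset.sum_congr rfl fun t _ => ?_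
          rw [hψstar]
          have h1 : (j - t) * m = j * m + -(t * m) := by ring
          rw [h1, AddChar.map_add_eq_mul]
          ring
      _ = ∑ j : ZMod n, ∑ s : ZMod n, (c j * (starRingEnd ℂ) (c (j - s))) * ψ (s * m) := by
          refine Finset.sum_congr rfl fun j _ => ?_
          exact Fintype.sum_equiv (Equiv.subLeft j) _ _ (fun t => by simp)
      _ = ∑ s : ZMod n, (∑ j : ZMod n, c j * (starRingEnd ℂ) (c (j - s))) * ψ (s * m) := by
          rw [Finset.sum_comm]
          simp [Finset.sum_mul]
      _ = (K : ℂ) := by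
          simp only [hr, ite_mul, zero_mul]
          rw [Finset.sum_ite_eq' Finset.univ (0 : ZMod n) (fun s => (K : ℂ) * ψ (s * m))]
          simp
  have hsum : ∑ m : ZMod n, lam m = (n : ℂ) * (d : ℂ) := by
    calc ∑ m : ZMod n, lam m = ∑ j : ZMod n, c j * ∑ m : ZMod n, ψ (j * m) := by
          simp only [hlamdef]
          rw [Finset.sum_comm]
          simp [Finset.mul_sum]
      _ = (n : ℂ) * (d : ℂ) := by
          simp only [hψsum', mul_ite, mul_zero]
          rw [Finset.sum_ite_eq' Finset.univ (0 : ZMod n) (fun j => c j * (n : ℂ))]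
          simp [hc0]
          ring
  have hone : (1 : ZMod n) ≠ 0 := one_ne_zero
  have hψtot : ∑ t : ZMod n, ψ t = 0 := by
    have := hψsum 1
    simpa [hone] using this
  have hterm : ∀ t : ZMod n, (starRingEnd ℂ) (c t) * c t * ψ t
      = ψ t + (if t = 0 then ((d : ℂ) ^ 2 - 1) * ψ t else 0) := by
    intro t
    by_cases ht : t = 0
    · subst ht
      simp [hc0]
      ring
    · have h1 : (starRingEnd ℂ) (c t) * c t = 1 := by
        rw [mul_comm, Complex.mul_conj, Complex.normSq_eq_norm_sq, hunit t ht]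
        norm_num
      simp [h1, ht]
  have hG : ∑ m : ZMod n, lam m * lam (m + 1) = (n : ℂ) * ((d : ℂ) ^ 2 - 1) := by
    calc ∑ m : ZMod n, lam m * lam (m + 1)
        = ∑ m : ZMod n, ∑ j : ZMod n, ∑ t : ZMod n,
            (c j * c t * ψ t) * ψ ((j + t) * m) := by
          refine Finset.sum_congr rfl fun m _ => ?_
          simp only [hlamdef]
          rw [Finset.sum_mul_sum]
          refine Finset.sum_congr rfl fun j _ => Finset.sum_congr rfl fun t _ => ?_
          have h1 : t * (m + 1) = t * m + t := by ring
          have h2 : (j + t) * m = j * m + t * m := by ring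
          rw [h1, h2, AddChar.map_add_eq_mul, AddChar.map_add_eq_mul]
          ring
      _ = ∑ j : ZMod n, ∑ t : ZMod n, (c j * c t * ψ t) * ∑ m : ZMod n, ψ ((j + t) * m) := by
          rw [Finset.sum_comm]
          refine Finset.sum_congr rfl fun j _ => ?_
          rw [Finset.sum_comm]
          simp [Finset.mul_sum]
      _ = ∑ t : ZMod n, (c (-t) * c t * ψ t) * (n : ℂ) := by
          simp only [hψsum']
          rw [Finset.sum_comm]
          refine Finset.sum_congr rfl fun t _ => ?_
          simp only [mul_ite, mul_zero, add_eq_zero_iff_eq_neg]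
          rw [Finset.sum_ite_eq' Finset.univ (-t : ZMod n) (fun j => c j * c t * ψ t * (n : ℂ))]
          simp
      _ = (n : ℂ) * ∑ t : ZMod n, (starRingEnd ℂ) (c t) * c t * ψ t := by
          rw [Finset.mul_sum]
          refine Finset.sum_congr rfl fun t _ => ?_
          rw [hstar t]
          ring
      _ = (n : ℂ) * ((d : ℂ) ^ 2 - 1) := by
          simp only [hterm, Finset.sum_add_distrib, hψtot]
          rw [Finset.sum_ite_eq' Finset.univ (0 : ZMod n) (fun t => ((d : ℂ) ^ 2 - 1) * ψ t)]
          simp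
  -- real eigenvalues
  have hmu : ∀ m, (((lam m).re : ℝ) : ℂ) = lam m := by
    intro m
    exact Complex.conj_eq_iff_re.mp (hreal m)
  set μ : ZMod n → ℝ := fun m => (lam m).re with hμdef
  have hμsq : ∀ m, μ m ^ 2 = (K : ℝ) := by
    intro m
    have h := hsq m
    rw [← hmu m, Complex.conj_ofReal] at h
    have h2 : ((μ m ^ 2 : ℝ) : ℂ) = ((K : ℝ) : ℂ) := by
      push_cast
      rw [← h]
      ring
    exact_mod_cast h2
  set L : ℝ := Real.sqrt K with hLdef
  have hL2 : L ^ 2 = (K : ℝ) := Real.sq_sqrt (by positivity)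
  have hLpos : 0 < L := Real.sqrt_pos.mpr (by exact_mod_cast hKpos)
  have hpm : ∀ m, μ m = L ∨ μ m = -L := by
    intro m
    have : μ m ^ 2 = L ^ 2 := by rw [hμsq m, hL2]
    exact sq_eq_sq_iff_eq_or_eq_neg.mp this
  set η : ZMod n → ℤ := fun m => if μ m = L then 1 else -1 with hηdef
  have hη : ∀ m, μ m = (η m : ℝ) * L := by
    intro m
    by_cases h : μ m = L
    · simp [hηdef, h]
    · rcases hpm m with h' | h'
      · exact absurd h' h
      · have hm : η m = -1 := by rw [hηdef]; simp [h]
        rw [hm, h']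
        push_cast
        ring
  have hη1 : ∀ m, η m = 1 ∨ η m = -1 := by
    intro m
    by_cases h : μ m = L <;> simp [hηdef, h]
  set e : ℤ := ∑ m : ZMod n, η m with hedef
  set g : ℤ := ∑ m : ZMod n, η m * η (m + 1) with hgdef
  -- real identities
  have heR : (e : ℝ) * L = (n : ℝ) * d := by
    have h : ∑ m : ZMod n, μ m = (n : ℝ) * d := by
      have h2 : ((∑ m : ZMod n, μ m : ℝ) : ℂ) = (((n : ℝ) * d : ℝ) : ℂ) := by
        push_cast
        rw [← hsum]
        exact Finset.sum_congr rfl fun m _ => hmu m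
      exact_mod_cast h2
    rw [← h]
    rw [hedef]
    push_cast
    rw [Finset.sum_mul]
    exact (Finset.sum_congr rfl fun m _ => (hη m).symm)
  have hgR : (g : ℝ) * K = (n : ℝ) * ((d : ℝ) ^ 2 - 1) := by
    have h : ∑ m : ZMod n, μ m * μ (m + 1) = (n : ℝ) * ((d : ℝ) ^ 2 - 1) := by
      have h2 : ((∑ m : ZMod n, μ m * μ (m + 1) : ℝ) : ℂ)
          = (((n : ℝ) * ((d : ℝ) ^ 2 - 1) : ℝ) : ℂ) := by
        push_cast
        rw [← hG]
        exact Finset.sum_congr rfl fun m _ => by rw [← hmu m, ← hmu (m + 1)]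
      exact_mod_cast h2
    rw [← h, hgdef]
    push_cast
    rw [Finset.sum_mul]
    refine Finset.sum_congr rfl fun m _ => ?_
    rw [hη m, hη (m + 1)]
    push_cast
    have hLL : L * L = (K : ℝ) := by rw [← hL2]; ring
    linear_combination (-((η m : ℝ) * ((η (m + 1) : ℤ) : ℝ))) * hLL
  -- integer identities
  have hKZ : (K : ℤ) = (d : ℤ) ^ 2 + (n : ℤ) - 1 := by
    rw [hKdef]
    push_cast [Nat.cast_sub (by omega : 1 ≤ n)]
    ring
  have hgZ : g * (K : ℤ) = (n : ℤ) * ((d : ℤ) ^ 2 - 1) := by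
    have : ((g * (K : ℤ) : ℤ) : ℝ) = (((n : ℤ) * ((d : ℤ) ^ 2 - 1) : ℤ) : ℝ) := by
      push_cast
      rw [hgR]
    exact_mod_cast this
  have heZ : e ^ 2 * (K : ℤ) = (n : ℤ) ^ 2 * (d : ℤ) ^ 2 := by
    have h1 : ((e : ℝ) * L) ^ 2 = ((n : ℝ) * d) ^ 2 := by rw [heR]
    have h2 : (e : ℝ) ^ 2 * (K : ℝ) = (n : ℝ) ^ 2 * (d : ℝ) ^ 2 := by
      linear_combination h1 - (e : ℝ) ^ 2 * hL2
    have : ((e ^ 2 * (K : ℤ) : ℤ) : ℝ) = (((n : ℤ) ^ 2 * (d : ℤ) ^ 2 : ℤ) : ℝ) := by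
      push_cast
      push_cast at h2
      linarith [h2]
    exact_mod_cast this
  have henn : 0 ≤ e := by
    by_contra hlt
    push_neg at hlt
    have : (e : ℝ) * L < 0 := mul_neg_of_neg_of_pos (by exact_mod_cast hlt) hLpos
    rw [heR] at this
    have : (0 : ℝ) ≤ (n : ℝ) * d := by positivity
    linarith
  -- parity
  have hEvenN : Even (n : ℤ) := by exact_mod_cast hne.natCast (α := ℤ)
  have heEven : Even e := by
    have h1 : Even (e - n) := by
      rw [hedef]
      have : (∑ m : ZMod n, η m) - (n : ℤ) = ∑ m : ZMod n, (η m - 1) := by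
        rw [Finset.sum_sub_distrib]
        simp [ZMod.card]
      rw [this]
      apply Finset.even_sum
      intro m _
      rcases hη1 m with h | h <;> simp [h]
    have := h1.add hEvenN
    simpa using this
  have hgEven : Even g := by
    have h1 : Even (g - n) := by
      rw [hgdef]
      have : (∑ m : ZMod n, η m * η (m + 1)) - (n : ℤ) = ∑ m : ZMod n, (η m * η (m + 1) - 1) := by
        rw [Finset.sum_sub_distrib]
        simp [ZMod.card]
      rw [this]
      apply Finset.even_sum
      intro m _
      rcases hη1 m with h | h <;> rcases hη1 (m + 1) with h' | h' <;> simp [h, h']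
    have := h1.add hEvenN
    simpa using this
  -- key: K * (n - g) = n^2
  have hKu : (K : ℤ) * ((n : ℤ) - g) = (n : ℤ) ^ 2 := by
    linear_combination (n : ℤ) * hKZ - hgZ
  -- endgame
  rcases Nat.eq_zero_or_pos d with hd | hd
  · -- d = 0 : then K = n - 1 divides 1, so n = 2
    have hded : (d : ℤ) = 0 := by exact_mod_cast hd
    have hK' : (K : ℤ) = (n : ℤ) - 1 := by rw [hKZ, hded]; ring
    have h1 : (K : ℤ) ∣ 1 := by
      refine ⟨(n : ℤ) - g - (K : ℤ) - 2, ?_⟩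
      linear_combination (-1 : ℤ) * hKu + ((K : ℤ) + (n : ℤ) + 1) * hK'
    have h2 : (K : ℤ) ≤ 1 := Int.le_of_dvd one_pos h1
    have h3 : K = 1 := by
      have : (K : ℤ) = 1 := by
        have : (1 : ℤ) ≤ (K : ℤ) := by exact_mod_cast hKpos
        omega
      exact_mod_cast this
    have hd2 : d ^ 2 = 0 := by rw [hd]; ring
    have hn2 : n = 2 := by omega
    refine ⟨1, ?_, one_dvd _⟩
    rw [one_pow]
    omega
  · -- d ≥ 1
    have hKne : (K : ℤ) ≠ 0 := by
      have : (1 : ℤ) ≤ (K : ℤ) := by exact_mod_cast hKpos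
      omega
    have hdz : (0 : ℤ) < (d : ℤ) := by exact_mod_cast hd
    have he2 : e ^ 2 = ((n : ℤ) - g) * (d : ℤ) ^ 2 := by
      have h2 : e ^ 2 * (K : ℤ) = ((n : ℤ) - g) * (d : ℤ) ^ 2 * (K : ℤ) := by
        linear_combination heZ - (d : ℤ) ^ 2 * hKu
      exact mul_right_cancel₀ hKne h2
    have hdvd : (d : ℤ) ∣ e := by
      have h3 : (d : ℤ) ^ 2 ∣ e ^ 2 := ⟨(n : ℤ) - g, by linear_combination he2⟩
      exact (Int.pow_dvd_pow_iff two_ne_zero).mp h3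
    obtain ⟨w, hw⟩ := hdvd
    have hw2 : w ^ 2 = (n : ℤ) - g := by
      have h4 : (d : ℤ) ^ 2 * w ^ 2 = (d : ℤ) ^ 2 * ((n : ℤ) - g) := by
        linear_combination he2 - ((d : ℤ) * w + e) * hw
      exact mul_left_cancel₀ (pow_ne_zero 2 hdz.ne') h4
    have hnz : (0 : ℤ) < (n : ℤ) := by exact_mod_cast (by omega : 0 < n)
    have hwne : w ≠ 0 := by
      intro h0
      rw [h0] at hw2
      have : (K : ℤ) * ((n : ℤ) - g) = 0 := by rw [← hw2]; ring
      rw [hKu] at this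
      exact absurd this (pow_ne_zero 2 hnz.ne')
    have hwnonneg : 0 ≤ w := by
      by_contra hlt
      push_neg at hlt
      have h0 : e < 0 := by rw [hw]; exact mul_neg_of_pos_of_neg hdz hlt
      exact absurd h0 (not_lt.mpr henn)
    have hwpos : 0 < w := lt_of_le_of_ne hwnonneg (Ne.symm hwne)
    have hKw : (K : ℤ) * w ^ 2 = (n : ℤ) ^ 2 := by rw [hw2]; exact hKu
    have hwn : w ∣ (n : ℤ) := by
      have h5 : w ^ 2 ∣ (n : ℤ) ^ 2 := ⟨(K : ℤ), by linear_combination (-1 : ℤ) * hKw⟩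
      exact (Int.pow_dvd_pow_iff two_ne_zero).mp h5
    obtain ⟨l, hl⟩ := hwn
    have hlpos : 0 < l := by
      have hwl : 0 < w * l := by rw [← hl]; exact hnz
      rcases mul_pos_iff.mp hwl with ⟨_, h⟩ | ⟨h, _⟩
      · exact h
      · exact absurd h (not_lt.mpr hwnonneg)
    have hKl : (K : ℤ) = l ^ 2 := by
      have h6 : w ^ 2 * (K : ℤ) = w ^ 2 * l ^ 2 := by
        linear_combination hKw + ((n : ℤ) + w * l) * hl
      exact mul_left_cancel₀ (pow_ne_zero 2 hwpos.ne') h6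
    have hwEven : Even w := by
      have h7 : Even (w ^ 2) := by
        rw [hw2]
        exact hEvenN.sub hgEven
      exact (Int.even_pow.mp h7).1
    obtain ⟨v, hv⟩ := hwEven
    refine ⟨l.toNat, ?_, ?_⟩
    · have hl0 : (0 : ℤ) ≤ l := le_of_lt hlpos
      have hnat : ((d ^ 2 + n - 1 : ℕ) : ℤ) = (d : ℤ) ^ 2 + (n : ℤ) - 1 := by
        have h8 : 1 ≤ d ^ 2 + n := le_trans (by omega : 1 ≤ n) (Nat.le_add_left n (d ^ 2))
        push_cast [Nat.cast_sub h8]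
        ring
      have h9 : ((l.toNat ^ 2 : ℕ) : ℤ) = ((d ^ 2 + n - 1 : ℕ) : ℤ) := by
        push_cast [Int.toNat_of_nonneg hl0]
        rw [hnat, ← hKZ, hKl]
      exact_mod_cast h9
    · obtain ⟨m, hm⟩ := hne
      have hnm : n / 2 = m := by omega
      rw [hnm]
      have hmc : (n : ℤ) = (m : ℤ) + (m : ℤ) := by exact_mod_cast hm
      have hmz : (m : ℤ) = v * l := by
        have h10 : 2 * (m : ℤ) = 2 * (v * l) := by
          linear_combination (-1 : ℤ) * hmc + hl + l * hv
        linarith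
      have hv0 : (0 : ℤ) ≤ v := by omega
      have h11 : m = l.toNat * v.toNat := by
        have h12 : (m : ℤ) = (l.toNat : ℤ) * (v.toNat : ℤ) := by
          rw [Int.toNat_of_nonneg (le_of_lt hlpos), Int.toNat_of_nonneg hv0]
          rw [hmz]; ring
        exact_mod_cast h12
      exact ⟨v.toNat, h11⟩
end

section
/- Let C be a Hermitian n×n circulant matrix (n even) satisfying c₀ = d with d a nonnegative integer, |c_j| = 1 for j = 1,…,n−1, and C C* = (d² + n − 1) I. Then ℓ := √(d² + n − 1) divides d² − 1; moreover if d is odd then 2ℓ divides d² − 1. -/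
open Matrix Complex

open Finset in
set_option maxHeartbeats 1000000 in
theorem stmt7 (n : ℕ) [NeZero n] (hn : 2 ≤ n) (hne : Even n)
    (c : ZMod n → ℂ) (C : Matrix (ZMod n) (ZMod n) ℂ)
    (hC : ∀ j k, C j k = c (k - j))
    (d : ℕ)  (hc0 : c 0 = (d : ℂ))
    (hunit : ∀ j : ZMod n, j ≠ 0 → ‖c j‖ = 1)
    (hHerm : C.IsHermitian)
    (horth : C * C.conjTranspose = (((d : ℝ) ^ 2 + n - 1 : ℝ) : ℂ) • 1)
     :
    ∃ ℓ : ℕ, ℓ ^ 2 = d ^ 2 + n - 1 ∧ (ℓ : ℤ) ∣ ((d : ℤ) ^ 2 - 1) ∧ (Odd d → (2 * ℓ : ℤ) ∣ ((d : ℤ) ^ 2 - 1)) := by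
  haveI : Fact (1 < n) := ⟨hn⟩
  set L : ℝ := ((d : ℝ) ^ 2 + n - 1) with hL
  set ψ : AddChar (ZMod n) ℂ := ZMod.stdAddChar with hψ
  have hsum : ∀ b : ZMod n, ∑ x : ZMod n, ψ (x * b) = if b = 0 then (n : ℂ) else 0 := by
    intro b
    rw [hψ, AddChar.sum_mulShift b (ZMod.isPrimitive_stdAddChar n), ZMod.card]
    split_ifs <;> simp
  have hsum' : ∀ b : ZMod n, ∑ x : ZMod n, ψ (b * x) = if b = 0 then (n : ℂ) else 0 := by
    intro b
    simp_rw [mul_comm b]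
    exact hsum b
  have hψconj : ∀ x : ZMod n, (starRingEnd ℂ) (ψ x) = ψ (-x) := by
    intro x
    rw [hψ, AddChar.map_neg_eq_inv]
    exact (Complex.inv_eq_conj (Circle.norm_coe _)).symm
  -- convolution identity
  have hconv : ∀ t : ZMod n, ∑ j : ZMod n, c j * c (t - j) = if t = 0 then (L : ℂ) else 0 := by
    intro t
    have h0 := congrFun (congrFun horth 0) t
    rw [hHerm.eq] at h0
    rw [Matrix.mul_apply, Matrix.smul_apply, Matrix.one_apply] at h0
    simp only [hC, sub_zero] at h0
    rw [h0]
    by_cases h : t = 0 <;> simp [h, eq_comm]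
  -- conjugation identity
  have hconj : ∀ x : ZMod n, (starRingEnd ℂ) (c x) = c (-x) := by
    intro x
    have h0 := congrFun (congrFun hHerm.eq x) 0
    rw [Matrix.conjTranspose_apply] at h0
    simp only [hC, sub_zero, zero_sub, star] at h0
    exact h0
  -- the eigenvalues
  set lam : ZMod n → ℂ := fun m => ∑ j : ZMod n, c j * ψ (j * m) with hlam
  have hlamsq : ∀ m, lam m * lam m = (L : ℂ) := by
    intro m
    have expand : lam m * lam m = ∑ j : ZMod n, ∑ t : ZMod n, c j * c (t - j) * ψ (t * m) := by
      rw [hlam, Finset.sum_mul_sum]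
      refine Finset.sum_congr rfl fun j _ => ?_
      refine Fintype.sum_equiv (Equiv.addLeft j) _ _ fun k => ?_
      simp only [Equiv.coe_addLeft, add_sub_cancel_left, add_mul, AddChar.map_add_eq_mul]
      ring
    rw [expand, Finset.sum_comm]
    have h1 : ∀ t : ZMod n, ∑ j : ZMod n, c j * c (t - j) * ψ (t * m)
        = (if t = 0 then (L : ℂ) else 0) * ψ (t * m) := by
      intro t
      rw [← Finset.sum_mul, hconv]
    simp_rw [h1, ite_mul, zero_mul]
    rw [Finset.sum_ite_eq' Finset.univ (0 : ZMod n) (fun t => (L : ℂ) * ψ (t * m))]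
    simp
  have hreal : ∀ m, lam m = (((lam m).re : ℝ) : ℂ) := by
    intro m
    have h1 : (starRingEnd ℂ) (lam m) = lam m := by
      rw [hlam]
      simp only
      rw [map_sum]
      refine Fintype.sum_equiv (Equiv.neg (ZMod n)) _ _ fun j => ?_
      rw [_root_.map_mul, hconj, hψconj]
      simp only [Equiv.neg_apply, neg_mul]
    exact (Complex.conj_eq_iff_re.mp h1).symm
  -- trace identity
  have htr : ∑ m : ZMod n, lam m = (n : ℂ) * d := by
    rw [hlam, Finset.sum_comm]
    simp_rw [← Finset.mul_sum, hsum', mul_ite, mul_zero]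
    rw [Finset.sum_ite_eq' Finset.univ (0 : ZMod n) (fun j => c j * (n : ℂ))]
    simp [hc0]
    ring
  -- pair identity
  have hcc : ∀ j : ZMod n, c j * c (-j) = if j = 0 then ((d:ℂ))^2 else 1 := by
    intro j
    rw [← hconj j, Complex.mul_conj]
    by_cases h : j = 0
    · simp only [h, if_true, hc0]
      rw [Complex.normSq_natCast]
      push_cast
      ring
    · simp only [h, if_false]
      rw [← Complex.sq_norm, hunit j h]
      norm_num
  have hpair : ∑ m : ZMod n, lam m * lam (m + 1) = (n : ℂ) * ((d:ℂ)^2 - 1) := by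
    have e1 : ∀ m : ZMod n, lam m * lam (m + 1)
        = ∑ j : ZMod n, ∑ k : ZMod n, c j * c k * ψ k * ψ ((j + k) * m) := by
      intro m
      rw [hlam, Finset.sum_mul_sum]
      refine Finset.sum_congr rfl fun j _ => Finset.sum_congr rfl fun k _ => ?_
      have h2 : ψ (k * (m + 1)) = ψ k * ψ (k * m) := by
        rw [mul_add, mul_one, add_comm, AddChar.map_add_eq_mul]
      rw [h2, add_mul, AddChar.map_add_eq_mul]
      ring
    simp_rw [e1]
    rw [Finset.sum_comm]
    have e2 : ∀ j : ZMod n, ∑ m : ZMod n, ∑ k : ZMod n, c j * c k * ψ k * ψ ((j + k) * m)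
        = (c j * c (-j) * ψ (-j)) * n := by
      intro j
      rw [Finset.sum_comm]
      have e3 : ∀ k : ZMod n, ∑ m : ZMod n, c j * c k * ψ k * ψ ((j + k) * m)
          = c j * c k * ψ k * (if (-j : ZMod n) = k then (n:ℂ) else 0) := by
        intro k
        rw [← Finset.mul_sum, hsum' (j + k)]
        simp [neg_eq_iff_add_eq_zero]
      simp_rw [e3, mul_ite, mul_zero]
      rw [Finset.sum_ite_eq Finset.univ (-j : ZMod n) (fun k => c j * c k * ψ k * (n:ℂ))]
      simp
    simp_rw [e2, hcc]
    have e4 : ∀ j : ZMod n, (if j = 0 then ((d:ℂ))^2 else 1) * ψ (-j) * n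
        = ψ (j * (-1)) * n + (if j = 0 then ((d:ℂ)^2 - 1) * n else 0) := by
      intro j
      by_cases h : j = 0
      · simp [h]
        ring
      · simp [h, mul_neg_one]
    simp_rw [e4]
    rw [Finset.sum_add_distrib]
    simp_rw [← Finset.sum_mul, hsum (-1 : ZMod n)]
    rw [Finset.sum_ite_eq' Finset.univ (0 : ZMod n) (fun _ => ((d:ℂ)^2 - 1) * n)]
    have hne1 : (-1 : ZMod n) ≠ 0 := neg_ne_zero.mpr one_ne_zero
    simp [hne1]
    ring
  -- real eigenvalues and signs
  set x : ZMod n → ℝ := fun m => (lam m).re with hx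
  have hLpos : 0 < L := by
    rw [hL]
    have h2 : (2:ℝ) ≤ (n:ℝ) := by exact_mod_cast hn
    nlinarith [sq_nonneg ((d:ℝ))]
  set l : ℝ := Real.sqrt L with hl
  have hlsq : l ^ 2 = L := Real.sq_sqrt hLpos.le
  have hlpos : 0 < l := Real.sqrt_pos.mpr hLpos
  have hxsq : ∀ m, x m ^ 2 = L := by
    intro m
    have h0 := hlamsq m
    rw [hreal m] at h0
    have h2 : ((x m ^ 2 : ℝ) : ℂ) = ((L:ℝ):ℂ) := by push_cast; rw [← h0]; ring
    exact_mod_cast h2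
  set eps : ZMod n → ℤ := fun m => if x m = l then 1 else -1 with heps
  have hepsval : ∀ m, eps m = 1 ∨ eps m = -1 := by
    intro m
    by_cases h : x m = l
    · left; simp [heps, h]
    · right; simp [heps, h]
  have hxeps : ∀ m, x m = (eps m : ℝ) * l := by
    intro m
    by_cases h : x m = l
    · simp [heps, h]
    · have h2 : (x m - l) * (x m + l) = 0 := by nlinarith [hxsq m, hlsq]
      rcases mul_eq_zero.mp h2 with h3 | h3
      · exact absurd (by linarith) h
      · simp only [heps, h, if_false]
        push_cast
        linarith
  set S : ℤ := ∑ m : ZMod n, eps m with hS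
  set R : ℤ := ∑ m : ZMod n, eps m * eps (m + 1) with hR
  -- real identities
  have hI1 : (S : ℝ) * l = (n:ℝ) * d := by
    have h1 : ((∑ m : ZMod n, x m : ℝ) : ℂ) = (n:ℂ) * d := by
      push_cast
      rw [← htr]
      exact Finset.sum_congr rfl fun m _ => (hreal m).symm
    have h2 : ∑ m : ZMod n, x m = (n:ℝ) * d := by exact_mod_cast h1
    rw [← h2, hS]
    push_cast
    rw [Finset.sum_mul]
    exact Finset.sum_congr rfl fun m _ => (hxeps m).symm
  have hI2R : L * (R : ℝ) = (n:ℝ) * ((d:ℝ)^2 - 1) := by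
    have h1 : ((∑ m : ZMod n, x m * x (m+1) : ℝ) : ℂ) = (n:ℂ) * ((d:ℂ)^2 - 1) := by
      push_cast
      rw [← hpair]
      exact Finset.sum_congr rfl fun m _ => by rw [hreal m, hreal (m+1)]
    have h2 : ∑ m : ZMod n, x m * x (m+1) = (n:ℝ) * ((d:ℝ)^2 - 1) := by exact_mod_cast h1
    rw [← h2, hR]
    push_cast
    rw [Finset.mul_sum]
    refine Finset.sum_congr rfl fun m _ => ?_
    rw [hxeps m, hxeps (m+1), ← hlsq]
    ring
  -- integer identities
  set Lz : ℤ := (d:ℤ)^2 + n - 1 with hLz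
  have hLzR : ((Lz : ℤ) : ℝ) = L := by rw [hLz, hL]; push_cast; ring
  have hI2 : Lz * R = (n:ℤ) * ((d:ℤ)^2 - 1) := by
    have h0 := hI2R
    rw [← hLzR] at h0
    exact_mod_cast h0
  have hI1sq : Lz * S^2 = ((n:ℤ) * d)^2 := by
    have h1 : ((Lz:ℤ):ℝ) * (S:ℝ)^2 = ((n:ℝ) * d)^2 := by
      rw [hLzR, ← hlsq, ← hI1]
      ring
    exact_mod_cast h1
  -- parity of R
  have hcast2 : ∀ z : ℤ, z = 1 ∨ z = -1 → ((z : ZMod 2)) = 1 := by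
    rintro z (rfl | rfl) <;> decide
  have hReven : (2:ℤ) ∣ R := by
    have h1 : ((R : ℤ) : ZMod 2) = 0 := by
      rw [hR]
      push_cast
      have h2 : ∀ m : ZMod n, (((eps m : ℤ) : ZMod 2) * ((eps (m+1) : ℤ) : ZMod 2)) = 1 := fun m => by
        rw [hcast2 _ (hepsval m), hcast2 _ (hepsval (m+1)), mul_one]
      rw [Finset.sum_congr rfl fun m _ => h2 m]
      rw [Finset.sum_const, Finset.card_univ, ZMod.card]
      obtain ⟨k, hk⟩ := hne
      rw [nsmul_eq_mul, mul_one, hk]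
      push_cast
      rw [← two_mul]
      have h20 : (2 : ZMod 2) = 0 := by decide
      rw [h20, zero_mul]
    exact (ZMod.intCast_zmod_eq_zero_iff_dvd R 2).mp h1
  -- endgame
  by_cases hd : d = 0
  · subst hd
    have h1 : ((n:ℤ) - 1) * R = -n := by
      rw [hLz] at hI2
      push_cast at hI2 ⊢
      linarith [hI2]
    have h2 : ((n:ℤ) - 1) ∣ (n:ℤ) := ⟨-R, by linarith [h1]⟩
    have h3 : ((n:ℤ) - 1) ∣ 1 := by
      have := dvd_sub (dvd_refl ((n:ℤ) - 1)) h2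
      simpa using (dvd_sub h2 (dvd_refl ((n:ℤ) - 1)))
    have h4 : n = 2 := by
      have h5 := Int.le_of_dvd one_pos h3
      have h6 : 2 ≤ (n:ℤ) := by exact_mod_cast hn
      have h7 : (n:ℤ) = 2 := by omega
      exact_mod_cast h7
    refine ⟨1, by norm_num [h4], by simp, fun h => by simp [Nat.odd_iff] at h⟩
  · have hdpos : 0 < d := Nat.pos_of_ne_zero hd
    have hSne : S ≠ 0 := by
      intro h0
      rw [h0] at hI1sq
      have h1 : ((n:ℤ) * d)^2 = 0 := by linarith [hI1sq]
      have h2 : (n:ℤ) * d = 0 := pow_eq_zero_iff two_ne_zero |>.mp h1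
      have h3 : (n:ℤ) ≠ 0 := Int.natCast_ne_zero.mpr (by omega)
      have h4 : (d:ℤ) ≠ 0 := Int.natCast_ne_zero.mpr hd
      exact (mul_ne_zero h3 h4) h2
    have hdvd : S ∣ (n:ℤ) * d := by
      have h1 : S^2 ∣ ((n:ℤ)*d)^2 := ⟨Lz, by linarith [hI1sq]⟩
      exact (Int.pow_dvd_pow_iff two_ne_zero).mp h1
    obtain ⟨q, hq⟩ := hdvd
    have hLzq : Lz = q^2 := by
      have h1 : S^2 * Lz = S^2 * q^2 := by
        linear_combination hI1sq + ((n:ℤ)*(d:ℤ) + S*q) * hq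
      exact mul_left_cancel₀ (pow_ne_zero 2 hSne) h1
    set ℓ : ℕ := q.natAbs with hell
    have hellz : ((ℓ:ℤ))^2 = Lz := by rw [hell, Int.natAbs_sq]; exact hLzq.symm
    set X : ℤ := (d:ℤ)^2 - 1 with hX
    have hnz : (n:ℤ) = Lz - X := by rw [hLz, hX]; ring
    have hdvd2 : (ℓ:ℤ)^2 ∣ X^2 := by
      refine ⟨X - R, ?_⟩
      rw [hellz]
      have h2 : Lz * R = (Lz - X) * X := by rw [← hnz]; exact hI2
      linear_combination h2
    have hgoal2 : (ℓ:ℤ) ∣ X := (Int.pow_dvd_pow_iff two_ne_zero).mp hdvd2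
    refine ⟨ℓ, ?_, hgoal2, ?_⟩
    · have hle : 1 ≤ d^2 + n := le_trans (by omega : 1 ≤ n) (Nat.le_add_left n (d^2))
      have hc1 : ((d^2 + n - 1 : ℕ) : ℤ) = Lz := by
        rw [Nat.cast_sub hle, hLz]; push_cast; ring
      have hc2 : ((ℓ^2 : ℕ) : ℤ) = Lz := by push_cast; exact hellz
      exact_mod_cast hc2.trans hc1.symm
    · intro hodd
      obtain ⟨s, hs⟩ := hgoal2
      have hlne : (ℓ:ℤ) ≠ 0 := by
        intro h0
        rw [h0, hLz] at hellz
        have h6 : (1:ℤ) ≤ (d:ℤ) := by exact_mod_cast hdpos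
        have h7 : (2:ℤ) ≤ (n:ℤ) := by exact_mod_cast hn
        nlinarith [hellz]
      have hI2' : (ℓ:ℤ)^2 * R = ((ℓ:ℤ)^2 - (ℓ:ℤ)*s) * ((ℓ:ℤ)*s) := by
        rw [hellz, ← hs, ← hnz]; exact hI2
      have hR' : R = ((ℓ:ℤ) - s) * s := by
        refine mul_left_cancel₀ (pow_ne_zero 2 hlne) ?_
        rw [hI2']; ring
      have hXeven : Even X := by
        have h1 : Odd ((d:ℤ)) := (Int.odd_coe_nat d).mpr hodd
        have h2 : Odd ((d:ℤ)^2) := h1.pow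
        rw [hX]
        exact h2.sub_odd odd_one
      have hneven : Even ((n:ℤ)) := (Int.even_coe_nat n).mpr hne
      have hleven : (2:ℤ) ∣ (ℓ:ℤ) := by
        have h1 : Even ((ℓ:ℤ)^2) := by
          rw [hellz, show Lz = X + n by rw [hnz]; ring]
          exact hXeven.add hneven
        have h2 : Even ((ℓ:ℤ)) := (Int.even_pow.mp h1).1
        exact h2.two_dvd
      have hseven : (2:ℤ) ∣ s := by
        have hdm : (2:ℤ) ∣ ((ℓ:ℤ) - s) * s := by rw [← hR']; exact hReven
        rcases (Int.prime_two.dvd_mul.mp hdm) with h | h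
        · simpa [sub_sub_cancel] using dvd_sub hleven h
        · exact h
      obtain ⟨u, hu⟩ := hseven
      exact ⟨u, by rw [hs, hu]; ring⟩
end

section
/- Let C be a Hermitian n×n circulant matrix (n even) satisfying c₀ = d with d a nonnegative integer, |c_j| = 1 for j = 1,…,n−1, and C C* = (d² + n − 1) I. If n − 1 is prime, then d = n/2 − 1. -/
open Matrix Complex Finset

theorem stmt8 (n : ℕ) [NeZero n] (hn : 2 ≤ n) (hne : Even n)
    (c : ZMod n → ℂ) (C : Matrix (ZMod n) (ZMod n) ℂ)
    (hC : ∀ j k, C j k = c (k - j))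
    (d : ℕ)  (hc0 : c 0 = (d : ℂ))
    (hunit : ∀ j : ZMod n, j ≠ 0 → ‖c j‖ = 1)
    (hHerm : C.IsHermitian)
    (horth : C * C.conjTranspose = (((d : ℝ) ^ 2 + n - 1 : ℝ) : ℂ) • 1)
    (hp : Nat.Prime (n - 1)) :
    d = n / 2 - 1 := by
  haveI : Fact (1 < n) := ⟨hn⟩
  classical
  set Nn : ℕ := d ^ 2 + (n - 1) with hNn
  have hNcast : ((Nn : ℝ)) = (d : ℝ) ^ 2 + n - 1 := by
    have h1 : (1:ℕ) ≤ n := by omega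
    push_cast [hNn, Nat.cast_sub h1]
    ring
  set ψ := ZMod.stdAddChar (N := n) with hψdef
  have hψprim : ψ.IsPrimitive := ZMod.isPrimitive_stdAddChar n
  have hψconj : ∀ x : ZMod n, (starRingEnd ℂ) (ψ x) = ψ (-x) := by
    intro x
    rw [AddChar.starComp_apply (by rw [ZMod.ringChar_zmod_n]; exact Nat.pos_of_ne_zero (NeZero.ne n)),
      AddChar.inv_apply]
  have hψsum : ∀ b : ZMod n, ∑ x : ZMod n, ψ (x * b) = if b = 0 then (n : ℂ) else 0 := by
    intro b
    rw [AddChar.sum_mulShift b hψprim, ZMod.card]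
    split_ifs <;> simp
  -- Hermitian: conj (c j) = c (-j)
  have hconj : ∀ j : ZMod n, (starRingEnd ℂ) (c j) = c (-j) := by
    intro j
    have h := hHerm.apply j 0
    rw [hC, hC] at h
    rw [starRingEnd_apply]
    rw [sub_zero, zero_sub] at h
    exact h
  -- orthogonality relations
  have hR : ∀ t : ZMod n, ∑ m : ZMod n, c m * (starRingEnd ℂ) (c (m + t)) =
      if t = 0 then (Nn : ℂ) else 0 := by
    intro t
    have h := congrFun (congrFun horth 0) (-t)
    rw [Matrix.mul_apply] at h
    simp only [Matrix.conjTranspose_apply, hC, Matrix.smul_apply, Matrix.one_apply,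
      smul_eq_mul, sub_zero, sub_neg_eq_add] at h
    simp only [← starRingEnd_apply] at h
    rw [h]
    by_cases ht : t = 0
    · subst ht
      rw [if_pos rfl, if_pos (by simp), mul_one, ← hNcast]
      norm_cast
    · rw [if_neg ht, if_neg (fun h' => ht (by rw [← neg_eq_zero, ← h'])), mul_zero]
  -- the eigenvalues
  set lam : ZMod n → ℂ := fun a => ∑ j : ZMod n, c j * ψ (a * j) with hlam
  have hlamconj : ∀ a, (starRingEnd ℂ) (lam a) = ∑ k : ZMod n, c (-k) * ψ (a * -k) := by
    intro a
    rw [hlam, map_sum]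
    refine Finset.sum_congr rfl (fun k _ => ?_)
    rw [_root_.map_mul, hconj, hψconj, mul_neg]
  have hlamreal : ∀ a, (starRingEnd ℂ) (lam a) = lam a := by
    intro a
    rw [hlamconj a, hlam]
    exact Fintype.sum_equiv (Equiv.neg (ZMod n)) _ _ (fun x => by
      simp only [Equiv.neg_apply, neg_neg, mul_neg])
  have hsq : ∀ a, lam a * (starRingEnd ℂ) (lam a) = (Nn : ℂ) := by
    intro a
    rw [hlamconj a, hlam, Finset.sum_mul_sum]
    have hterm : ∀ j k : ZMod n, (c j * ψ (a * j)) * (c (-k) * ψ (a * -k)) =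
        (c j * c (-k)) * ψ (a * (j - k)) := by
      intro j k
      rw [mul_mul_mul_comm, ← AddChar.map_add_eq_mul, ← mul_add]
      ring_nf
    simp only [hterm]
    have hre : ∀ j : ZMod n, ∑ k : ZMod n, (c j * c (-k)) * ψ (a * (j - k)) =
        ∑ t : ZMod n, (c j * c (-(j + t))) * ψ (a * -t) := by
      intro j
      refine (Fintype.sum_equiv (Equiv.addLeft j) _ _ (fun t => ?_)).symm
      simp only [Equiv.coe_addLeft]
      congr 2
      ring_nf
    simp only [hre]
    rw [Finset.sum_comm]
    have hfin : ∀ t : ZMod n, ∑ j : ZMod n, (c j * c (-(j + t))) * ψ (a * -t) =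
        (if t = 0 then (Nn : ℂ) else 0) * ψ (a * -t) := by
      intro t
      rw [← Finset.sum_mul, ← hR t]
      congr 1
      refine Finset.sum_congr rfl (fun j _ => ?_)
      rw [← hconj]
    simp only [hfin]
    rw [Finset.sum_eq_single 0]
    · simp
    · intro b _ hb; rw [if_neg hb, zero_mul]
    · intro habs; exact absurd (Finset.mem_univ 0) habs
  have hsum : ∑ a : ZMod n, lam a = (n : ℂ) * d := by
    rw [hlam]
    rw [Finset.sum_comm]
    have : ∀ j : ZMod n, ∑ a : ZMod n, c j * ψ (a * j) = c j * (if j = 0 then (n:ℂ) else 0) := by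
      intro j
      rw [← Finset.mul_sum, hψsum j]
    simp only [this]
    rw [Finset.sum_eq_single 0]
    · rw [if_pos rfl, hc0]; ring
    · intro b _ hb; rw [if_neg hb, mul_zero]
    · intro habs; exact absurd (Finset.mem_univ 0) habs
  have hone : (1 : ZMod n) ≠ 0 := one_ne_zero
  have hcor : ∑ a : ZMod n, lam a * lam (a + 1) = (n : ℂ) * ((d:ℂ) ^ 2 - 1) := by
    have hterm : ∀ a : ZMod n, lam a * lam (a + 1) =
        ∑ j : ZMod n, ∑ k : ZMod n, (c j * c k * ψ k) * ψ (a * (j + k)) := by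
      intro a
      rw [hlam, Finset.sum_mul_sum]
      refine Finset.sum_congr rfl (fun j _ => Finset.sum_congr rfl (fun k _ => ?_))
      have hx : ψ (a * j) * ψ ((a + 1) * k) = ψ k * ψ (a * (j + k)) := by
        rw [← AddChar.map_add_eq_mul, ← AddChar.map_add_eq_mul]
        congr 1
        ring
      rw [mul_mul_mul_comm, hx]
      ring
    simp only [hterm]
    rw [Finset.sum_comm]
    have h1 : ∀ j : ZMod n, ∑ a : ZMod n, ∑ k : ZMod n, (c j * c k * ψ k) * ψ (a * (j + k)) =
        ∑ k : ZMod n, (c j * c k * ψ k) * (if j + k = 0 then (n:ℂ) else 0) := by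
      intro j
      rw [Finset.sum_comm]
      refine Finset.sum_congr rfl (fun k _ => ?_)
      rw [← Finset.mul_sum, hψsum (j + k)]
    simp only [h1]
    have h2 : ∀ j : ZMod n, ∑ k : ZMod n, (c j * c k * ψ k) * (if j + k = 0 then (n:ℂ) else 0) =
        (c j * c (-j) * ψ (-j)) * (n:ℂ) := by
      intro j
      rw [Finset.sum_eq_single (-j)]
      · rw [if_pos (by ring)]
      · intro b _ hb
        rw [if_neg (fun h' => hb (eq_neg_of_add_eq_zero_right h')), mul_zero]
      · intro habs; exact absurd (Finset.mem_univ (-j)) habs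
    simp only [h2]
    have h3 : ∀ j : ZMod n, c j * c (-j) * ψ (-j) = (if j = 0 then (d:ℂ)^2 else 1) * ψ (-j) := by
      intro j
      congr 1
      by_cases hj : j = 0
      · rw [if_pos hj, hj, neg_zero, hc0]; ring
      · rw [if_neg hj, ← hconj j, Complex.mul_conj, Complex.normSq_eq_norm_sq, hunit j hj]
        norm_num
    simp only [h3]
    have h5 : ∑ j : ZMod n, ψ (-j) = 0 := by
      have h6 := hψsum 1
      rw [if_neg hone] at h6
      rw [← h6]
      refine Fintype.sum_equiv (Equiv.neg (ZMod n)) _ _ (fun x => ?_)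
      simp only [Equiv.neg_apply, neg_neg, mul_one]
    calc ∑ j : ZMod n, (if j = 0 then (d:ℂ)^2 else 1) * ψ (-j) * (n:ℂ)
        = (n:ℂ) * ∑ j : ZMod n, (((d:ℂ)^2 - 1) * (if j = 0 then 1 else 0) + ψ (-j)) := by
          rw [Finset.mul_sum]
          refine Finset.sum_congr rfl (fun j _ => ?_)
          by_cases hj : j = 0
          · rw [if_pos hj, if_pos hj, hj, neg_zero, AddChar.map_zero_eq_one]
            ring
          · rw [if_neg hj, if_neg hj]
            ring
      _ = (n:ℂ) * ((d:ℂ)^2 - 1) := by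
          rw [Finset.sum_add_distrib, h5, add_zero, ← Finset.mul_sum]
          rw [Finset.sum_ite_eq' Finset.univ (0 : ZMod n) (fun _ => (1:ℂ))]
          simp
  -- pass to real numbers
  set r : ZMod n → ℝ := fun a => (lam a).re with hr
  have hlamr : ∀ a, lam a = ((r a : ℝ) : ℂ) := fun a => (Complex.conj_eq_iff_re.mp (hlamreal a)).symm
  have hNpos : 0 < Nn := by have := hp.two_le; omega
  have hrsq : ∀ a, r a ^ 2 = (Nn : ℝ) := by
    intro a
    have h := hsq a
    rw [hlamreal a, hlamr a, ← Complex.ofReal_mul] at h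
    rw [sq]
    exact_mod_cast h
  have hrsum : ∑ a : ZMod n, r a = (n : ℝ) * d := by
    have h : ((∑ a : ZMod n, r a : ℝ) : ℂ) = (((n : ℝ) * d : ℝ) : ℂ) := by
      push_cast
      rw [← hsum]
      exact Finset.sum_congr rfl (fun a _ => (hlamr a).symm)
    exact_mod_cast h
  have hrcor : ∑ a : ZMod n, r a * r (a + 1) = (n : ℝ) * ((d:ℝ)^2 - 1) := by
    have h : ((∑ a : ZMod n, r a * r (a+1) : ℝ) : ℂ) = (((n:ℝ) * ((d:ℝ)^2 - 1) : ℝ) : ℂ) := by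
      push_cast
      rw [← hcor]
      refine Finset.sum_congr rfl (fun a _ => ?_)
      rw [hlamr a, hlamr (a+1)]
    exact_mod_cast h
  set s : ℝ := Real.sqrt Nn with hs
  have hs2 : s ^ 2 = (Nn : ℝ) := Real.sq_sqrt (by positivity)
  have hspos : 0 < s := Real.sqrt_pos.mpr (by exact_mod_cast hNpos)
  have hpm : ∀ a, r a = s ∨ r a = -s := by
    intro a
    have h : r a ^ 2 = s ^ 2 := by rw [hs2, hrsq a]
    exact sq_eq_sq_iff_eq_or_eq_neg.mp h
  set eps : ZMod n → ℤ := fun a => if r a = s then 1 else -1 with heps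
  have hre : ∀ a, r a = (eps a : ℝ) * s := by
    intro a
    by_cases h : r a = s
    · simp [heps, h]
    · rcases hpm a with h' | h'
      · exact absurd h' h
      · rw [heps]
        simp only [if_neg h]
        rw [h']
        push_cast
        ring
  set S : ℤ := ∑ a : ZMod n, eps a with hS
  set A : ℤ := ∑ a : ZMod n, eps a * eps (a + 1) with hA
  have hSeq : (S : ℝ) * s = (n:ℝ) * d := by
    rw [← hrsum]
    push_cast [hS]
    rw [Finset.sum_mul]
    exact Finset.sum_congr rfl (fun a _ => (hre a).symm)
  have hAeq : (A : ℝ) * (Nn : ℝ) = (n:ℝ) * ((d:ℝ)^2 - 1) := by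
    rw [← hrcor]
    push_cast [hA]
    rw [Finset.sum_mul]
    refine Finset.sum_congr rfl (fun a _ => ?_)
    rw [hre a, hre (a+1), ← hs2]
    ring
  rcases Nat.eq_zero_or_pos d with hd0 | hdpos
  · -- d = 0 leads to a contradiction
    exfalso
    subst hd0
    have hNq : Nn = n - 1 := by simp [hNn]
    have h7 : (A : ℝ) * ((n - 1 : ℕ) : ℝ) = -(n : ℝ) := by
      rw [← hNq, hAeq]
      norm_num
    have h8 : A * ((n - 1 : ℕ) : ℤ) = -(n : ℤ) := by exact_mod_cast h7
    have hdvd : ((n - 1 : ℕ) : ℤ) ∣ (n : ℤ) := ⟨-A, by linarith⟩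
    have h9 : ((n:ℤ) - ((n - 1 : ℕ) : ℤ)) = 1 := by
      have h1n : (1:ℕ) ≤ n := by omega
      push_cast [Nat.cast_sub h1n]
      ring
    have hdvd1 : ((n - 1 : ℕ) : ℤ) ∣ 1 := h9 ▸ dvd_sub hdvd dvd_rfl
    have h11 := Int.le_of_dvd one_pos hdvd1
    have h12 := hp.two_le
    omega
  · -- d ≥ 1
    have hSne : (S:ℝ) ≠ 0 := by
      intro h0
      rw [h0, zero_mul] at hSeq
      have : (0:ℝ) < (n:ℝ) * d := by positivity
      rw [← hSeq] at this
      exact lt_irrefl 0 this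
    have hrat : ¬ Irrational s := by
      intro hirr
      refine hirr ⟨((n : ℚ) * d) / (S : ℚ), ?_⟩
      push_cast
      rw [div_eq_iff (by exact_mod_cast hSne)]
      linear_combination -hSeq
    have hsqN : IsSquare Nn := by
      by_contra h
      exact hrat (irrational_sqrt_natCast_iff.mpr h)
    obtain ⟨e, he⟩ := hsqN
    have h1 : e * e = d ^ 2 + (n - 1) := by rw [← he]
    have hq2 := hp.two_le
    have hde : d < e := by
      by_contra hle
      push_neg at hle
      have h13 : e * e ≤ d * d := Nat.mul_le_mul hle hle
      have hdd : d ^ 2 = d * d := sq d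
      linarith
    have h1' : e ^ 2 = d ^ 2 + (n - 1) := by rw [sq]; exact h1
    have hfact : (e + d) * (e - d) = n - 1 := by
      rw [← Nat.sq_sub_sq, h1']
      exact Nat.add_sub_cancel_left _ _
    rcases hp.eq_one_or_self_of_dvd (e + d) ⟨e - d, hfact.symm⟩ with h | h
    · omega
    · have hcancel : e - d = 1 := by
        have hpos : 0 < n - 1 := by omega
        have h14 := hfact
        rw [h] at h14
        exact Nat.eq_of_mul_eq_mul_left hpos (by rw [mul_one]; exact h14)
      obtain ⟨m, hm⟩ := hne
      omega
end

section
/- A Hermitian circulant conference matrix of even order n ≥ 2 exists only for n = 2. That is, if C is an n×n Hermitian circulant matrix with n even, diagonal entries 0, off-diagonal entries of absolute value 1, and C C* = (n − 1) I, then n = 2. -/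
open Matrix Complex Finset

theorem stmt9 (n : ℕ) [NeZero n] (hn : 2 ≤ n) (hne : Even n)
    (c : ZMod n → ℂ) (C : Matrix (ZMod n) (ZMod n) ℂ)
    (hC : ∀ j k, C j k = c (k - j))
    (hc0 : c 0 = 0)
    (hunit : ∀ j : ZMod n, j ≠ 0 → ‖c j‖ = 1)
    (hHerm : C.IsHermitian)
    (horth : C * C.conjTranspose = ((n - 1 : ℝ) : ℂ) • 1) :
    n = 2 := by
  have hn0 : (n : ℕ) ≠ 0 := NeZero.ne n
  set ω : ℂ := Complex.exp (2 * Real.pi * Complex.I / n) with hωdef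
  have hω : IsPrimitiveRoot ω n := Complex.isPrimitiveRoot_exp n hn0
  have hωn : ω ^ n = 1 := hω.pow_eq_one
  set e : ZMod n → ℂ := fun a => ω ^ a.val with hedef
  have hpow : ∀ x : ℕ, ω ^ (x % n) = ω ^ x := by
    intro x
    conv_rhs => rw [← Nat.mod_add_div x n]
    rw [pow_add, pow_mul, hωn, one_pow, mul_one]
  have e_zero : e 0 = 1 := by simp [hedef, ZMod.val_zero]
  have e_add : ∀ a b : ZMod n, e (a + b) = e a * e b := by
    intro a b
    simp only [hedef]
    rw [ZMod.val_add, hpow, pow_add]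
  have e_mul : ∀ a b : ZMod n, e (a * b) = (e a) ^ b.val := by
    intro a b
    simp only [hedef]
    rw [ZMod.val_mul, hpow, ← pow_mul]
  have e_ne_zero : ∀ a : ZMod n, e a ≠ 0 := by
    intro a
    simp only [hedef]
    exact pow_ne_zero _ (hω.ne_zero hn0)
  have e_ne_one : ∀ a : ZMod n, a ≠ 0 → e a ≠ 1 := by
    intro a ha h1
    rw [hedef] at h1
    have := (hω.pow_eq_one_iff_dvd a.val).mp h1
    have hlt : a.val < n := ZMod.val_lt a
    have h0 : a.val = 0 := Nat.eq_zero_of_dvd_of_lt this hlt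
    exact ha (by rwa [ZMod.val_eq_zero] at h0)
  -- character sum
  have char_sum : ∀ a : ZMod n, a ≠ 0 → ∑ t : ZMod n, e (a * t) = 0 := by
    intro a ha
    have : ∑ t : ZMod n, e (a * t) = ∑ i ∈ Finset.range n, (e a) ^ i := by
      rw [Finset.sum_bij' (fun (t : ZMod n) _ => t.val) (fun i _ => (i : ZMod n))]
      · intro t _; exact Finset.mem_range.mpr (ZMod.val_lt t)
      · intro i _; exact Finset.mem_univ _
      · intro t _; exact ZMod.natCast_zmod_val t
      · intro i hi; exact ZMod.val_cast_of_lt (Finset.mem_range.mp hi)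
      · intro t _; rw [e_mul]
    rw [this]
    have hz1 : (e a) ^ n = 1 := by
      rw [hedef]; rw [← pow_mul, mul_comm, pow_mul, hωn, one_pow]
    rw [geom_sum_eq (e_ne_one a ha) n, hz1, sub_self, zero_div]
  -- eigenvalues
  set lam : ZMod n → ℂ := fun t => ∑ j : ZMod n, c j * e (j * t) with hlam
  have hcast : (((n : ℝ) - 1 : ℝ) : ℂ) = (n : ℂ) - 1 := by push_cast; ring
  have hCC : C * C = ((n : ℂ) - 1) • 1 := by
    have h := horth
    rw [hHerm.eq] at h
    rwa [hcast] at h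
  have eig : ∀ t j : ZMod n, ∑ k : ZMod n, C j k * e (k * t) = lam t * e (j * t) := by
    intro t j
    calc ∑ k : ZMod n, C j k * e (k * t)
        = ∑ s : ZMod n, C j (s + j) * e ((s + j) * t) :=
          (Fintype.sum_equiv (Equiv.addRight j) _ _ (fun s => rfl)).symm
      _ = ∑ s : ZMod n, (c s * e (s * t)) * e (j * t) := by
          refine Finset.sum_congr rfl fun s _ => ?_
          rw [hC, add_sub_cancel_right, add_mul, e_add]; ring
      _ = lam t * e (j * t) := by rw [← Finset.sum_mul]
  have lam_sq : ∀ t : ZMod n, lam t ^ 2 = (n : ℂ) - 1 := by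
    intro t
    have h1 : ∑ k : ZMod n, (C * C) 0 k * e (k * t) = lam t ^ 2 := by
      simp only [Matrix.mul_apply, Finset.sum_mul]
      rw [Finset.sum_comm]
      calc ∑ m : ZMod n, ∑ k : ZMod n, C 0 m * C m k * e (k * t)
          = ∑ m : ZMod n, C 0 m * (lam t * e (m * t)) := by
            refine Finset.sum_congr rfl fun m _ => ?_
            rw [← eig t m, Finset.mul_sum]
            exact Finset.sum_congr rfl fun k _ => by ring
        _ = lam t * ∑ m : ZMod n, C 0 m * e (m * t) := by
            rw [Finset.mul_sum]
            exact Finset.sum_congr rfl fun m _ => by ring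
        _ = lam t ^ 2 := by rw [eig t 0, zero_mul, e_zero]; ring
    rw [hCC] at h1
    have h2 : ∑ k : ZMod n, (((n:ℂ)-1) • (1 : Matrix (ZMod n) (ZMod n) ℂ)) 0 k * e (k * t)
        = (n:ℂ) - 1 := by
      simp only [Matrix.smul_apply, Matrix.one_apply, smul_eq_mul, mul_ite, mul_one, mul_zero,
        ite_mul, zero_mul]
      rw [Finset.sum_ite_eq]
      simp [e_zero]
    rw [← h1, h2]
  -- Hermitian facts
  have hconj : ∀ x : ZMod n, (starRingEnd ℂ) (c x) = c (-x) := by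
    intro x
    have h := congrFun (congrFun hHerm.eq x) 0
    simpa [Matrix.conjTranspose_apply, hC] using h
  have e_conj : ∀ a : ZMod n, (starRingEnd ℂ) (e a) = e (-a) := by
    intro a
    have habs : ‖e a‖ = 1 := by
      simp only [hedef, hωdef, norm_pow, Complex.norm_exp]
      simp [Complex.div_re, Complex.mul_re, Complex.mul_im]
    have h1 : e a * e (-a) = 1 := by rw [← e_add, add_neg_cancel, e_zero]
    have h2 : (starRingEnd ℂ) (e a) * e a = 1 := by
      rw [mul_comm, Complex.mul_conj, ← Complex.sq_norm, habs]
      norm_num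
    calc (starRingEnd ℂ) (e a) = (starRingEnd ℂ) (e a) * (e a * e (-a)) := by rw [h1, mul_one]
      _ = ((starRingEnd ℂ) (e a) * e a) * e (-a) := by ring
      _ = e (-a) := by rw [h2, one_mul]
  have lam_conj : ∀ t : ZMod n, (starRingEnd ℂ) (lam t) = lam t := by
    intro t
    simp only [hlam, map_sum, _root_.map_mul]
    calc ∑ j : ZMod n, (starRingEnd ℂ) (c j) * (starRingEnd ℂ) (e (j * t))
        = ∑ j : ZMod n, c (-j) * e ((-j) * t) := by
          refine Finset.sum_congr rfl fun j _ => ?_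
          rw [hconj, e_conj, neg_mul]
      _ = ∑ j : ZMod n, c j * e (j * t) :=
          Fintype.sum_equiv (Equiv.neg (ZMod n)) _ _ (fun j => by simp)
  have lam_real : ∀ t : ZMod n, lam t = (((lam t).re : ℝ) : ℂ) := by
    intro t
    exact (Complex.conj_eq_iff_re.mp (lam_conj t)).symm
  have hn1 : (0:ℝ) ≤ (n:ℝ) - 1 := by
    have : (2:ℝ) ≤ (n:ℝ) := by exact_mod_cast hn
    linarith
  set q : ℝ := Real.sqrt ((n:ℝ) - 1) with hqdef
  have hq2 : q ^ 2 = (n:ℝ) - 1 := Real.sq_sqrt hn1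
  have r_pm : ∀ t : ZMod n, (lam t).re = q ∨ (lam t).re = -q := by
    intro t
    have h := lam_sq t
    rw [lam_real t, ← hcast] at h
    have hr : (lam t).re ^ 2 = (n:ℝ) - 1 := by exact_mod_cast h
    have : (lam t).re ^ 2 = q ^ 2 := by rw [hq2, hr]
    exact sq_eq_sq_iff_eq_or_eq_neg.mp this
  -- the half element
  obtain ⟨m2, hm2⟩ := hne
  set h2 : ZMod n := (m2 : ZMod n) with hh2def
  have hm2lt : m2 < n := by omega
  have hm2ne : m2 ≠ 0 := by omega
  have hh_ne : h2 ≠ 0 := by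
    intro h0
    have hv := ZMod.val_cast_of_lt hm2lt
    rw [hh2def] at h0
    rw [h0, ZMod.val_zero] at hv
    exact hm2ne hv.symm
  have hh2 : h2 + h2 = 0 := by
    rw [hh2def, ← Nat.cast_add, ← hm2]
    exact ZMod.natCast_self n
  have hnegh : -h2 = h2 := neg_eq_of_add_eq_zero_left hh2
  have e_h : e h2 = -1 := by
    have hsq : (e h2 - 1) * (e h2 + 1) = 0 := by
      have : e h2 * e h2 = 1 := by rw [← e_add, hh2, e_zero]
      linear_combination this
    rcases mul_eq_zero.mp hsq with h | h
    · exact absurd (sub_eq_zero.mp h) (e_ne_one h2 hh_ne)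
    · exact eq_neg_of_add_eq_zero_left h
  -- Fourier inversion at the half element
  have hS1 : ∑ t : ZMod n, lam t * e (h2 * t) = (n : ℂ) * c h2 := by
    calc ∑ t : ZMod n, lam t * e (h2 * t)
        = ∑ t : ZMod n, ∑ j : ZMod n, c j * e (j * t) * e (h2 * t) := by
          simp only [hlam, Finset.sum_mul]
      _ = ∑ j : ZMod n, ∑ t : ZMod n, c j * e ((j + h2) * t) := by
          rw [Finset.sum_comm]
          refine Finset.sum_congr rfl fun j _ => Finset.sum_congr rfl fun t _ => ?_
          rw [add_mul, e_add]; ring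
      _ = ∑ j : ZMod n, c j * ∑ t : ZMod n, e ((j + h2) * t) := by
          refine Finset.sum_congr rfl fun j _ => (Finset.mul_sum _ _ _).symm
      _ = (n : ℂ) * c h2 := by
          rw [Finset.sum_eq_single (-h2)]
          · rw [neg_add_cancel]
            have : ∑ t : ZMod n, e ((0 : ZMod n) * t) = (n : ℂ) := by
              simp only [zero_mul, e_zero]
              simp [ZMod.card]
            rw [this, hnegh]; ring
          · intro j _ hj
            have hj0 : j + h2 ≠ 0 := by
              intro h0
              exact hj (eq_neg_of_add_eq_zero_left h0)
            rw [char_sum _ hj0, mul_zero]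
          · intro habs; exact absurd (Finset.mem_univ _) habs
  -- turn the sum into an integer multiple of q
  set m : ℤ := ∑ t : ZMod n, (if (lam t).re = q then (1:ℤ) else -1) * (-1)^(t.val) with hmdef
  have hS2 : ∑ t : ZMod n, lam t * e (h2 * t) = ((q * (m : ℝ) : ℝ) : ℂ) := by
    have hm : (m : ℝ) = ∑ t : ZMod n, (if (lam t).re = q then (1:ℝ) else -1) * (-1)^(t.val) := by
      rw [hmdef]
      push_cast [apply_ite (Int.cast : ℤ → ℝ)]
      ring
    rw [hm]
    push_cast [Finset.mul_sum]
    refine Finset.sum_congr rfl fun t _ => ?_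
    rw [e_mul, e_h]
    by_cases hif : (lam t).re = q
    · rw [if_pos hif, lam_real t, hif]; push_cast; ring
    · rw [if_neg hif]
      have hneg : (lam t).re = -q := (r_pm t).resolve_left hif
      rw [lam_real t, hneg]; push_cast; ring
  have habs : (n : ℝ) = |q * (m : ℝ)| := by
    have h := hS1.symm.trans hS2
    have := congrArg (‖·‖) h
    rw [norm_mul, Complex.norm_natCast, hunit h2 hh_ne, mul_one, Complex.norm_real, Real.norm_eq_abs] at this
    exact this
  have key : ((n:ℝ))^2 = ((n:ℝ) - 1) * ((m:ℝ))^2 := by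
    have hsq : ((n:ℝ))^2 = (q * (m:ℝ))^2 := by rw [habs]; exact _root_.sq_abs (q * (m:ℝ))
    rw [hsq, mul_pow, hq2]
  have hZ : (n:ℤ)^2 = ((n:ℤ) - 1) * m^2 := by exact_mod_cast key
  have hd1 : (n:ℤ) - 1 ∣ (n:ℤ)^2 := ⟨m^2, hZ⟩
  have hd2 : (n:ℤ) - 1 ∣ (n:ℤ)^2 - 1 := ⟨(n:ℤ) + 1, by ring⟩
  have hd3 : (n:ℤ) - 1 ∣ 1 := by
    have := dvd_sub hd1 hd2
    simpa using this
  have hpos : (0:ℤ) ≤ (n:ℤ) - 1 := by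
    have : (2:ℤ) ≤ (n:ℤ) := by exact_mod_cast hn
    linarith
  have := Int.eq_one_of_dvd_one hpos hd3
  omega
end

section
/- If there exists an n×n Hermitian circulant complex Hadamard matrix with n even (all entries of absolute value 1, H H* = n I), then n is the square of an even integer. -/
open Matrix Complex

theorem stmt10 (n : ℕ) [NeZero n] (hn : 2 ≤ n) (hne : Even n)
    (c : ZMod n → ℂ) (H : Matrix (ZMod n) (ZMod n) ℂ)
    (hH : ∀ j k, H j k = c (k - j))
    (hunit : ∀ j : ZMod n, ‖c j‖ = 1)
    (hHerm : H.IsHermitian)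
    (horth : H * H.conjTranspose = (n : ℂ) • 1) :
    ∃ k : ℕ, Even k ∧ n = k ^ 2 := by
  have hnpos : 0 < n := Nat.pos_of_ne_zero (NeZero.ne n)
  have hH2 : H * H = (n : ℂ) • 1 := by rwa [hHerm.eq] at horth
  -- eigenvalues squared = n
  have heig : ∀ i : ZMod n, hHerm.eigenvalues i ^ 2 = n := by
    intro i
    have hv := hHerm.mulVec_eigenvectorBasis i
    have hvne : ((hHerm.eigenvectorBasis i) : EuclideanSpace ℂ (ZMod n)) ≠ 0 :=
      hHerm.eigenvectorBasis.orthonormal.ne_zero i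
    obtain ⟨j, hj⟩ : ∃ j, (hHerm.eigenvectorBasis i) j ≠ 0 := by
      by_contra h
      push_neg at h
      exact hvne (by ext j; exact h j)
    have h2 : (H * H) *ᵥ ⇑(hHerm.eigenvectorBasis i)
        = (hHerm.eigenvalues i ^ 2 : ℝ) • ⇑(hHerm.eigenvectorBasis i) := by
      rw [← mulVec_mulVec, hv, mulVec_smul, hv, smul_smul, sq]
    rw [hH2] at h2
    have h3 := congrFun h2 j
    simp only [smul_mulVec, one_mulVec, Pi.smul_apply, smul_eq_mul,
      Complex.real_smul] at h3
    have h4 : ((hHerm.eigenvalues i ^ 2 : ℝ) : ℂ) * hHerm.eigenvectorBasis i j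
        = (n : ℂ) * hHerm.eigenvectorBasis i j := h3.symm
    have h5 : ((hHerm.eigenvalues i ^ 2 : ℝ) : ℂ) = (n : ℂ) := mul_right_cancel₀ hj h4
    exact_mod_cast h5
  -- trace = sum of eigenvalues
  set U : Matrix (ZMod n) (ZMod n) ℂ := (hHerm.eigenvectorUnitary : Matrix (ZMod n) (ZMod n) ℂ)
    with hU
  have htr : H.trace = ∑ i, (hHerm.eigenvalues i : ℂ) := by
    have hd : star U * H * U = diagonal (RCLike.ofReal ∘ hHerm.eigenvalues) := by
      have := hHerm.conjStarAlgAut_star_eigenvectorUnitary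
      simpa [hU, Unitary.coe_star] using this
    have hUU : U * star U = (1 : Matrix (ZMod n) (ZMod n) ℂ) := by
      simpa [hU] using Unitary.coe_mul_star_self hHerm.eigenvectorUnitary
    have : (star U * H * U).trace = H.trace := by
      rw [mul_assoc, trace_mul_comm, mul_assoc, hUU, mul_one]
    rw [← this, hd, trace_diagonal]
    rfl
  -- trace = n * c 0
  have htr2 : H.trace = (n : ℂ) * c 0 := by
    unfold Matrix.trace
    simp only [diag_apply, hH, sub_self]
    rw [Finset.sum_const, Finset.card_univ, ZMod.card, nsmul_eq_mul]
  -- signs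
  set ε : ZMod n → ℤ := fun i => if 0 ≤ hHerm.eigenvalues i then 1 else -1 with hε
  have hsqrt : ∀ i, hHerm.eigenvalues i = (ε i : ℝ) * Real.sqrt n := by
    intro i
    have habs : |hHerm.eigenvalues i| = Real.sqrt n := by
      rw [← Real.sqrt_sq_eq_abs, heig i]
    by_cases hpos : 0 ≤ hHerm.eigenvalues i
    · rw [hε]; simp only [if_pos hpos]; push_cast
      rw [one_mul, ← habs, _root_.abs_of_nonneg hpos]
    · rw [hε]; simp only [if_neg hpos]; push_cast
      rw [← habs, _root_.abs_of_neg (not_le.mp hpos)]; ring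
  set m : ℤ := ∑ i, ε i with hm
  have hsum : (∑ i, hHerm.eigenvalues i) = (m : ℝ) * Real.sqrt n := by
    rw [hm]
    push_cast
    rw [Finset.sum_mul]
    exact Finset.sum_congr rfl fun i _ => hsqrt i
  -- take absolute values
  have hkey : (n : ℝ) = |(m : ℝ)| * Real.sqrt n := by
    have h1 : ‖H.trace‖ = n := by
      rw [htr2, norm_mul, hunit 0, mul_one, Complex.norm_natCast]
    have h2 : H.trace = ((∑ i, hHerm.eigenvalues i : ℝ) : ℂ) := by
      rw [htr]; push_cast; ring
    rw [h2, Complex.norm_real, Real.norm_eq_abs, hsum, abs_mul,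
      _root_.abs_of_nonneg (Real.sqrt_nonneg _)] at h1
    linarith [h1]
  have hnm : (n : ℤ) = m ^ 2 := by
    have hs : Real.sqrt n * Real.sqrt n = n := Real.mul_self_sqrt (by positivity)
    have hcalc : (n : ℝ) * n = (m : ℝ) ^ 2 * n :=
      calc (n : ℝ) * n = (|(m : ℝ)| * Real.sqrt n) * (|(m : ℝ)| * Real.sqrt n) := by
            rw [← hkey]
        _ = |(m : ℝ)| ^ 2 * (Real.sqrt n * Real.sqrt n) := by ring
        _ = (m : ℝ) ^ 2 * n := by rw [_root_.sq_abs, hs]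
    have hn' : (0 : ℝ) < n := by positivity
    have : (n : ℝ) = (m : ℝ) ^ 2 := mul_right_cancel₀ hn'.ne' hcalc
    exact_mod_cast this
  -- parity
  have hmeven : Even m := by
    have hdiff : Even (m - n) := by
      have heq : m - (n : ℤ) = ∑ i : ZMod n, (ε i - 1) := by
        rw [hm, Finset.sum_sub_distrib, Finset.sum_const, Finset.card_univ, ZMod.card]
        push_cast; ring
      rw [heq]
      apply Finset.even_sum
      intro i _
      rw [hε]
      by_cases hpos : 0 ≤ hHerm.eigenvalues i
      · simp [if_pos hpos]
      · simp only [if_neg hpos]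
        decide
    have hne' : Even (n : ℤ) := Int.even_coe_nat n |>.mpr hne
    have := hdiff.add hne'
    simpa using this
  refine ⟨m.natAbs, Int.natAbs_even.mpr hmeven, ?_⟩
  simpa [Int.natAbs_pow] using congrArg Int.natAbs hnm
end

section
/- Let C be a Hermitian n×n circulant matrix satisfying c₀ = d with d a nonnegative integer, |c_j| = 1 for j = 1,…,n−1, and C C* = (d² + n − 1) I. If n/2 is prime, then n = 2d + 2. -/
open Matrix Complex

lemma endgame (p d : ℕ) (hp : p.Prime) (K : ℕ) (hK : K + 1 = d^2 + 2*p)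
    (hdvd : K ∣ 4*p^2) (T : ℤ) (hT : T^2 * K = (2*p)^2 * d^2)
    (h2d : 2*d + 2 ≤ 2*p) : p = d + 1 := by
  have hp2 : 2 ≤ p := hp.two_le
  have hd : d + 1 ≤ p := by omega
  have hKub : K ≤ p^2 := by nlinarith
  have hKlb : p < K := by nlinarith
  have hpZ : Prime (p : ℤ) := Nat.prime_iff_prime_int.mp hp
  have hp0 : (p:ℤ) ≠ 0 := by positivity
  by_cases h1 : p^2 ∣ K
  · have hKeq : K = p^2 := le_antisymm hKub (Nat.le_of_dvd (by omega) h1)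
    by_contra h
    have h' : d + 2 ≤ p := by omega
    nlinarith
  · by_cases h2 : p ∣ K
    · obtain ⟨m, hm⟩ := h2
      have hpm : ¬ p ∣ m := fun h => h1 (by obtain ⟨e, he⟩ := h; exact ⟨e, by rw [hm, he]; ring⟩)
      have hm4p : m ∣ 4 * p := by
        have h' : p * m ∣ p * (4*p) := by rw [← hm]; convert hdvd using 1; ring
        exact (mul_dvd_mul_iff_left (by positivity : (p:ℕ) ≠ 0)).mp h'
      have hm4 : m ∣ 4 := by
        have hco : m.Coprime p := ((hp.coprime_iff_not_dvd).mpr hpm).symm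
        exact hco.dvd_of_dvd_mul_right hm4p
      have hm24 : m = 2 ∨ m = 4 := by
        have hmle : m ≤ 4 := Nat.le_of_dvd (by norm_num) hm4
        have hm2 : 2 ≤ m := by nlinarith [hm ▸ hKlb]
        interval_cases m
        · exact Or.inl rfl
        · exact absurd hm4 (by decide)
        · exact Or.inr rfl
      rcases hm24 with hm2 | hm2 <;> subst hm2
      · -- K = 2p, d = 1, T^2 = 2p, p = 2
        have hd1 : d = 1 := by nlinarith [hm ▸ hK]
        have hT2 : T^2 = 2*p := by
          have h' : T^2 * ((p:ℤ)*2) = (2*(p:ℤ)) * ((p:ℤ)*2) := by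
            subst hd1; rw [hm] at hT; push_cast at hT; linear_combination hT
          exact mul_right_cancel₀ (by positivity) h'
        have hpT : (p:ℤ) ∣ T := hpZ.dvd_of_dvd_pow (n := 2) ⟨2, by rw [hT2]; ring⟩
        obtain ⟨t, ht⟩ := hpT
        have h5 : (p:ℤ) * t^2 = 2 := by
          rw [ht] at hT2
          exact mul_left_cancel₀ hp0 (by linear_combination hT2)
        have h6 : (p:ℤ) ∣ (2:ℤ) := ⟨t^2, h5.symm⟩
        have hpd2 : p ∣ 2 := by
          rwa [show ((2:ℤ)) = ((2:ℕ):ℤ) by norm_num, Int.natCast_dvd_natCast] at h6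
        omega
      · -- K = 4p, d^2 = 2p+1
        exfalso
        have hd2 : d^2 = 2*p + 1 := by rw [hm] at hK; omega
        have hT2 : T^2 = p * d^2 := by
          have h' : T^2 * ((p:ℤ)*4) = ((p:ℤ) * (d:ℤ)^2) * ((p:ℤ)*4) := by
            rw [hm] at hT; push_cast at hT; linear_combination hT
          exact mul_right_cancel₀ (by positivity) h'
        have hpT : (p:ℤ) ∣ T := hpZ.dvd_of_dvd_pow (n := 2) ⟨(d:ℤ)^2, by rw [hT2]⟩
        obtain ⟨t, ht⟩ := hpT
        have hptd : (p:ℤ) * t^2 = (d:ℤ)^2 := by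
          rw [ht] at hT2
          exact mul_left_cancel₀ hp0 (by linear_combination hT2)
        have hpdd : (p:ℤ) ∣ (d:ℤ) := hpZ.dvd_of_dvd_pow (n := 2) ⟨t^2, hptd.symm⟩
        have hpd : p ∣ d := by exact_mod_cast hpdd
        obtain ⟨e, he⟩ := hpd
        have he1 : 1 ≤ e := by
          rcases Nat.eq_zero_or_pos e with h | h
          · exfalso; subst h; rw [Nat.mul_zero] at he; subst he; simp at hd2
          · omega
        have hpe : p^2 * e^2 = 2*p+1 := by rw [← hd2, he]; ring
        have hple : p^2 ≤ 2*p+1 := by nlinarith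
        have hp2' : p = 2 := by nlinarith
        subst hp2'
        have h5 : d^2 = 5 := by omega
        have hdle : d ≤ 2 := by nlinarith
        interval_cases d <;> omega
    · exfalso
      have hco : K.Coprime p := Nat.coprime_comm.mp ((hp.coprime_iff_not_dvd).mpr h2)
      have hK4 : K ∣ 4 := by
        have h1' : K ∣ (4*p)*p := by convert hdvd using 1; ring
        exact hco.dvd_of_dvd_mul_right (hco.dvd_of_dvd_mul_right h1')
      have hKle : K ≤ 4 := Nat.le_of_dvd (by norm_num) hK4
      have hK4' : K = 4 := by
        obtain ⟨q, hq⟩ := hK4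
        interval_cases K <;> omega
      subst hK4'
      have hp23 : p = 2 ∨ p = 3 := by omega
      rcases hp23 with h | h <;> subst h
      · exact h2 (by decide)
      · omega


set_option maxHeartbeats 1000000 in
theorem stmt11 (n : ℕ) [NeZero n] (hn : 2 ≤ n) (hne : Even n)
    (c : ZMod n → ℂ) (C : Matrix (ZMod n) (ZMod n) ℂ)
    (hC : ∀ j k, C j k = c (k - j))
    (d : ℕ)  (hc0 : c 0 = (d : ℂ))
    (hunit : ∀ j : ZMod n, j ≠ 0 → ‖c j‖ = 1)
    (hHerm : C.IsHermitian)
    (horth : C * C.conjTranspose = (((d : ℝ) ^ 2 + n - 1 : ℝ) : ℂ) • 1)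
    (hp : Nat.Prime (n / 2)) :
    n = 2 * d + 2 := by
  haveI : Fact (1 < n) := ⟨by omega⟩
  set Lr : ℝ := (d : ℝ) ^ 2 + n - 1 with hLr
  -- Hermitian in terms of c
  have hcconj : ∀ x : ZMod n, c (-x) = starRingEnd ℂ (c x) := by
    intro x
    have h := congrFun (congrFun hHerm.eq x) 0
    simp only [conjTranspose_apply, hC] at h
    simpa using h.symm
  -- convolution identity
  have hCC : C * C = ((Lr : ℝ) : ℂ) • 1 := by
    rw [← horth, hHerm.eq]
  have hconv : ∀ k : ZMod n, ∑ m : ZMod n, c m * c (k - m)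
      = if k = 0 then (Lr : ℂ) else 0 := by
    intro k
    have h := congrFun (congrFun hCC 0) k
    rw [Matrix.mul_apply] at h
    simp only [hC, Matrix.smul_apply, Matrix.one_apply, sub_zero] at h
    rw [h]
    by_cases hk : k = 0 <;> simp [hk, eq_comm]
  -- triangle inequality: 2d + 2 <= n
  have h10 : (1 : ZMod n) ≠ 0 := one_ne_zero
  have h2d : 2 * d + 2 ≤ n := by
    have h := congrFun (congrFun horth 0) 1
    rw [Matrix.mul_apply] at h
    simp only [conjTranspose_apply, hC, Matrix.smul_apply, Matrix.one_apply,
      sub_zero] at h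
    rw [if_neg (by exact fun hh => h10 hh.symm)] at h
    -- h : ∑ k, c k * conj (c (k - 1)) = 0 (times something)
    have hsplit : ∑ k : ZMod n, c k * starRingEnd ℂ (c (k - 1))
        = (∑ k ∈ Finset.univ \ {0, 1}, c k * starRingEnd ℂ (c (k - 1)))
          + (2 * d) * c 1 := by
      rw [← Finset.sum_sdiff (Finset.subset_univ ({0, 1} : Finset (ZMod n)))]
      congr 1
      rw [Finset.sum_pair (by exact fun hh => h10 hh.symm)]
      have e1 : c (0 - 1) = starRingEnd ℂ (c 1) := by
        rw [show (0 : ZMod n) - 1 = -1 by ring, hcconj]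
      rw [e1, hc0, RingHomCompTriple.comp_apply, RingHom.id_apply]
      rw [show (1 : ZMod n) - 1 = 0 by ring, hc0]
      simp
      ring
    have hzero : (∑ k ∈ Finset.univ \ {0, 1}, c k * starRingEnd ℂ (c (k - 1)))
        = -((2 * (d:ℂ)) * c 1) := by
      have h2 := hsplit.symm.trans h
      rw [smul_zero] at h2
      linear_combination h2
    have hcard : (Finset.univ \ ({0, 1} : Finset (ZMod n))).card = n - 2 := by
      rw [Finset.card_sdiff_of_subset (Finset.subset_univ _), Finset.card_univ, ZMod.card,
        Finset.card_pair (by exact fun hh => h10 hh.symm)]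
    have habs : (2 * (d:ℝ)) ≤ (n - 2 : ℝ) := by
      have e1 : ‖(2 * (d:ℂ)) * c 1‖ = 2 * (d:ℝ) := by
        rw [norm_mul, hunit 1 h10]
        simp [Complex.norm_natCast]
      rw [← e1, ← norm_neg, ← hzero]
      calc ‖∑ k ∈ Finset.univ \ {0, 1}, c k * starRingEnd ℂ (c (k - 1))‖
          ≤ ∑ k ∈ Finset.univ \ {0, 1}, ‖c k * starRingEnd ℂ (c (k - 1))‖ :=
            norm_sum_le _ _
        _ = ∑ k ∈ Finset.univ \ ({0, 1} : Finset (ZMod n)), 1 := by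
            apply Finset.sum_congr rfl
            intro k hk
            simp only [Finset.mem_sdiff, Finset.mem_insert, Finset.mem_singleton,
              Finset.mem_univ, true_and, not_or] at hk
            rw [norm_mul, hunit k hk.1, Complex.norm_conj, hunit (k - 1) (by
              intro hh
              exact hk.2 (by rwa [sub_eq_zero] at hh))]
            norm_num
        _ = (n - 2 : ℝ) := by
            rw [Finset.sum_const, hcard]
            simp
            rw [Nat.cast_sub hn]
            norm_num
    have hn' : (2 * (d:ℝ)) + 2 ≤ (n:ℝ) := by linarith
    exact_mod_cast (by push_cast; linarith : ((2*d+2 : ℕ) : ℝ) ≤ (n:ℝ))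
  -- DFT machinery
  classical
  set e : AddChar (ZMod n) ℂ := ZMod.stdAddChar with he
  have hesum : ∀ t : ZMod n, ∑ x : ZMod n, e (x * t) = if t = 0 then (n : ℂ) else 0 := by
    intro t
    rw [he, AddChar.sum_mulShift _ (ZMod.isPrimitive_stdAddChar n)]
    simp [ZMod.card]
  have heabs : ∀ x : ZMod n, ‖e x‖ = 1 := by
    intro x
    rw [he, ZMod.stdAddChar_apply]
    exact Circle.norm_coe _
  have hene : ∀ x : ZMod n, e x ≠ 0 := by
    intro x hx
    have := heabs x
    rw [hx] at this
    simp at this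
  have heconj : ∀ x : ZMod n, starRingEnd ℂ (e x) = e (-x) := by
    intro x
    have h1 : e x * e (-x) = 1 := by
      rw [← AddChar.map_add_eq_mul]
      simp
    have h2 : e x * starRingEnd ℂ (e x) = 1 := by
      rw [Complex.mul_conj]
      norm_cast
      rw [← Complex.sq_norm, heabs]
      norm_num
    exact mul_left_cancel₀ (hene x) (h2.trans h1.symm)
  set lam : ZMod n → ℂ := fun m => ∑ j : ZMod n, c j * e (j * m) with hlam
  have hlam_sq : ∀ m : ZMod n, lam m ^ 2 = (Lr : ℂ) := by
    intro m
    have expand : lam m ^ 2 = ∑ a : ZMod n, ∑ b : ZMod n, c a * c b * e ((a + b) * m) := by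
      rw [sq, hlam]
      rw [Finset.sum_mul_sum]
      refine Finset.sum_congr rfl fun a _ => Finset.sum_congr rfl fun b _ => ?_
      rw [add_mul, AddChar.map_add_eq_mul]
      ring
    rw [expand]
    have reidx : ∀ a : ZMod n, ∑ b : ZMod n, c a * c b * e ((a + b) * m)
        = ∑ k : ZMod n, c a * c (k - a) * e (k * m) := by
      intro a
      refine Fintype.sum_equiv (Equiv.addLeft a) _ _ fun b => ?_
      simp only [Equiv.coe_addLeft]
      rw [add_sub_cancel_left]
    calc ∑ a : ZMod n, ∑ b : ZMod n, c a * c b * e ((a + b) * m)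
        = ∑ a : ZMod n, ∑ k : ZMod n, c a * c (k - a) * e (k * m) := by
          exact Finset.sum_congr rfl fun a _ => reidx a
      _ = ∑ k : ZMod n, (∑ a : ZMod n, c a * c (k - a)) * e (k * m) := by
          rw [Finset.sum_comm]
          exact Finset.sum_congr rfl fun k _ => by rw [Finset.sum_mul]
      _ = ∑ k : ZMod n, (if k = 0 then (Lr : ℂ) else 0) * e (k * m) := by
          exact Finset.sum_congr rfl fun k _ => by rw [hconv k]
      _ = (Lr : ℂ) := by
          rw [Finset.sum_eq_single 0]
          · simp
          · intro b _ hb; rw [if_neg hb, zero_mul]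
          · intro hb; exact absurd (Finset.mem_univ _) hb
  have hlam_real : ∀ m : ZMod n, starRingEnd ℂ (lam m) = lam m := by
    intro m
    rw [hlam]
    simp only
    rw [map_sum]
    refine Fintype.sum_equiv (Equiv.neg (ZMod n)) _ _ fun j => ?_
    simp only [Equiv.neg_apply]
    rw [_root_.map_mul, ← hcconj, heconj]
    congr 2
    ring
  have hlam_sum : ∑ m : ZMod n, lam m = (n : ℂ) * d := by
    rw [hlam]
    simp only
    rw [Finset.sum_comm]
    have : ∀ j : ZMod n, ∑ m : ZMod n, c j * e (j * m) = c j * (if j = 0 then (n:ℂ) else 0) := by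
      intro j
      rw [← Finset.mul_sum]
      congr 1
      rw [← hesum j]
      exact Finset.sum_congr rfl fun m _ => by rw [mul_comm j m]
    rw [Finset.sum_congr rfl fun j _ => this j, Finset.sum_eq_single 0]
    · simp [hc0]; ring
    · intro b _ hb; rw [if_neg hb, mul_zero]
    · intro hb; exact absurd (Finset.mem_univ _) hb
  have hlamlam : ∑ m : ZMod n, lam m * lam (m + 1) = (n:ℂ) * ((d:ℂ)^2 - 1) := by
    have step1 : ∀ m : ZMod n, lam m * lam (m + 1)
        = ∑ a : ZMod n, ∑ b : ZMod n, (c a * c b * e (b * 1)) * e ((a + b) * m) := by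
      intro m
      rw [hlam]
      simp only
      rw [Finset.sum_mul_sum]
      refine Finset.sum_congr rfl fun a _ => Finset.sum_congr rfl fun b _ => ?_
      calc (c a * e (a * m)) * (c b * e (b * (m + 1)))
          = c a * c b * (e (a * m + b * (m + 1))) := by
            rw [AddChar.map_add_eq_mul]; ring
        _ = c a * c b * (e (b * 1 + (a + b) * m)) := by ring_nf
        _ = (c a * c b * e (b * 1)) * e ((a + b) * m) := by
            rw [AddChar.map_add_eq_mul]; ring
    rw [Finset.sum_congr rfl fun m _ => step1 m, Finset.sum_comm]
    have step2 : ∀ a : ZMod n, ∑ m : ZMod n, ∑ b : ZMod n,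
        (c a * c b * e (b * 1)) * e ((a + b) * m)
        = ∑ b : ZMod n, (c a * c b * e (b * 1)) * (if a + b = 0 then (n:ℂ) else 0) := by
      intro a
      rw [Finset.sum_comm]
      refine Finset.sum_congr rfl fun b _ => ?_
      rw [← Finset.mul_sum, ← hesum (a + b)]
      congr 1
      exact Finset.sum_congr rfl fun m _ => by rw [mul_comm (a+b) m]
    rw [Finset.sum_congr rfl fun a _ => step2 a]
    have step3 : ∀ a : ZMod n, ∑ b : ZMod n,
        (c a * c b * e (b * 1)) * (if a + b = 0 then (n:ℂ) else 0)
        = ((Complex.normSq (c a) : ℂ)) * e ((-a) * 1) * n := by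
      intro a
      rw [Finset.sum_eq_single (-a)]
      · rw [if_pos (by ring), hcconj a, Complex.mul_conj]
      · intro b _ hb
        rw [if_neg (fun hh => hb (eq_neg_of_add_eq_zero_right hh)), mul_zero]
      · intro hb; exact absurd (Finset.mem_univ _) hb
    rw [Finset.sum_congr rfl fun a _ => step3 a]
    have step4 : ∑ a : ZMod n, ((Complex.normSq (c a) : ℂ)) * e ((-a) * 1) * n
        = ∑ b : ZMod n, ((Complex.normSq (c b) : ℂ)) * e (b * 1) * n := by
      refine Fintype.sum_equiv (Equiv.neg (ZMod n)) _ _ fun a => ?_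
      simp only [Equiv.neg_apply]
      rw [hcconj, Complex.normSq_conj]
    rw [step4]
    have hnsq : ∀ b : ZMod n, ((Complex.normSq (c b) : ℂ))
        = 1 + (if b = 0 then ((d:ℂ)^2 - 1) else 0) := by
      intro b
      by_cases hb : b = 0
      · subst hb
        rw [hc0, if_pos rfl, show ((d:ℕ):ℂ) = (((d:ℕ):ℝ):ℂ) from by push_cast; rfl,
          Complex.normSq_ofReal]
        push_cast
        ring
      · rw [if_neg hb]
        have h1 : Complex.normSq (c b) = 1 := by
          rw [← Complex.sq_norm, hunit b hb]; norm_num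
        rw [h1]
        norm_num
    calc ∑ b : ZMod n, ((Complex.normSq (c b) : ℂ)) * e (b * 1) * n
        = ∑ b : ZMod n, (e (b * 1) * n
            + (if b = 0 then ((d:ℂ)^2 - 1) else 0) * e (b * 1) * n) := by
          refine Finset.sum_congr rfl fun b _ => ?_
          rw [hnsq b]
          ring
      _ = (∑ b : ZMod n, e (b * 1)) * n
            + ∑ b : ZMod n, (if b = 0 then ((d:ℂ)^2 - 1) else 0) * e (b * 1) * n := by
          rw [Finset.sum_add_distrib, Finset.sum_mul]
      _ = (n:ℂ) * ((d:ℂ)^2 - 1) := by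
          rw [hesum 1, if_neg h10, zero_mul, zero_add, Finset.sum_eq_single 0]
          · rw [if_pos rfl]
            simp
            ring
          · intro b _ hb
            rw [if_neg hb, zero_mul, zero_mul]
          · intro hb; exact absurd (Finset.mem_univ _) hb
  -- extract real eigenvalues and signs
  have hLpos : (0:ℝ) < Lr := by
    rw [hLr]
    have h2 : (2:ℝ) ≤ (n:ℝ) := by exact_mod_cast hn
    nlinarith [sq_nonneg (d:ℝ)]
  set lamr : ZMod n → ℝ := fun m => (lam m).re with hlamr
  have hlam_re : ∀ m : ZMod n, ((lamr m : ℝ) : ℂ) = lam m := by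
    intro m
    exact Complex.conj_eq_iff_re.mp (hlam_real m)
  have hlamr_sq : ∀ m : ZMod n, lamr m ^ 2 = Lr := by
    intro m
    have h1 := hlam_sq m
    rw [← hlam_re m] at h1
    exact_mod_cast h1
  set sgn : ZMod n → ℤ := fun m => if lamr m = Real.sqrt Lr then 1 else -1 with hsgn
  have hs : ∀ m : ZMod n, lamr m = (sgn m : ℝ) * Real.sqrt Lr := by
    intro m
    by_cases hm : lamr m = Real.sqrt Lr
    · rw [hsgn]; simp only [if_pos hm]; push_cast; rw [one_mul]; exact hm
    · rw [hsgn]; simp only [if_neg hm]; push_cast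
      have h2 : Real.sqrt Lr ^ 2 = Lr := Real.sq_sqrt hLpos.le
      have hfac : (lamr m - Real.sqrt Lr) * (lamr m + Real.sqrt Lr) = 0 := by
        have h1 := hlamr_sq m
        nlinarith [h1, h2]
      rcases mul_eq_zero.mp hfac with h | h
      · exact absurd (by linarith) hm
      · linarith
  set T : ℤ := ∑ m : ZMod n, sgn m with hT
  have hTsqrt : (T:ℝ) * Real.sqrt Lr = (n:ℝ) * d := by
    have h1 : ∑ m : ZMod n, lamr m = (n:ℝ) * d := by
      have h2 : ((∑ m : ZMod n, lamr m : ℝ) : ℂ) = ∑ m : ZMod n, lam m := by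
        push_cast
        exact Finset.sum_congr rfl fun m _ => hlam_re m
      rw [hlam_sum] at h2
      exact_mod_cast h2
    rw [hT]
    push_cast
    rw [Finset.sum_mul]
    rw [← h1]
    exact Finset.sum_congr rfl fun m _ => (hs m).symm
  set K : ℕ := d^2 + (n - 1) with hK
  have hKr : (K:ℝ) = Lr := by
    rw [hK, hLr]
    push_cast [Nat.cast_sub (by omega : 1 ≤ n)]
    ring
  have hKz : (K:ℤ) = (d:ℤ)^2 + (n:ℤ) - 1 := by
    rw [hK]
    push_cast [Nat.cast_sub (by omega : 1 ≤ n)]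
    ring
  have hT2 : T^2 * (K:ℤ) = (2*(n/2:ℕ):ℤ)^2 * (d:ℤ)^2 := by
    have hnn : ((n:ℕ):ℤ) = (2*(n/2:ℕ):ℤ) := by
      have := Nat.div_mul_cancel hne.two_dvd
      omega
    have h1 : (T:ℝ)^2 * Lr = (n:ℝ)^2 * (d:ℝ)^2 := by
      calc (T:ℝ)^2 * Lr = ((T:ℝ) * Real.sqrt Lr)^2 := by
            rw [mul_pow, Real.sq_sqrt hLpos.le]
        _ = ((n:ℝ) * d)^2 := by rw [hTsqrt]
        _ = (n:ℝ)^2 * (d:ℝ)^2 := by ring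
    rw [← hKr] at h1
    rw [← hnn]
    exact_mod_cast h1
  set S : ℤ := ∑ m : ZMod n, sgn m * sgn (m + 1) with hS
  have hSL : (S:ℝ) * Lr = (n:ℝ) * ((d:ℝ)^2 - 1) := by
    have h1 : ∑ m : ZMod n, lamr m * lamr (m + 1) = (n:ℝ) * ((d:ℝ)^2 - 1) := by
      have h2 : ((∑ m : ZMod n, lamr m * lamr (m + 1) : ℝ) : ℂ)
          = ∑ m : ZMod n, lam m * lam (m + 1) := by
        push_cast
        exact Finset.sum_congr rfl fun m _ => by rw [hlam_re, hlam_re]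
      rw [hlamlam] at h2
      have h3 : ((∑ m : ZMod n, lamr m * lamr (m + 1) : ℝ) : ℂ)
          = (((n:ℝ) * ((d:ℝ)^2 - 1) : ℝ) : ℂ) := by
        rw [h2]; push_cast; ring
      exact_mod_cast h3
    have h2 : Real.sqrt Lr * Real.sqrt Lr = Lr := Real.mul_self_sqrt hLpos.le
    rw [hS]
    push_cast
    rw [Finset.sum_mul, ← h1]
    refine Finset.sum_congr rfl fun m _ => ?_
    calc (sgn m : ℝ) * (sgn (m + 1) : ℝ) * Lr
        = (sgn m : ℝ) * (sgn (m + 1) : ℝ) * (Real.sqrt Lr * Real.sqrt Lr) := by rw [h2]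
      _ = ((sgn m : ℝ) * Real.sqrt Lr) * ((sgn (m + 1) : ℝ) * Real.sqrt Lr) := by ring
      _ = lamr m * lamr (m + 1) := by rw [← hs m, ← hs (m + 1)]
  have hSK : S * (K:ℤ) = (n:ℤ) * (d:ℤ)^2 - (n:ℤ) := by
    have h1 := hSL
    rw [← hKr] at h1
    have h3 : ((S * K : ℤ):ℝ) = (((n:ℤ) * (d:ℤ)^2 - (n:ℤ) : ℤ):ℝ) := by
      push_cast
      linarith
    exact_mod_cast h3
  have hdvdZ : (K:ℤ) ∣ (n:ℤ)^2 := ⟨(n:ℤ) - S, by linear_combination hSK - (n:ℤ) * hKz⟩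
  have hdvdN : K ∣ n^2 := by
    rwa [show ((n:ℤ)^2 = ((n^2 : ℕ) : ℤ)) by push_cast; ring, Int.natCast_dvd_natCast] at hdvdZ
  -- finish via endgame
  set p := n / 2 with hp'
  have hnp : n = 2 * p := by
    have := Nat.div_mul_cancel hne.two_dvd
    omega
  have hfinal : p = d + 1 := by
    refine endgame p d hp K (by omega) ?_ T ?_ (by omega)
    · rwa [show 4 * p^2 = n^2 by rw [hnp]; ring]
    · exact hT2
  rw [hnp, hfinal]; ring
end

section
/- Let C be a Hermitian n×n circulant matrix satisfying c₀ = d with d a nonnegative integer, |c_j| = 1 for j = 1,…,n−1, and C C* = (d² + n − 1) I. If n/2 = p·q is a product of two primes p, q, then n = 2d + 2. -/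
open Matrix Complex

section aux
open Finset
variable {n : ℕ} [NeZero n]

lemma dvd_pq {p q m : ℕ} (hp : Nat.Prime p) (hq : Nat.Prime q) (h : m ∣ p * q) :
    m = 1 ∨ m = p ∨ m = q ∨ m = p * q := by
  by_cases hpm : p ∣ m
  · obtain ⟨t, rfl⟩ := hpm
    have ht : t ∣ q := (mul_dvd_mul_iff_left hp.pos.ne').mp h
    rcases Nat.Prime.eq_one_or_self_of_dvd hq t ht with h1 | h1
    · subst h1; right; left; ring
    · subst h1; right; right; right; rfl
  · have hco : Nat.Coprime m p := ((hp.coprime_iff_not_dvd).mpr hpm).symm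
    have := hco.dvd_of_dvd_mul_left h
    rcases Nat.Prime.eq_one_or_self_of_dvd hq m this with h1 | h1
    · exact Or.inl h1
    · exact Or.inr (Or.inr (Or.inl h1))

lemma arith_main (n d p q : ℕ) (hn : 2 ≤ n) (hne : Even n)
    (hp : Nat.Prime p) (hq : Nat.Prime q) (hpq : n / 2 = p * q)
    (r k : ℤ)
    (hr : ((d:ℤ)^2 + n - 1) * r = n * ((d:ℤ)^2 - 1))
    (hk : ((d:ℤ)^2 + n - 1) * k^2 = ((n:ℤ) * d)^2) :
    n = 2 * d + 2 := by
  have hp2 := hp.two_le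
  have hq2 := hq.two_le
  have hpq4 : 4 ≤ p * q := Nat.mul_le_mul hp2 hq2
  have hn2 : n = 2 * (p * q) := by
    obtain ⟨m, hm⟩ := hne; omega
  -- case d = 0
  rcases Nat.eq_zero_or_pos d with hd0 | hdpos
  · exfalso
    subst hd0
    simp only [Nat.cast_zero, ne_eq, OfNat.ofNat_ne_zero, not_false_eq_true, zero_pow,
      zero_add, zero_sub, mul_neg, mul_one] at hr
    have h1 : ((n:ℤ) - 1) ∣ (n:ℤ) := ⟨-r, by linarith [hr]⟩
    have h2 : ((n:ℤ) - 1) ∣ 1 := by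
      have := dvd_sub h1 (dvd_refl ((n:ℤ) - 1))
      simpa using this
    have h3 : ((n:ℤ) - 1) ≤ 1 := Int.le_of_dvd one_pos h2
    have h4 : (2:ℤ) ≤ n := by exact_mod_cast hn
    have hne2 : n = 2 := by omega
    omega
  -- d ≥ 1 : extract e with e^2 = d^2 + n - 1
  have hndpos : (0:ℤ) < (n:ℤ) * d := by
    have h1 : (0:ℤ) < n := by exact_mod_cast (by omega : 0 < n)
    have h2 : (0:ℤ) < d := by exact_mod_cast hdpos
    exact mul_pos h1 h2
  have hknz : k ≠ 0 := by
    intro h0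
    rw [h0] at hk
    have h1 : ((n:ℤ) * d) ^ 2 = 0 := by linarith [hk]
    have := pow_eq_zero_iff (n := 2) (by norm_num) |>.mp h1
    omega
  -- k^2 ∣ (n*d)^2
  have hdvd2 : k ^ 2 ∣ ((n:ℤ) * d) ^ 2 := Dvd.intro_left _ hk
  have hdvd1 : k ∣ ((n:ℤ) * d) := (Int.pow_dvd_pow_iff (two_ne_zero)).mp hdvd2
  obtain ⟨e0, he0⟩ := hdvd1
  -- e := |e0|
  have hk2pos : (0:ℤ) < k ^ 2 := by positivity
  have hE : ((d:ℤ)^2 + n - 1) = e0^2 := by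
    have heq : ((d:ℤ)^2 + n - 1) * k^2 = e0^2 * k^2 := by rw [hk, he0]; ring
    exact mul_right_cancel₀ (ne_of_gt hk2pos) heq
  obtain ⟨e, hEe⟩ : ∃ e : ℕ, ((d:ℤ)^2 + n - 1) = (e:ℤ)^2 :=
    ⟨e0.natAbs, by rw [hE, ← Int.natAbs_pow_two e0]⟩
  -- Nat version
  have hNat : e^2 + 1 = d^2 + n := by
    zify
    linarith [hEe]
  have hde : d < e := by
    by_contra hc
    push_neg at hc
    have : e^2 ≤ d^2 := Nat.pow_le_pow_left hc 2
    omega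
  -- if e = d + 1 we are done
  rcases Nat.lt_or_ge e (d + 2) with h1 | he2
  · have he1 : e = d + 1 := by omega
    rw [he1] at hNat
    have : (d+1)^2 = d^2 + 2*d + 1 := by ring
    omega
  -- now e ≥ d + 2 : derive contradiction
  exfalso
  -- e^2 ∣ (d^2-1)^2  (in ℤ)
  have hz1 : ((e:ℤ))^2 ∣ ((d:ℤ)^2 - 1)^2 := by
    refine ⟨((d:ℤ)^2 - 1) - r, ?_⟩
    have hnz : (n:ℤ) = (e:ℤ)^2 - (d:ℤ)^2 + 1 := by linarith [hEe]
    rw [← hEe]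
    nlinarith [hr, hnz]
  -- transfer to ℕ : e ∣ d^2 - 1
  have hd2ge : 1 ≤ d^2 := Nat.one_le_pow _ _ hdpos
  have hcast : ((d^2 - 1 : ℕ) : ℤ) = (d:ℤ)^2 - 1 := by
    push_cast [hd2ge]
    ring
  have hz2 : (e:ℕ)^2 ∣ (d^2 - 1)^2 := by
    have : ((e:ℤ))^2 ∣ (((d^2-1:ℕ)):ℤ)^2 := by rw [hcast]; exact hz1
    exact_mod_cast this
  have hDvd : e ∣ d^2 - 1 := (Nat.pow_dvd_pow_iff two_ne_zero).mp hz2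
  -- case d = 1
  rcases Nat.lt_or_ge d 2 with hd1 | hd2
  · -- d = 1, n = e^2
    have hd1' : d = 1 := by omega
    subst hd1'
    have hne2 : n = e^2 := by omega
    have h2e : 2 ∣ e := by
      have h2n : 2 ∣ n := hne.two_dvd
      have : (2:ℕ).Prime := Nat.prime_two
      exact this.dvd_of_dvd_pow (hne2 ▸ h2n)
    obtain ⟨f, rfl⟩ := h2e
    have hfq : 2 * f^2 = p * q := by
      have : (2*f)^2 = 4 * f^2 := by ring
      omega
    have h2pq : (2:ℕ) ∣ p * q := ⟨f^2, hfq.symm⟩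
    rcases (Nat.prime_two.dvd_mul).mp h2pq with h2p | h2p
    · have hp2' : p = 2 := ((Nat.prime_dvd_prime_iff_eq Nat.prime_two hp).mp h2p).symm
      subst hp2'
      have hfq' : f^2 = q := by omega
      exact absurd ((Nat.Prime.pow_eq_iff hq).mp hfq').2 (by norm_num)
    · have hq2' : q = 2 := ((Nat.prime_dvd_prime_iff_eq Nat.prime_two hq).mp h2p).symm
      subst hq2'
      have hfq' : f^2 = p := by omega
      exact absurd ((Nat.Prime.pow_eq_iff hp).mp hfq').2 (by norm_num)
  -- now d ≥ 2
  obtain ⟨g, hg⟩ := hDvd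
  have key : e * g + 1 = d ^ 2 := by
    rw [← hg]
    omega
  have hE2 : e ^ 2 % 2 = e % 2 := by
    rw [Nat.pow_mod]
    rcases Nat.mod_two_eq_zero_or_one e with h | h <;> rw [h] <;> rfl
  have hD2 : d ^ 2 % 2 = d % 2 := by
    rw [Nat.pow_mod]
    rcases Nat.mod_two_eq_zero_or_one d with h | h <;> rw [h] <;> rfl
  have hn2' : n % 2 = 0 := Nat.even_iff.mp hne
  have hpar : e % 2 = 0 → d % 2 = 1 := by
    intro hepar
    have h1 := hNat
    have h2 := hE2
    have h3 := hD2
    generalize hA : e ^ 2 = A at h1 h2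
    generalize hB : d ^ 2 = B at h1 h3
    omega
  have hgpos : 1 ≤ g := by
    rcases Nat.eq_zero_or_pos g with h0 | h0
    · exfalso
      rw [h0, Nat.mul_zero] at key
      have h4 : 2 ^ 2 ≤ d ^ 2 := Nat.pow_le_pow_left hd2 2
      norm_num at h4
      linarith
    · exact h0
  have hge : g < e := by
    have h1 : e * g + n = e * e := by
      have : e ^ 2 = e * e := by ring
      omega
    have h2 : e * g < e * e := by omega
    exact Nat.lt_of_mul_lt_mul_left h2
  obtain ⟨h, he_g⟩ : ∃ h, e = g + h := ⟨e - g, by omega⟩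
  have heh : e * h = n := by
    have h1 : e * g + n = e * e := by
      have : e ^ 2 = e * e := by ring
      omega
    have h2 : e * e = e * g + e * h := by rw [he_g]; ring
    omega
  have hhpos : 1 ≤ h := by
    rcases Nat.eq_zero_or_pos h with h0 | h0
    · rw [h0, Nat.mul_zero] at heh; omega
    · exact h0
  have hh3 : 3 ≤ h := by
    by_contra hc
    push_neg at hc
    have hgd : d ≤ g := by omega
    have h1 : (d + 2) * d ≤ e * g := Nat.mul_le_mul he2 hgd
    have h2 : (d + 2) * d = d * d + 2 * d := by ring
    have h3 : d ^ 2 = d * d := by ring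
    linarith
  have he4 : 4 ≤ e := by omega
  -- structure of e
  have heform : Nat.Prime e ∨ ∃ r', Nat.Prime r' ∧ e = 2 * r' := by
    rcases Nat.even_or_odd e with heven | hodd
    · right
      obtain ⟨f, hf⟩ := heven
      have hf2 : e = 2 * f := by omega
      have hfh : f * h = p * q := by
        have h1 : 2 * (f * h) = 2 * (p * q) := by
          rw [← hn2, ← heh, hf2]; ring
        omega
      have hfd : f ∣ p * q := ⟨h, hfh.symm⟩
      rcases dvd_pq hp hq hfd with h1 | h1 | h1 | h1
      · exfalso; omega
      · exact ⟨p, hp, by omega⟩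
      · exact ⟨q, hq, by omega⟩
      · exfalso
        rw [h1] at hfh
        have hpqpos : 0 < p * q := by omega
        have : h = 1 := Nat.eq_of_mul_eq_mul_left hpqpos (by linarith [hfh])
        omega
    · left
      have hed : e ∣ 2 * (p * q) := by rw [← hn2]; exact ⟨h, heh.symm⟩
      have hco : Nat.Coprime e 2 := Nat.coprime_two_right.mpr hodd
      have hepq : e ∣ p * q := hco.dvd_of_dvd_mul_left hed
      rcases dvd_pq hp hq hepq with h1 | h1 | h1 | h1
      · exfalso; omega
      · rw [h1]; exact hp
      · rw [h1]; exact hq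
      · exfalso
        have h2 : e * h = e * 2 := by
          rw [heh, hn2, h1]; ring
        have : h = 2 := Nat.eq_of_mul_eq_mul_left (by omega) h2
        omega
  -- factorization of d^2 - 1
  obtain ⟨m, rfl⟩ : ∃ m, d = m + 2 := ⟨d - 2, by omega⟩
  have hfac : (m + 2) ^ 2 - 1 = (m + 1) * (m + 3) :=
    Nat.sub_eq_of_eq_add (by ring)
  rcases heform with hpe | ⟨r', hpr, her⟩
  · -- e prime
    have hdvd' : e ∣ (m + 1) * (m + 3) := by rw [← hfac]; exact ⟨g, hg⟩
    rcases (Nat.Prime.dvd_mul hpe).mp hdvd' with h1 | h1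
    · have := Nat.le_of_dvd (by omega) h1
      omega
    · have := Nat.le_of_dvd (by omega) h1
      omega
  · -- e = 2 * r'
    have hd_odd : (m + 2) % 2 = 1 := hpar (by omega)
    obtain ⟨t, ht⟩ : ∃ t, m = 2 * t + 1 := ⟨m / 2, by omega⟩
    have h8 : 8 ∣ (m + 2) ^ 2 - 1 := by
      rcases Nat.even_or_odd t with ⟨u, hu⟩ | ⟨u, hu⟩
      · exact ⟨2 * u ^ 2 + 3 * u + 1, Nat.sub_eq_of_eq_add (by subst ht; subst hu; ring)⟩
      · exact ⟨2 * u ^ 2 + 5 * u + 3, Nat.sub_eq_of_eq_add (by subst ht; subst hu; ring)⟩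
    rw [hg] at h8
    obtain ⟨x, hx⟩ := h8
    have hrg : r' * g = 4 * x := by
      have h1 : 2 * (r' * g) = 8 * x := by
        rw [← hx, her]; ring
      omega
    rcases hpr.eq_two_or_odd' with hr2 | hrodd
    · -- e = 4
      have : e = 4 := by omega
      omega
    · -- r' odd
      have h2g : 2 ∣ g := by
        have h2rg : 2 ∣ r' * g := ⟨2 * x, by rw [hrg]; ring⟩
        rcases (Nat.prime_two.dvd_mul).mp h2rg with h2r | h2g
        · exact absurd ((Nat.prime_dvd_prime_iff_eq Nat.prime_two hpr).mp h2r).symm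
            (by rintro rfl; exact (Nat.not_odd_iff_even.mpr even_two) hrodd)
        · exact h2g
      have hheven : h % 2 = 0 := by
        obtain ⟨g', hg'⟩ := h2g
        omega
      have hrh : r' * h = p * q := by
        have h1 : 2 * (r' * h) = 2 * (p * q) := by
          rw [← hn2, ← heh, her]; ring
        omega
      have hhd : h ∣ p * q := ⟨r', by rw [← hrh]; ring⟩
      rcases dvd_pq hp hq hhd with h1 | h1 | h1 | h1
      · omega
      · have : p = 2 := (Nat.Prime.even_iff hp).mp (by rw [← h1]; exact Nat.even_iff.mpr hheven)
        omega
      · have : q = 2 := (Nat.Prime.even_iff hq).mp (by rw [← h1]; exact Nat.even_iff.mpr hheven)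
        omega
      · rw [h1] at hrh
        have hpqpos : 0 < p * q := by omega
        have h2 : r' * (p * q) = 1 * (p * q) := by rw [one_mul]; exact hrh
        have : r' = 1 := Nat.eq_of_mul_eq_mul_right hpqpos h2
        exact absurd this hpr.one_lt.ne'



variable {n : ℕ} [NeZero n]

lemma psum (b : ZMod n) :
    ∑ x : ZMod n, ZMod.stdAddChar (x * b) = if b = 0 then (n : ℂ) else 0 := by
  have h := AddChar.sum_mulShift b (ZMod.isPrimitive_stdAddChar n)
  simpa [ZMod.card] using h

lemma pconj (x : ZMod n) :
    (starRingEnd ℂ) (ZMod.stdAddChar x) = ZMod.stdAddChar (-x) := by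
  rw [AddChar.starComp_apply (by rw [ZMod.ringChar_zmod_n]; exact Nat.pos_of_ne_zero (NeZero.ne n))]
  simp

lemma corr_eq (c : ZMod n → ℂ) (t : ZMod n) :
    ∑ m : ZMod n, (∑ j : ZMod n, c j * ZMod.stdAddChar (j * m)) *
      (∑ k : ZMod n, c k * ZMod.stdAddChar (k * (m + t)))
    = (n : ℂ) * ∑ k : ZMod n, c (-k) * c k * ZMod.stdAddChar (k * t) := by
  have step1 : ∀ m : ZMod n,
      (∑ j : ZMod n, c j * ZMod.stdAddChar (j * m)) *
        (∑ k : ZMod n, c k * ZMod.stdAddChar (k * (m + t)))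
      = ∑ j : ZMod n, ∑ k : ZMod n,
          (c j * c k * ZMod.stdAddChar (k * t)) * ZMod.stdAddChar ((j + k) * m) := by
    intro m
    rw [Finset.sum_mul_sum]
    refine Finset.sum_congr rfl fun j _ => Finset.sum_congr rfl fun k _ => ?_
    have h1 : ZMod.stdAddChar (k * (m + t))
        = ZMod.stdAddChar (k * t) * ZMod.stdAddChar (k * m) := by
      rw [show k * (m + t) = k * t + k * m by ring, AddChar.map_add_eq_mul]
    have h2 : ZMod.stdAddChar ((j + k) * m)
        = ZMod.stdAddChar (j * m) * ZMod.stdAddChar (k * m) := by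
      rw [show (j + k) * m = j * m + k * m by ring, AddChar.map_add_eq_mul]
    rw [h1, h2]
    ring
  rw [Finset.sum_congr rfl fun m _ => step1 m]
  rw [Finset.sum_comm]
  have step2 : ∀ j : ZMod n,
      (∑ m : ZMod n, ∑ k : ZMod n,
        (c j * c k * ZMod.stdAddChar (k * t)) * ZMod.stdAddChar ((j + k) * m))
      = ∑ k : ZMod n, (c j * c k * ZMod.stdAddChar (k * t)) *
          (if j + k = 0 then (n : ℂ) else 0) := by
    intro j
    rw [Finset.sum_comm]
    refine Finset.sum_congr rfl fun k _ => ?_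
    rw [← Finset.mul_sum]
    congr 1
    rw [show (∑ m : ZMod n, ZMod.stdAddChar ((j + k) * m))
        = ∑ m : ZMod n, ZMod.stdAddChar (m * (j + k)) by
      exact Finset.sum_congr rfl fun m _ => by rw [mul_comm]]
    exact psum (j + k)
  rw [Finset.sum_congr rfl fun j _ => step2 j]
  have step3 : ∀ j : ZMod n,
      (∑ k : ZMod n, (c j * c k * ZMod.stdAddChar (k * t)) *
        (if j + k = 0 then (n : ℂ) else 0))
      = (n : ℂ) * (c ( -(-j) ) * c (-j) * ZMod.stdAddChar ((-j) * t)) := by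
    intro j
    have : ∀ k : ZMod n, (c j * c k * ZMod.stdAddChar (k * t)) *
        (if j + k = 0 then (n : ℂ) else 0)
        = if k = -j then (n : ℂ) * (c j * c k * ZMod.stdAddChar (k * t)) else 0 := by
      intro k
      by_cases hk : k = -j
      · subst hk; simp [mul_comm]
      · have : j + k ≠ 0 := fun h => hk (by linear_combination h)
        simp [this, hk]
    rw [Finset.sum_congr rfl fun k _ => this k]
    rw [Finset.sum_ite_eq' Finset.univ (-j)]
    simp [neg_neg]
  rw [Finset.sum_congr rfl fun j _ => step3 j]
  rw [← Finset.mul_sum]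
  congr 1
  exact Fintype.sum_equiv (Equiv.neg (ZMod n))
    (fun j => c (-(-j)) * c (-j) * ZMod.stdAddChar ((-j) * t))
    (fun k => c (-k) * c k * ZMod.stdAddChar (k * t))
    (fun j => by simp)

lemma sq_eq (c : ZMod n → ℂ) (m : ZMod n) :
    (∑ j : ZMod n, c j * ZMod.stdAddChar (j * m)) *
      (∑ k : ZMod n, (starRingEnd ℂ) (c k) * ZMod.stdAddChar (-(k * m)))
    = ∑ s : ZMod n, (∑ k : ZMod n, c (s + k) * (starRingEnd ℂ) (c k)) *
        ZMod.stdAddChar (s * m) := by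
  rw [Finset.sum_mul_sum]
  have step1 : ∀ j : ZMod n, ∀ k : ZMod n,
      (c j * ZMod.stdAddChar (j * m)) * ((starRingEnd ℂ) (c k) * ZMod.stdAddChar (-(k * m)))
      = (c j * (starRingEnd ℂ) (c k)) * ZMod.stdAddChar ((j - k) * m) := by
    intro j k
    have h1 : ZMod.stdAddChar ((j - k) * m)
        = ZMod.stdAddChar (j * m) * ZMod.stdAddChar (-(k * m)) := by
      rw [show (j - k) * m = j * m + -(k * m) by ring, AddChar.map_add_eq_mul]
    rw [h1]
    ring
  rw [Finset.sum_congr rfl fun j _ => Finset.sum_congr rfl fun k _ => step1 j k]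
  rw [Finset.sum_comm]
  have step2 : ∀ k : ZMod n,
      (∑ j : ZMod n, (c j * (starRingEnd ℂ) (c k)) * ZMod.stdAddChar ((j - k) * m))
      = ∑ s : ZMod n, (c (s + k) * (starRingEnd ℂ) (c k)) * ZMod.stdAddChar (s * m) := by
    intro k
    exact (Fintype.sum_equiv (Equiv.addRight k)
      (fun s => (c (s + k) * (starRingEnd ℂ) (c k)) * ZMod.stdAddChar (s * m))
      (fun j => (c j * (starRingEnd ℂ) (c k)) * ZMod.stdAddChar ((j - k) * m))
      (fun s => by simp)).symm
  rw [Finset.sum_congr rfl fun k _ => step2 k]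
  rw [Finset.sum_comm]
  exact Finset.sum_congr rfl fun s _ => by rw [Finset.sum_mul]



end aux

theorem stmt12 (n : ℕ) [NeZero n] (hn : 2 ≤ n) (hne : Even n)
    (c : ZMod n → ℂ) (C : Matrix (ZMod n) (ZMod n) ℂ)
    (hC : ∀ j k, C j k = c (k - j))
    (d : ℕ)  (hc0 : c 0 = (d : ℂ))
    (hunit : ∀ j : ZMod n, j ≠ 0 → ‖c j‖ = 1)
    (hHerm : C.IsHermitian)
    (horth : C * C.conjTranspose = (((d : ℝ) ^ 2 + n - 1 : ℝ) : ℂ) • 1)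
    (p q : ℕ) (hp : Nat.Prime p) (hq : Nat.Prime q) (hpq : n / 2 = p * q) :
    n = 2 * d + 2 := by
  classical
  have hcconj : ∀ u : ZMod n, (starRingEnd ℂ) (c u) = c (-u) := by
    intro u
    have h := congrFun (congrFun hHerm.eq u) 0
    simp only [conjTranspose_apply, hC, zero_sub, sub_zero] at h
    exact h
  have hA : ∀ u : ZMod n,
      (∑ s : ZMod n, c s * (starRingEnd ℂ) (c (s + u)))
      = if u = 0 then ((d:ℂ)^2 + (n:ℂ) - 1) else 0 := by
    intro u
    have h := congrFun (congrFun horth 0) (-u)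
    rw [Matrix.mul_apply] at h
    simp only [conjTranspose_apply, hC, Matrix.smul_apply, Matrix.one_apply, sub_zero,
      sub_neg_eq_add, smul_eq_mul, mul_ite, mul_one, mul_zero] at h
    have hcast : ((((d:ℝ)^2 + (n:ℝ) - 1 : ℝ)) : ℂ) = (d:ℂ)^2 + (n:ℂ) - 1 := by push_cast; ring
    rw [hcast] at h
    have hiff : (0 : ZMod n) = -u ↔ u = 0 := by constructor <;> intro hh <;> simp_all <;> linear_combination -hh
    rw [if_congr hiff rfl rfl] at h
    exact h
  -- eigenvalues
  set lam : ZMod n → ℂ := fun m => ∑ j : ZMod n, c j * ZMod.stdAddChar (j * m) with hlam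
  have h_lam_real : ∀ m, (starRingEnd ℂ) (lam m) = lam m := by
    intro m
    rw [hlam]
    simp only
    rw [map_sum]
    have h1 : ∀ j : ZMod n, (starRingEnd ℂ) (c j * ZMod.stdAddChar (j * m))
        = c (-j) * ZMod.stdAddChar ((-j) * m) := by
      intro j
      rw [_root_.map_mul, hcconj, pconj, neg_mul]
    rw [Finset.sum_congr rfl fun j _ => h1 j]
    exact Fintype.sum_equiv (Equiv.neg (ZMod n))
      (fun j => c (-j) * ZMod.stdAddChar ((-j) * m))
      (fun j => c j * ZMod.stdAddChar (j * m))
      (fun j => by simp)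
  have h_lam_sq : ∀ m, lam m * lam m = (d:ℂ)^2 + (n:ℂ) - 1 := by
    intro m
    nth_rewrite 2 [← h_lam_real m]
    have hconj_lam : (starRingEnd ℂ) (lam m)
        = ∑ k : ZMod n, (starRingEnd ℂ) (c k) * ZMod.stdAddChar (-(k * m)) := by
      rw [hlam]
      simp only
      rw [map_sum]
      exact Finset.sum_congr rfl fun k _ => by rw [_root_.map_mul, pconj]
    rw [hconj_lam, hlam]
    simp only
    rw [sq_eq c m]
    have hB : ∀ s : ZMod n, (∑ k : ZMod n, c (s + k) * (starRingEnd ℂ) (c k))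
        = if s = 0 then ((d:ℂ)^2 + (n:ℂ) - 1) else 0 := by
      intro s
      have h1 : (starRingEnd ℂ) (∑ k : ZMod n, c k * (starRingEnd ℂ) (c (k + s)))
          = ∑ k : ZMod n, c (s + k) * (starRingEnd ℂ) (c k) := by
        rw [map_sum]
        refine Finset.sum_congr rfl fun k _ => ?_
        rw [_root_.map_mul, Complex.conj_conj, mul_comm, add_comm k s]
      rw [← h1, hA s]
      split_ifs
      · rw [map_sub, map_add, map_pow, Complex.conj_natCast, Complex.conj_natCast, _root_.map_one]
      · exact map_zero _
    rw [Finset.sum_congr rfl fun s _ => by rw [hB s]]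
    simp only [ite_mul, zero_mul]
    rw [Finset.sum_ite_eq' Finset.univ (0 : ZMod n)]
    simp
  have h_sum_lam : ∑ m : ZMod n, lam m = (n:ℂ) * (d:ℂ) := by
    rw [hlam]
    simp only
    rw [Finset.sum_comm]
    have h1 : ∀ j : ZMod n, (∑ m : ZMod n, c j * ZMod.stdAddChar (j * m))
        = c j * (if j = 0 then (n:ℂ) else 0) := by
      intro j
      rw [← Finset.mul_sum]
      congr 1
      rw [Finset.sum_congr rfl fun m _ => by rw [mul_comm j m]]
      exact psum j
    rw [Finset.sum_congr rfl fun j _ => h1 j]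
    have h2 : ∀ j : ZMod n, c j * (if j = 0 then (n:ℂ) else 0)
        = if j = 0 then c j * (n:ℂ) else 0 := fun j => by split_ifs <;> simp
    rw [Finset.sum_congr rfl fun j _ => h2 j]
    rw [Finset.sum_ite_eq' Finset.univ (0 : ZMod n)]
    simp [hc0]
    ring
  have h_corr : ∀ t : ZMod n, t ≠ 0 →
      ∑ m : ZMod n, lam m * lam (m + t) = (n:ℂ) * ((d:ℂ)^2 - 1) := by
    intro t ht
    rw [hlam]
    simp only
    rw [corr_eq c t]
    congr 1
    have h1 : ∀ k : ZMod n, c (-k) * c k * ZMod.stdAddChar (k * t)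
        = (if k = 0 then (d:ℂ)^2 else 1) * ZMod.stdAddChar (k * t) := by
      intro k
      congr 1
      rw [← hcconj k]
      by_cases hk : k = 0
      · subst hk
        rw [hc0]
        simp
        ring
      · rw [if_neg hk, mul_comm, Complex.mul_conj, Complex.normSq_eq_norm_sq, hunit k hk]
        norm_num
    rw [Finset.sum_congr rfl fun k _ => h1 k]
    have h2 : ∀ k : ZMod n, (if k = 0 then (d:ℂ)^2 else 1) * ZMod.stdAddChar (k * t)
        = ZMod.stdAddChar (k * t)
          + (if k = 0 then ((d:ℂ)^2 - 1) * ZMod.stdAddChar (k * t) else 0) := by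
      intro k
      split_ifs <;> ring
    rw [Finset.sum_congr rfl fun k _ => h2 k]
    rw [Finset.sum_add_distrib, psum t, if_neg ht]
    rw [Finset.sum_ite_eq' Finset.univ (0 : ZMod n)]
    simp
  -- real parts
  set Er : ℝ := (d:ℝ)^2 + (n:ℝ) - 1 with hEr
  have hErpos : 0 < Er := by
    rw [hEr]
    have : (2:ℝ) ≤ (n:ℝ) := by exact_mod_cast hn
    have h0 : (0:ℝ) ≤ (d:ℝ)^2 := sq_nonneg _
    linarith
  set L : ZMod n → ℝ := fun m => (lam m).re with hLdef
  have hL : ∀ m, lam m = ((L m : ℝ) : ℂ) := by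
    intro m
    exact (Complex.conj_eq_iff_re.mp (h_lam_real m)).symm
  have hLsq : ∀ m, L m ^ 2 = Er := by
    intro m
    have h1 := h_lam_sq m
    rw [hL m] at h1
    have h2 : ((L m ^ 2 : ℝ) : ℂ) = ((Er : ℝ) : ℂ) := by
      push_cast
      rw [hEr]
      push_cast
      linear_combination h1
    exact_mod_cast h2
  set sR : ℝ := Real.sqrt Er with hsR
  have hs : sR ^ 2 = Er := Real.sq_sqrt hErpos.le
  have hspos : 0 < sR := Real.sqrt_pos.mpr hErpos
  set eps : ZMod n → ℤ := fun m => if L m = sR then 1 else -1 with heps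
  have hLeps : ∀ m, L m = (eps m : ℝ) * sR := by
    intro m
    rw [heps]
    simp only
    by_cases hcs : L m = sR
    · rw [if_pos hcs]; simp [hcs]
    · rw [if_neg hcs]
      have h2 : (L m - sR) * (L m + sR) = 0 := by
        linear_combination hLsq m - hs
      rcases mul_eq_zero.mp h2 with h3 | h3
      · exact absurd (by linarith) hcs
      · push_cast
        linarith
  -- integer quantities
  set kk : ℤ := ∑ m : ZMod n, eps m with hkk
  have hsumL : ∑ m : ZMod n, L m = (n:ℝ) * (d:ℝ) := by
    have h1 : ((∑ m : ZMod n, L m : ℝ) : ℂ) = (n:ℂ) * (d:ℂ) := by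
      rw [Complex.ofReal_sum]
      rw [Finset.sum_congr rfl fun m _ => (hL m).symm]
      exact h_sum_lam
    have h2 : ((((n:ℝ) * (d:ℝ)) : ℝ) : ℂ) = (n:ℂ) * (d:ℂ) := by push_cast; ring
    rw [← h2] at h1
    exact_mod_cast h1
  have hks : ∑ m : ZMod n, L m = (kk : ℝ) * sR := by
    rw [Finset.sum_congr rfl fun m _ => hLeps m, ← Finset.sum_mul, hkk]
    push_cast
    ring
  have hkint : ((d:ℤ)^2 + (n:ℤ) - 1) * kk^2 = ((n:ℤ) * (d:ℤ))^2 := by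
    have h1 : Er * (kk:ℝ)^2 = ((n:ℝ) * (d:ℝ))^2 := by
      calc Er * (kk:ℝ)^2 = ((kk:ℝ) * sR)^2 := by rw [← hs]; ring
        _ = ((n:ℝ) * (d:ℝ))^2 := by rw [← hks, hsumL]
    have h2 : (((((d:ℤ)^2 + (n:ℤ) - 1) * kk^2 : ℤ)) : ℝ) = ((((n:ℤ) * (d:ℤ))^2 : ℤ) : ℝ) := by
      push_cast
      rw [hEr] at h1
      push_cast at h1
      linear_combination h1
    exact_mod_cast h2
  haveI : Fact (1 < n) := ⟨hn⟩
  have h1ne : (1 : ZMod n) ≠ 0 := by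
    intro h
    apply_fun ZMod.val at h
    rw [ZMod.val_one n, ZMod.val_zero] at h
    omega
  set rr : ℤ := ∑ m : ZMod n, eps m * eps (m + 1) with hrr
  have hsum2 : ∑ m : ZMod n, L m * L (m + 1) = (n:ℝ) * ((d:ℝ)^2 - 1) := by
    have h1 : ((∑ m : ZMod n, L m * L (m + 1) : ℝ) : ℂ) = (n:ℂ) * ((d:ℂ)^2 - 1) := by
      rw [Complex.ofReal_sum]
      rw [Finset.sum_congr rfl fun m _ => by rw [Complex.ofReal_mul, ← hL m, ← hL (m+1)]]
      exact h_corr 1 h1ne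
    have h2 : ((((n:ℝ) * ((d:ℝ)^2 - 1)) : ℝ) : ℂ) = (n:ℂ) * ((d:ℂ)^2 - 1) := by push_cast; ring
    rw [← h2] at h1
    exact_mod_cast h1
  have hrs : ∑ m : ZMod n, L m * L (m + 1) = (rr : ℝ) * Er := by
    have h1 : ∀ m : ZMod n, L m * L (m + 1) = ((eps m * eps (m + 1) : ℤ) : ℝ) * Er := by
      intro m
      rw [hLeps m, hLeps (m + 1), ← hs]
      push_cast
      ring
    rw [Finset.sum_congr rfl fun m _ => h1 m, ← Finset.sum_mul, hrr]
    push_cast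
    ring
  have hrint : ((d:ℤ)^2 + (n:ℤ) - 1) * rr = (n:ℤ) * ((d:ℤ)^2 - 1) := by
    have h1 : Er * (rr:ℝ) = (n:ℝ) * ((d:ℝ)^2 - 1) := by
      rw [← hsum2, hrs]; ring
    have h2 : (((((d:ℤ)^2 + (n:ℤ) - 1) * rr : ℤ)) : ℝ) = (((n:ℤ) * ((d:ℤ)^2 - 1) : ℤ) : ℝ) := by
      push_cast
      rw [hEr] at h1
      push_cast at h1
      linear_combination h1
    exact_mod_cast h2
  exact arith_main n d p q hn hne hp hq hpq rr kk hrint hkint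
end

section
/- Let C be a Hermitian n×n circulant matrix satisfying c₀ = d with d an integer, d ≥ 2, |c_j| = 1 for j = 1,…,n−1, and C C* = (d² + n − 1) I. If n/2 is a power of a prime, then n = 2d + 2. -/
open Complex Finset

theorem zsum (n : ℕ) [NeZero n] {M : Type*} [AddCommMonoid M] (f : ZMod n → M) :
    ∑ t : ZMod n, f t = ∑ i ∈ Finset.range n, f i := by
  apply Finset.sum_nbij' (fun (t : ZMod n) => t.val) (fun (i:ℕ) => (i : ZMod n))
  · intro a _; exact Finset.mem_range.mpr (ZMod.val_lt a)
  · intro a _; exact Finset.mem_univ _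
  · intro a _; exact ZMod.natCast_rightInverse a
  · intro i hi; exact ZMod.val_cast_of_lt (Finset.mem_range.mp hi)
  · intro a _; rw [ZMod.natCast_rightInverse a]

section char
variable (n : ℕ) [NeZero n]

noncomputable def ee : ZMod n → ℂ := fun j => Complex.exp (2 * Real.pi * Complex.I / n) ^ j.val

theorem hprim : IsPrimitiveRoot (Complex.exp (2 * Real.pi * Complex.I / n)) n :=
  Complex.isPrimitiveRoot_exp n (NeZero.ne n)

theorem zpow_mod (x : ℕ) : Complex.exp (2 * Real.pi * Complex.I / n) ^ (x % n)
    = Complex.exp (2 * Real.pi * Complex.I / n) ^ x := by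
  conv_rhs => rw [← Nat.mod_add_div x n]
  rw [pow_add, pow_mul, (hprim n).pow_eq_one, one_pow, mul_one]

omit [NeZero n] in
theorem ee_zero : ee n 0 = 1 := by simp [ee]

theorem ee_add (a b : ZMod n) : ee n (a + b) = ee n a * ee n b := by
  rw [ee, ZMod.val_add, zpow_mod, pow_add]; rfl

theorem ee_mul (a b : ZMod n) : ee n (a * b) = (ee n a) ^ b.val := by
  rw [ee, ZMod.val_mul, zpow_mod, pow_mul]; rfl

theorem ee_ne_one {a : ZMod n} (ha : a ≠ 0) : ee n a ≠ 1 := by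
  apply (hprim n).pow_ne_one_of_pos_of_lt _ (ZMod.val_lt a)
  exact (fun h => ha ((ZMod.val_eq_zero a).mp h))

theorem ee_pow_n (a : ZMod n) : ee n a ^ n = 1 := by
  rw [ee, ← pow_mul, mul_comm a.val n, pow_mul, (hprim n).pow_eq_one, one_pow]

theorem ee_sum (a : ZMod n) : ∑ t : ZMod n, ee n (a * t) = if a = 0 then (n : ℂ) else 0 := by
  rw [zsum n (fun t => ee n (a * t))]
  have : ∀ i ∈ Finset.range n, ee n (a * (i:ZMod n)) = (ee n a) ^ i := by
    intro i hi
    rw [ee_mul, ZMod.val_cast_of_lt (Finset.mem_range.mp hi)]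
  rw [Finset.sum_congr rfl this]
  split_ifs with h
  · subst h; simp [ee_zero]
  · rw [geom_sum_eq (ee_ne_one n h), ee_pow_n]; simp

theorem ee_conj (a : ZMod n) : (starRingEnd ℂ) (ee n a) = ee n (-a) := by
  have habs : ‖ee n a‖ = 1 := by
    rw [ee, norm_pow, Complex.norm_exp]
    have : (2 * Real.pi * Complex.I / n).re = 0 := by
      simp [Complex.div_re]
    rw [this, Real.exp_zero, one_pow]
  have h1 : ee n a * ee n (-a) = 1 := by rw [← ee_add]; simp [ee_zero]
  have h2 : ee n a * (starRingEnd ℂ) (ee n a) = 1 := by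
    rw [Complex.mul_conj, ← Complex.sq_norm, habs]; norm_num
  have hne : ee n a ≠ 0 := by
    intro h; rw [h] at habs; simp at habs
  exact mul_left_cancel₀ hne (h2.trans h1.symm)
end char

theorem sum_pm {ι : Type*} [Fintype ι] [DecidableEq ι] (x : ι → ℤ) (hx : ∀ i, x i = 1 ∨ x i = -1)
    (hp : ∏ i, x i = 1) : (4:ℤ) ∣ ((Fintype.card ι : ℤ) - ∑ i, x i) := by
  classical
  set s := Finset.univ.filter (fun i => x i = 1) with hs
  set t := Finset.univ.filter (fun i => ¬ x i = 1) with ht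
  have hxt : ∀ i ∈ t, x i = -1 := by
    intro i hi
    rcases hx i with h | h
    · exact absurd h (by simpa [ht] using hi)
    · exact h
  have hsum : ∑ i, x i = (s.card : ℤ) - t.card := by
    rw [← Finset.sum_filter_add_sum_filter_not univ (fun i => x i = 1)]
    rw [Finset.sum_congr rfl (fun i hi => (Finset.mem_filter.mp hi).2),
        Finset.sum_congr rfl hxt]
    simp only [Finset.sum_const, nsmul_eq_mul, mul_one, mul_neg_one, ← hs, ← ht]
    ring
  have hcard : s.card + t.card = Fintype.card ι := by
    rw [hs, ht]; rw [Finset.card_filter_add_card_filter_not]; rfl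
  have hprod : (-1:ℤ)^t.card = 1 := by
    have h1 : ∏ i, x i = (∏ i ∈ s, x i) * ∏ i ∈ t, x i :=
      (Finset.prod_filter_mul_prod_filter_not univ (fun i => x i = 1) x).symm
    have h2 : ∏ i ∈ s, x i = 1 := Finset.prod_eq_one (fun i hi => (Finset.mem_filter.mp hi).2)
    have h3 : ∏ i ∈ t, x i = (-1)^t.card := by rw [Finset.prod_congr rfl hxt, Finset.prod_const]
    rw [h1, h2, h3, one_mul] at hp
    exact hp
  have heven : Even t.card := by
    rcases Nat.even_or_odd t.card with h | h
    · exact h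
    · rw [h.neg_one_pow] at hprod; norm_num at hprod
  obtain ⟨j, hj⟩ := heven
  have : (Fintype.card ι : ℤ) - ∑ i, x i = 4 * j := by
    rw [hsum, ← hcard, hj]; push_cast; ring
  exact ⟨j, this⟩


theorem spectral (n : ℕ) [NeZero n] (hn : 2 ≤ n)
    (c : ZMod n → ℂ)
    (d : ℕ) (hd2 : 2 ≤ d) (hc0 : c 0 = (d : ℂ))
    (hunit : ∀ j : ZMod n, j ≠ 0 → ‖c j‖ = 1)
    (hconj : ∀ j, (starRingEnd ℂ) (c j) = c (-j))
    (hR : ∀ s : ZMod n, ∑ l : ZMod n, c l * (starRingEnd ℂ) (c (l - s))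
        = if s = 0 then (((d:ℝ)^2 + n - 1 : ℝ) : ℂ) else 0) :
    ∃ k A : ℤ, 0 < k ∧ k^2 * ((d:ℤ)^2 + n - 1) = (n*d)^2 ∧
      A * ((d:ℤ)^2 + n - 1) = n * ((d:ℤ)^2 - 1) ∧ (4:ℤ) ∣ (n - A) := by
  set Q0 : ℝ := (d:ℝ)^2 + n - 1 with hQ0
  have hQ0pos : 0 < Q0 := by
    have h1 : (2:ℝ) ≤ (d:ℝ) := by exact_mod_cast hd2
    have h2 : (2:ℝ) ≤ (n:ℝ) := by exact_mod_cast hn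
    nlinarith
  set lam : ZMod n → ℂ := fun t => ∑ j, c j * ee n (j * t) with hlam
  -- real
  have hlam_real : ∀ t, (starRingEnd ℂ) (lam t) = lam t := by
    intro t
    rw [hlam]
    simp only [map_sum, map_mul, ee_conj, hconj]
    apply Fintype.sum_equiv (Equiv.neg (ZMod n))
    intro j
    simp only [Equiv.neg_apply]
    congr 1
    congr 1
    ring
  -- squared modulus
  have hlam_sq : ∀ t, lam t * (starRingEnd ℂ) (lam t) = (Q0 : ℂ) := by
    intro t
    rw [hlam]
    simp only [map_sum, map_mul, ee_conj]
    rw [Finset.sum_mul_sum]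
    have step1 : ∀ j : ZMod n, ∑ k : ZMod n, (c j * ee n (j*t)) * ((starRingEnd ℂ) (c k) * ee n (-(k*t)))
        = ∑ s : ZMod n, (c j * (starRingEnd ℂ) (c (j - s))) * ee n (s * t) := by
      intro j
      apply Fintype.sum_equiv (Equiv.subLeft j)
      intro k
      simp only [Equiv.subLeft_apply]
      have : ee n (j*t) * ee n (-(k*t)) = ee n ((j-k) * t) := by
        rw [← ee_add]; congr 1; ring
      calc c j * ee n (j*t) * ((starRingEnd ℂ) (c k) * ee n (-(k*t)))
          = (c j * (starRingEnd ℂ) (c k)) * (ee n (j*t) * ee n (-(k*t))) := by ring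
        _ = (c j * (starRingEnd ℂ) (c (j - (j - k)))) * ee n ((j - k) * t) := by rw [this]; congr 2; ring_nf
    rw [Finset.sum_congr rfl (fun j _ => step1 j), Finset.sum_comm]
    have step2 : ∀ s : ZMod n, ∑ j : ZMod n, (c j * (starRingEnd ℂ) (c (j - s))) * ee n (s * t)
        = (if s = 0 then (Q0:ℂ) else 0) * ee n (s * t) := by
      intro s; rw [← Finset.sum_mul, hR s]
    rw [Finset.sum_congr rfl (fun s _ => step2 s)]
    have : ∀ s : ZMod n, (if s = 0 then (Q0:ℂ) else 0) * ee n (s * t) = if s = 0 then (Q0:ℂ) * ee n (s*t) else 0 := by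
      intro s; split_ifs <;> simp
    rw [Finset.sum_congr rfl (fun s _ => this s), Finset.sum_ite_eq' univ (0 : ZMod n)]
    simp [ee_zero]
  -- trace
  have htrace : ∑ t : ZMod n, lam t = (n : ℂ) * d := by
    rw [hlam, Finset.sum_comm]
    have : ∀ j : ZMod n, ∑ t : ZMod n, c j * ee n (j * t) = c j * (if j = 0 then (n:ℂ) else 0) := by
      intro j; rw [← Finset.mul_sum, ee_sum]
    rw [Finset.sum_congr rfl (fun j _ => this j)]
    have : ∀ j : ZMod n, c j * (if j = 0 then (n:ℂ) else 0) = if j = 0 then c j * n else 0 := by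
      intro j; split_ifs <;> simp
    rw [Finset.sum_congr rfl (fun j _ => this j), Finset.sum_ite_eq' univ (0 : ZMod n)]
    simp [hc0]; ring
  have hshift : ∀ s : ZMod n, s ≠ 0 → ∑ t : ZMod n, lam t * lam (t + s) = (n:ℂ) * ((d:ℂ)^2 - 1) := by
    intro s hs
    have expand : ∀ t, lam t * lam (t+s) = ∑ j : ZMod n, ∑ k : ZMod n,
        (c j * c k * ee n (k*s)) * ee n ((j+k)*t) := by
      intro t
      rw [hlam, Finset.sum_mul_sum]
      refine Finset.sum_congr rfl (fun j _ => Finset.sum_congr rfl (fun k _ => ?_))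
      have h1 : ee n (k * (t+s)) = ee n (k*t) * ee n (k*s) := by rw [← ee_add]; congr 1; ring
      have h2 : ee n (j*t) * ee n (k*t) = ee n ((j+k)*t) := by rw [← ee_add]; congr 1; ring
      calc c j * ee n (j*t) * (c k * ee n (k*(t+s)))
          = (c j * c k * ee n (k*s)) * (ee n (j*t) * ee n (k*t)) := by rw [h1]; ring
        _ = _ := by rw [h2]
    rw [Finset.sum_congr rfl (fun t _ => expand t), Finset.sum_comm]
    have inner : ∀ j : ZMod n, ∑ t : ZMod n, ∑ k : ZMod n, (c j * c k * ee n (k*s)) * ee n ((j+k)*t)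
        = (c j * c (-j) * ee n ((-j)*s)) * n := by
      intro j
      rw [Finset.sum_comm]
      have h1 : ∀ k : ZMod n, ∑ t : ZMod n, (c j * c k * ee n (k*s)) * ee n ((j+k)*t)
          = (c j * c k * ee n (k*s)) * (if j + k = 0 then (n:ℂ) else 0) := by
        intro k; rw [← Finset.mul_sum, ee_sum]
      rw [Finset.sum_congr rfl (fun k _ => h1 k)]
      have h2 : ∀ k : ZMod n, (c j * c k * ee n (k*s)) * (if j + k = 0 then (n:ℂ) else 0)
          = if k = -j then (c j * c k * ee n (k*s)) * n else 0 := by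
        intro k
        by_cases h : k = -j
        · subst h; simp
        · have : ¬ (j + k = 0) := fun hc => h (eq_neg_of_add_eq_zero_right hc)
          simp [h, this]
      rw [Finset.sum_congr rfl (fun k _ => h2 k), Finset.sum_ite_eq' univ (-j)]
      simp
    rw [Finset.sum_congr rfl (fun j _ => inner j)]
    have habs2 : ∀ j : ZMod n, c j * c (-j) = if j = 0 then ((d:ℂ))^2 else 1 := by
      intro j
      rw [← hconj j, Complex.mul_conj, Complex.normSq_eq_norm_sq]
      split_ifs with h
      · subst h; rw [hc0]; simp [Complex.norm_natCast]
      · rw [hunit j h]; norm_num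
    have step : ∀ j : ZMod n, (c j * c (-j) * ee n ((-j)*s)) * n
        = ((if j = 0 then ((d:ℂ))^2 - 1 else 0) + 1) * ee n ((-j)*s) * n := by
      intro j; rw [habs2]; split_ifs <;> ring
    rw [Finset.sum_congr rfl (fun j _ => step j)]
    have reindex : ∑ j : ZMod n, ((if j = 0 then ((d:ℂ))^2 - 1 else 0) + 1) * ee n ((-j)*s) * n
        = ∑ j : ZMod n, ((if j = 0 then ((d:ℂ))^2 - 1 else 0) + 1) * ee n (j*s) * n := by
      apply Fintype.sum_equiv (Equiv.neg (ZMod n))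
      intro j
      simp only [Equiv.neg_apply, neg_neg]
      congr 2
      simp only [neg_eq_zero]
    rw [reindex]
    have split : ∀ j : ZMod n, ((if j = 0 then ((d:ℂ))^2 - 1 else 0) + 1) * ee n (j*s) * n
        = (if j = 0 then ((d:ℂ)^2-1) * ee n (j*s) * n else 0) + ee n (s*j) * n := by
      intro j; rw [mul_comm j s]; split_ifs <;> ring
    rw [Finset.sum_congr rfl (fun j _ => split j), Finset.sum_add_distrib,
        Finset.sum_ite_eq' univ (0 : ZMod n), ← Finset.sum_mul, ee_sum]
    simp [hs, ee_zero]
    ring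
  classical
  set mu : ZMod n → ℝ := fun t => (lam t).re with hmu
  have hmu_eq : ∀ t, lam t = ((mu t : ℝ) : ℂ) := by
    intro t; exact (Complex.conj_eq_iff_re.mp (hlam_real t)).symm
  have hmu_sq : ∀ t, mu t ^ 2 = Q0 := by
    intro t
    have := hlam_sq t
    rw [hmu_eq t, Complex.conj_ofReal, ← Complex.ofReal_mul] at this
    rw [sq]; exact_mod_cast this
  set Qs : ℝ := Real.sqrt Q0 with hQs
  have hQspos : 0 < Qs := Real.sqrt_pos.mpr hQ0pos
  have hQs2 : Qs ^ 2 = Q0 := Real.sq_sqrt hQ0pos.le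
  set eps : ZMod n → ℤ := fun t => if 0 ≤ mu t then 1 else -1 with heps
  have heps_pm : ∀ t, eps t = 1 ∨ eps t = -1 := by
    intro t; rw [heps]; dsimp only; split_ifs <;> simp
  have hmu_val : ∀ t, mu t = (eps t : ℝ) * Qs := by
    intro t
    have h2 : mu t = Qs ∨ mu t = -Qs := by
      have := hmu_sq t
      rw [← hQs2] at this
      rcases sq_eq_sq_iff_eq_or_eq_neg.mp this with h | h
      · exact Or.inl h
      · exact Or.inr h
    rcases h2 with h | h
    · rw [heps]; dsimp only; rw [if_pos (h ▸ hQspos.le), h]; norm_num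
    · have hneg : ¬ (0 ≤ mu t) := by rw [h]; push_neg; linarith
      rw [heps]; dsimp only; rw [if_neg hneg, h]; norm_num
  set k : ℤ := ∑ t : ZMod n, eps t with hk
  -- trace in ℝ
  have htr : (k : ℝ) * Qs = n * d := by
    have : ((∑ t : ZMod n, lam t : ℂ)) = (((∑ t : ZMod n, mu t : ℝ)) : ℂ) := by
      rw [Complex.ofReal_sum]
      exact Finset.sum_congr rfl (fun t _ => hmu_eq t)
    rw [htrace] at this
    have hr : (∑ t : ZMod n, mu t) = (n : ℝ) * d := by
      have := this.symm
      exact_mod_cast this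
    rw [hk]
    push_cast
    rw [← hr, Finset.sum_mul]
    exact Finset.sum_congr rfl (fun t _ => (hmu_val t).symm)
  have hkpos : 0 < k := by
    have h1 : (0:ℝ) < (n:ℝ) * d := by
      have : 0 < n * d := Nat.mul_pos (by omega) (by omega)
      exact_mod_cast this
    have h2 : (0:ℝ) < (k:ℝ) := by nlinarith [htr, hQspos, h1]
    exact_mod_cast h2
  have hk2 : k^2 * ((d:ℤ)^2 + n - 1) = (n*d)^2 := by
    have : ((k:ℝ) * Qs)^2 = ((n:ℝ) * d)^2 := by rw [htr]
    rw [mul_pow, hQs2, hQ0] at this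
    exact_mod_cast this
  -- A
  have hone : (1 : ZMod n) ≠ 0 := by
    intro h
    have h1 : (1 : ZMod n).val = 1 % n := ZMod.val_one_eq_one_mod n
    rw [h, ZMod.val_zero] at h1
    have h2 : 1 % n = 1 := Nat.mod_eq_of_lt (by omega)
    omega
  set A : ℤ := ∑ t : ZMod n, eps t * eps (t + 1) with hA
  have hsh : (A : ℝ) * Q0 = n * ((d:ℝ)^2 - 1) := by
    have hc := hshift 1 hone
    have : ((∑ t : ZMod n, lam t * lam (t+1) : ℂ)) = (((∑ t : ZMod n, mu t * mu (t+1) : ℝ)) : ℂ) := by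
      rw [Complex.ofReal_sum]
      refine Finset.sum_congr rfl (fun t _ => ?_)
      rw [hmu_eq t, hmu_eq (t+1)]; push_cast; ring
    rw [hc] at this
    have hr : (∑ t : ZMod n, mu t * mu (t+1)) = (n : ℝ) * ((d:ℝ)^2 - 1) := by
      exact_mod_cast this.symm
    rw [hA, ← hr]
    push_cast
    rw [← hQs2, Finset.sum_mul]
    refine Finset.sum_congr rfl (fun t _ => ?_)
    rw [hmu_val t, hmu_val (t+1)]; ring
  have hAeq : A * ((d:ℤ)^2 + n - 1) = n * ((d:ℤ)^2 - 1) := by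
    rw [hQ0] at hsh
    exact_mod_cast hsh
  have h4 : (4:ℤ) ∣ (n - A) := by
    have hcard : (Fintype.card (ZMod n) : ℤ) = n := by
      rw [ZMod.card n]
    rw [← hcard]
    apply sum_pm (fun t => eps t * eps (t+1))
    · intro t
      rcases heps_pm t with h1 | h1 <;> rcases heps_pm (t+1) with h2 | h2 <;> simp [h1, h2]
    · have hP : (∏ t : ZMod n, eps t) = 1 ∨ (∏ t : ZMod n, eps t) = -1 := by
        apply Finset.prod_induction eps (fun z => z = 1 ∨ z = -1)
        · rintro a b (ha | ha) (hb | hb) <;> simp [ha, hb]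
        · left; rfl
        · intro t _; exact heps_pm t
      have hre : (∏ t : ZMod n, eps (t+1)) = ∏ t : ZMod n, eps t := by
        apply Fintype.prod_equiv (Equiv.addRight (1 : ZMod n))
        intro t; rfl
      rw [Finset.prod_mul_distrib, hre]
      rcases hP with h | h <;> rw [h] <;> norm_num
  exact ⟨k, A, hkpos, hk2, hAeq, h4⟩

theorem endgame_s13 (n d p m : ℕ) (hn : 2 ≤ n) (hd2 : 2 ≤ d) (hp : p.Prime) (hnpm : n = 2 * p ^ m)
    (k A : ℤ) (hk : 0 < k) (hk2 : k^2 * ((d:ℤ)^2 + n - 1) = (n*d)^2)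
    (hA : A * ((d:ℤ)^2 + n - 1) = n*((d:ℤ)^2 - 1)) (h4 : (4:ℤ) ∣ ((n:ℤ) - A)) : n = 2*d+2 := by
  have hndpos : (0:ℤ) < n * d := by positivity
  -- k ∣ n d
  have hdvd : k ∣ (n:ℤ) * d := by
    refine (Int.pow_dvd_pow_iff (two_ne_zero)).mp ⟨(d:ℤ)^2 + n - 1, hk2.symm⟩
  obtain ⟨q, hq⟩ := hdvd
  have hqpos : 0 < q := by
    rcases lt_trichotomy q 0 with h | h | h
    · nlinarith
    · rw [h] at hq; simp at hq; omega
    · exact h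
  have hq2 : (d:ℤ)^2 + n - 1 = q^2 := by
    have h1 : k^2 * ((d:ℤ)^2 + n - 1) = k^2 * q^2 := by rw [hk2, hq]; ring
    exact mul_left_cancel₀ (by positivity) h1
  -- q ∣ d² - 1
  have hqd : q ∣ (d:ℤ)^2 - 1 := by
    refine (Int.pow_dvd_pow_iff (two_ne_zero)).mp ⟨((d:ℤ)^2 - 1) - A, ?_⟩
    have hnq : (n:ℤ) = q^2 - ((d:ℤ)^2 - 1) := by linarith [hq2]
    nlinarith [hA, hnq]
  obtain ⟨w, hw⟩ := hqd
  have hd3 : (3:ℤ) ≤ (d:ℤ)^2 - 1 := by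
    have : (2:ℤ) ≤ d := by exact_mod_cast hd2
    nlinarith
  have hwpos : 0 < w := by nlinarith
  have hnqr : (n:ℤ) = q * (q - w) := by
    have hnq : (n:ℤ) = q^2 - ((d:ℤ)^2 - 1) := by linarith [hq2]
    rw [hnq, hw]; ring
  set r : ℤ := q - w with hr
  have hrpos : 0 < r := by nlinarith [hnqr, (show (0:ℤ) < n by exact_mod_cast Nat.lt_of_lt_of_le Nat.zero_lt_two hn)]
  have hAval : A = r * w := by
    have h1 : A * q^2 = (r * w) * q^2 := by
      have h2 : A * q^2 = (n:ℤ)*((d:ℤ)^2-1) := by rw [← hq2, hA]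
      rw [h2, hnqr, hw, hr]; ring
    exact mul_right_cancel₀ (by positivity) h1
  have hnA : (n:ℤ) - A = r^2 := by rw [hAval, hnqr, hr]; ring
  have h2r : (2:ℤ) ∣ r := by
    have h4r : (4:ℤ) ∣ r^2 := hnA ▸ h4
    have h2sq : (2:ℤ) ∣ r^2 := dvd_trans (by norm_num) h4r
    exact Int.prime_two.dvd_of_dvd_pow h2sq
  obtain ⟨s, hs⟩ := h2r
  have hspos : 0 < s := by omega
  -- to ℕ
  obtain ⟨qn, rfl⟩ := Int.eq_ofNat_of_zero_le hqpos.le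
  obtain ⟨sn, rfl⟩ := Int.eq_ofNat_of_zero_le hspos.le
  obtain ⟨wn, rfl⟩ := Int.eq_ofNat_of_zero_le hwpos.le
  have hqsn : qn * sn = p ^ m := by
    have hzn : (n:ℤ) = 2*((qn:ℤ)*sn) := by
      calc (n:ℤ) = qn * r := hnqr
        _ = 2*((qn:ℤ)*sn) := by rw [hs]; ring
    have hzn' : n = 2*(qn*sn) := by exact_mod_cast hzn
    omega
  have hqpn : qn ∣ p ^ m := Dvd.intro sn hqsn
  obtain ⟨a, ham, hqa⟩ := (Nat.dvd_prime_pow hp).mp hqpn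
  have hppos : 0 < p := hp.pos
  have hsn : sn = p ^ (m - a) := by
    have h1 : p^a * sn = p^a * p^(m-a) := by
      rw [← pow_add, Nat.add_sub_cancel' ham, ← hqa, hqsn]
    exact Nat.eq_of_mul_eq_mul_left (pow_pos hppos a) h1
  set b := m - a with hb
  have hsnb : sn = p ^ b := hsn
  by_cases hb0 : b = 0
  · -- easy case
    have hsn1 : sn = 1 := by rw [hsnb, hb0, pow_zero]
    have hr2 : r = 2 := by rw [hs, hsn1]; norm_num
    have hwz : (wn:ℤ) = (qn:ℤ) - 2 := by
      have := hr
      omega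
    have hdq : (d:ℤ)^2 = ((qn:ℤ)-1)^2 := by
      have h1 := hw
      rw [hwz] at h1
      linear_combination h1
    have hdq' : (d:ℤ) = (qn:ℤ) - 1 := by
      have hzero : ((d:ℤ) - ((qn:ℤ) - 1)) * ((d:ℤ) + ((qn:ℤ) - 1)) = 0 := by
        linear_combination hdq
      have h2 : (2:ℤ) ≤ (d:ℤ) := by exact_mod_cast hd2
      have h3 : (1:ℤ) ≤ (qn:ℤ) := by exact_mod_cast hqpos
      rcases mul_eq_zero.mp hzero with h | h
      · omega
      · omega
    have hfin : (n:ℤ) = 2 * d + 2 := by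
      rw [hnqr, hr2, hdq']; ring
    exact_mod_cast hfin
  · -- hard case
    have hb1 : 1 ≤ b := Nat.one_le_iff_ne_zero.mpr hb0
    have hwn1 : 1 ≤ wn := by exact_mod_cast hwpos
    have hqn_eq : qn = 2 * sn + wn := by
      have h1 : (qn:ℤ) = 2 * sn + wn := by
        have := hr; have := hs; omega
      exact_mod_cast h1
    have hab : b < a := by
      by_contra hle
      push_neg at hle
      have h1 : p^a ≤ p^b := Nat.pow_le_pow_right hppos hle
      rw [← hqa, ← hsnb] at h1
      omega
    set e := a - b with he
    have he1 : 1 ≤ e := by omega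
    have hae : a = b + e := by omega
    set x := p ^ e with hx
    set y := p ^ b with hy
    have hypos : 0 < y := pow_pos hppos b
    have hxpos : 0 < x := pow_pos hppos e
    have hqnyx : qn = y * x := by rw [hqa, hae, pow_add, hy, hx, mul_comm]
    have hyx : y * x = 2 * y + wn := by rw [← hqnyx, hqn_eq, hsnb]
    have hx3 : 3 ≤ x := by
      by_contra hc
      push_neg at hc
      have : y * x ≤ y * 2 := Nat.mul_le_mul_left y (by omega)
      omega
    have hwn_eq : wn = y * (x - 2) := by
      have h1 : y * (x - 2) = y * x - y * 2 := Nat.mul_sub y x 2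
      omega
    set P := p ^ (a + b) with hP
    have hPyx : P = y * x * y := by
      rw [hP, pow_add, hae, pow_add, ← hy, ← hx]
    have hdnat : d ^ 2 - 1 = qn * wn := by
      have h1 : ((d^2 : ℕ) : ℤ) - 1 = ((qn * wn : ℕ) : ℤ) := by push_cast; linarith [hw]
      omega
    have hd1 : 1 ≤ d := by omega
    have hdsq1 : 1 ≤ d ^ 2 := Nat.one_le_pow 2 d (by omega)
    have hkey : d ^ 2 - 1 = P * (x - 2) := by
      rw [hdnat, hqnyx, hwn_eq, hPyx]; ring
    have hfact : (d - 1) * (d + 1) = d ^ 2 - 1 := by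
      obtain ⟨dm, rfl⟩ : ∃ dm, d = dm + 2 := ⟨d - 2, by omega⟩
      have hsq : (dm+2)^2 = dm*dm + 4*dm + 4 := by ring
      have h0 : dm + 2 - 1 = dm + 1 := by omega
      have h3 : (dm+1)*(dm+2+1) = dm*dm + 4*dm + 3 := by ring
      rw [hsq, h0, h3]
      omega
    have hPdvd : P ∣ (d - 1) * (d + 1) := by
      rw [hfact, hkey]; exact Dvd.intro _ rfl
    have hPpos : 0 < P := pow_pos hppos _
    have hdd : d ^ 2 = 1 + P * (x - 2) := by omega
    -- P divides d-1 or d+1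
    have hPd : P ∣ d - 1 ∨ P ∣ d + 1 := by
      rcases hp.eq_two_or_odd with hp2 | hpodd
      · -- p = 2 case
        subst hp2
        have he2 : 2 ≤ e := by
          by_contra hc
          push_neg at hc
          have he1' : e = 1 := by omega
          rw [he1'] at hx
          rw [hx] at hx3; norm_num at hx3
        have hdodd : d % 2 = 1 := by
          have h2P : (2:ℕ) ∣ P := dvd_pow_self 2 (by omega : a + b ≠ 0)
          have h2M : (2:ℕ) ∣ P * (x - 2) := Dvd.dvd.mul_right h2P _
          rcases Nat.even_or_odd d with hev | hod
          · obtain ⟨c, hc⟩ := hev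
            have hdd2 : d ^ 2 = 2*(2*(c*c)) := by rw [hc]; ring
            omega
          · obtain ⟨c, hc⟩ := hod
            omega
        obtain ⟨c, hc⟩ : ∃ c, d = 2 * c + 1 := ⟨d / 2, by omega⟩
        have hc1 : 1 ≤ c := by omega
        set v := 2 ^ (e - 1) with hv
        have hxv : x = 2 * v := by rw [hx, hv, ← pow_succ']; congr 1; omega
        have h2v : (2:ℕ) ∣ v := dvd_pow_self 2 (by omega : e - 1 ≠ 0)
        have hv1 : 1 ≤ v := Nat.one_le_two_pow
        have hv2 : 2 ≤ v := by omega
        set W := 2^(a+b-1) with hW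
        have hPW : P = 2*W := by rw [hP, hW, ← pow_succ']; congr 1; omega
        have hx2 : x - 2 = 2 * (v - 1) := by omega
        have h1 : (d-1)*(d+1) = 4*(c*(c+1)) := by
          rw [hc]
          have h0 : (2*c+1)-1 = 2*c := by omega
          rw [h0]
          ring
        have hchain : 4*(c*(c+1)) = 4*(W*(v-1)) := by
          calc 4*(c*(c+1)) = (d-1)*(d+1) := h1.symm
            _ = P*(x-2) := by rw [hfact, hkey]
            _ = (2*W)*(2*(v-1)) := by rw [hPW, hx2]
            _ = 4*(W*(v-1)) := by ring
        have hccW : c*(c+1) = W*(v-1) := by omega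
        have hWdvd : W ∣ c*(c+1) := ⟨v-1, hccW⟩
        rcases Nat.even_or_odd c with hce | hco
        · left
          have hcop : Nat.Coprime W (c+1) := by
            apply Nat.Coprime.pow_left
            rw [Nat.coprime_two_left]
            exact Even.add_one hce
          have hWc : W ∣ c := hcop.dvd_of_dvd_mul_right hWdvd
          have : 2*W ∣ 2*c := mul_dvd_mul_left 2 hWc
          rw [hPW]
          have hd1' : d - 1 = 2*c := by omega
          rwa [hd1']
        · right
          have hcop : Nat.Coprime W c := by
            apply Nat.Coprime.pow_left
            rw [Nat.coprime_two_left]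
            exact hco
          have hWc : W ∣ c + 1 := hcop.dvd_of_dvd_mul_left hWdvd
          have : 2*W ∣ 2*(c+1) := mul_dvd_mul_left 2 hWc
          rw [hPW]
          have hd1' : d + 1 = 2*(c+1) := by omega
          rwa [hd1']
      · -- p odd
        have hp2le := hp.two_le
        by_cases hpd : p ∣ d - 1
        · left
          have hnd : ¬ p ∣ d + 1 := by
            intro hcon
            have h2 : p ∣ 2 := by
              have hsub := Nat.dvd_sub hcon hpd
              have he' : d + 1 - (d - 1) = 2 := by omega
              rwa [he'] at hsub
            have := Nat.le_of_dvd (by norm_num) h2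
            omega
          have hcop : Nat.Coprime P (d+1) :=
            Nat.Coprime.pow_left _ ((Nat.Prime.coprime_iff_not_dvd hp).mpr hnd)
          exact hcop.dvd_of_dvd_mul_right hPdvd
        · right
          have hcop : Nat.Coprime P (d-1) :=
            Nat.Coprime.pow_left _ ((Nat.Prime.coprime_iff_not_dvd hp).mpr hpd)
          exact hcop.dvd_of_dvd_mul_left hPdvd
    -- final contradiction
    have hPle : P ≤ d + 1 := by
      rcases hPd with h | h
      · exact le_trans (Nat.le_of_dvd (by omega) h) (by omega)
      · exact Nat.le_of_dvd (by omega) h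
    have hZ : (P:ℤ) ≤ (x:ℤ) := by
      have h1 : (d:ℤ)^2 = 1 + (P:ℤ)*((x:ℤ)-2) := by
        have hc : ((d^2 : ℕ):ℤ) = ((1 + P*(x-2) : ℕ):ℤ) := by exact_mod_cast congrArg (Nat.cast : ℕ → ℤ) hdd
        push_cast [Nat.cast_sub (show (2:ℕ) ≤ x by omega)] at hc
        exact hc
      have hP1 : (1:ℤ) ≤ (P:ℤ) := by exact_mod_cast hPpos
      have hx3' : (3:ℤ) ≤ (x:ℤ) := by exact_mod_cast hx3
      have hPd1 : (P:ℤ) ≤ (d:ℤ) + 1 := by exact_mod_cast hPle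
      have hsq : ((P:ℤ)-1)^2 ≤ (d:ℤ)^2 := by
        apply pow_le_pow_left₀ (by omega) (by omega)
      have e1 : ((P:ℤ)-1)^2 = (P:ℤ)*(P:ℤ) - 2*(P:ℤ) + 1 := by ring
      have e2 : (d:ℤ)^2 = 1 + (P:ℤ)*(x:ℤ) - 2*(P:ℤ) := by linear_combination h1
      have hmul : (P:ℤ) * (P:ℤ) ≤ (P:ℤ) * (x:ℤ) := by linarith [hsq, e1, e2]
      exact le_of_mul_le_mul_left hmul (by omega)
    have hZn : p^(a+b) ≤ p^e := by
      rw [← hP, ← hx]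
      exact_mod_cast hZ
    have hcontra : a + b ≤ e := (Nat.pow_le_pow_iff_right hp.one_lt).mp hZn
    exact absurd hcontra (by omega)

theorem stmt13 (n : ℕ) [NeZero n] (hn : 2 ≤ n) (hne : Even n)
    (c : ZMod n → ℂ) (C : Matrix (ZMod n) (ZMod n) ℂ)
    (hC : ∀ j k, C j k = c (k - j))
    (d : ℕ) (hd2 : 2 ≤ d) (hc0 : c 0 = (d : ℂ))
    (hunit : ∀ j : ZMod n, j ≠ 0 → ‖c j‖ = 1)
    (hHerm : C.IsHermitian)
    (horth : C * C.conjTranspose = (((d : ℝ) ^ 2 + n - 1 : ℝ) : ℂ) • 1)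
    (p m : ℕ) (hp : Nat.Prime p) (hpm : n / 2 = p ^ m) :
    n = 2 * d + 2 := by
  have hconj : ∀ j, (starRingEnd ℂ) (c j) = c (-j) := by
    intro j
    have h := congrFun (congrFun hHerm j) (0 : ZMod n)
    rw [Matrix.conjTranspose_apply, hC, hC] at h
    simpa using h
  have hR : ∀ s : ZMod n, ∑ l : ZMod n, c l * (starRingEnd ℂ) (c (l - s))
      = if s = 0 then (((d:ℝ)^2 + n - 1 : ℝ) : ℂ) else 0 := by
    intro s
    have h := congrFun (congrFun horth (0 : ZMod n)) s
    rw [Matrix.mul_apply] at h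
    simp only [Matrix.conjTranspose_apply, hC, Matrix.smul_apply, Matrix.one_apply,
      smul_eq_mul, sub_zero, Complex.star_def] at h
    rw [h]
    by_cases hs : s = 0
    · simp [hs]
    · have : ¬ ((0:ZMod n) = s) := fun hc => hs hc.symm
      simp [hs, this]
  obtain ⟨k, A, hk, hk2, hA, h4⟩ := spectral n hn c d hd2 hc0 hunit hconj hR
  have hnpm : n = 2 * p ^ m := by
    obtain ⟨r, hr⟩ := hne
    omega
  exact endgame_s13 n d p m hn hd2 hp hnpm k A hk hk2 hA h4
end

section
/- Let d ≥ 2 be an integer, p an odd prime (p ≥ 3), and m, j nonnegative integers such that p^{2j} − 2p^m = d² − 1. Then p^m divides d − 1 or p^m divides d + 1; in particular p^m ≤ d + 1. -/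
theorem stmt15 (d : ℤ) (hd : 2 ≤ d) (p : ℕ) (hp : Nat.Prime p) (hp3 : 3 ≤ p)
    (m j : ℕ) (h : (p : ℤ) ^ (2 * j) - 2 * (p : ℤ) ^ m = d ^ 2 - 1) :
    ((p : ℤ) ^ m ∣ d - 1 ∨ (p : ℤ) ^ m ∣ d + 1) ∧ (p : ℤ) ^ m ≤ d + 1 := by
  have hpz : Prime (p : ℤ) := Nat.prime_iff_prime_int.mp hp
  have hp1 : (1 : ℤ) < (p : ℤ) := by exact_mod_cast hp.one_lt
  have hmle : m ≤ 2 * j := by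
    by_contra h'
    push_neg at h'
    have h2 : (p : ℤ) ^ (2 * j) ≤ (p : ℤ) ^ m :=
      pow_le_pow_right₀ (le_of_lt hp1) (le_of_lt h')
    have h3 : (0 : ℤ) < (p : ℤ) ^ m := pow_pos (by linarith) m
    nlinarith
  have hdvd : (p : ℤ) ^ m ∣ (d - 1) * (d + 1) := by
    have heq : (d - 1) * (d + 1) = (p : ℤ) ^ (2 * j) - 2 * (p : ℤ) ^ m := by
      rw [h]; ring
    rw [heq]
    exact dvd_sub (pow_dvd_pow _ hmle) (Dvd.dvd.mul_left dvd_rfl 2)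
  have hnot : ¬ ((p : ℤ) ∣ d - 1 ∧ (p : ℤ) ∣ d + 1) := by
    rintro ⟨h1, h2⟩
    have : (p : ℤ) ∣ 2 := by
      have := dvd_sub h2 h1
      simpa using this
    have := Int.le_of_dvd (by norm_num) this
    have : (3 : ℤ) ≤ (p : ℤ) := by exact_mod_cast hp3
    linarith
  have hdisj : (p : ℤ) ^ m ∣ d - 1 ∨ (p : ℤ) ^ m ∣ d + 1 := by
    by_cases hc : (p : ℤ) ∣ d + 1
    · right
      have hnd : ¬ (p : ℤ) ∣ d - 1 := fun h1 => hnot ⟨h1, hc⟩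
      have hcop : IsCoprime ((p : ℤ) ^ m) (d - 1) :=
        ((hpz.coprime_iff_not_dvd).mpr hnd).pow_left
      exact hcop.dvd_of_dvd_mul_left hdvd
    · left
      have hcop : IsCoprime ((p : ℤ) ^ m) (d + 1) :=
        ((hpz.coprime_iff_not_dvd).mpr hc).pow_left
      exact hcop.dvd_of_dvd_mul_right hdvd
  refine ⟨hdisj, ?_⟩
  rcases hdisj with h1 | h1
  · have := Int.le_of_dvd (by linarith) h1
    linarith
  · exact Int.le_of_dvd (by linarith) h1
end

section
/- Let d ≥ 2 be an integer and m, j nonnegative integers such that 2^{2j} − 2^{m+1} = d² − 1 with d² − 1 > 0. Then 2^m divides d − 1 or 2^m divides d + 1; in particular 2^m ≤ d + 1. -/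
theorem stmt16 (d : ℤ) (hd : 2 ≤ d) (m j : ℕ)
    (h : (2 : ℤ) ^ (2 * j) - 2 ^ (m + 1) = d ^ 2 - 1) (hpos : 0 < d ^ 2 - 1) :
    ((2 : ℤ) ^ m ∣ d - 1 ∨ (2 : ℤ) ^ m ∣ d + 1) ∧ (2 : ℤ) ^ m ≤ d + 1 := by
  have hm1le : m + 1 ≤ 2 * j := by
    by_contra hc
    push_neg at hc
    have h2 : (2 : ℤ) ^ (2 * j) ≤ 2 ^ (m + 1) :=
      pow_le_pow_right₀ (by norm_num) (by omega)
    linarith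
  have hdvd : (2 : ℤ) ^ (m + 1) ∣ d ^ 2 - 1 := by
    rw [← h]
    exact dvd_sub (pow_dvd_pow 2 hm1le) dvd_rfl
  have hodd : Odd d := by
    rcases Int.even_or_odd d with he | ho
    · exfalso
      obtain ⟨c, hc⟩ := he
      have h2 : (2 : ℤ) ∣ d ^ 2 - 1 :=
        dvd_trans (dvd_pow_self 2 (Nat.succ_ne_zero m)) hdvd
      obtain ⟨e, he'⟩ := h2
      have h7 : d ^ 2 = 4 * (c * c) := by rw [hc]; ring
      rw [h7] at he'
      have h8 : ∃ u : ℤ, 4 * u - 1 = 2 * e := ⟨c * c, he'⟩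
      obtain ⟨u, h9⟩ := h8
      omega
    · exact ho
  obtain ⟨k, hk⟩ := hodd
  have key : (2 : ℤ) ^ m ∣ d - 1 ∨ (2 : ℤ) ^ m ∣ d + 1 := by
    cases m with
    | zero => left; simp
    | succ n =>
      have hdvd' : (2 : ℤ) ^ n ∣ k * (k + 1) := by
        have h4 : (2 : ℤ) ^ (n + 2) ∣ 2 ^ 2 * (k * (k + 1)) := by
          have : d ^ 2 - 1 = 2 ^ 2 * (k * (k + 1)) := by rw [hk]; ring
          rw [← this]
          exact hdvd
        have h5 : (2 : ℤ) ^ (n + 2) = 2 ^ 2 * 2 ^ n := by ring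
        rw [h5] at h4
        exact (mul_dvd_mul_iff_left (by norm_num : (2 : ℤ) ^ 2 ≠ 0)).mp h4
      rcases Int.even_or_odd k with hke | hko
      · left
        obtain ⟨c, hc⟩ := hke
        have hnot : ¬ (2 : ℤ) ∣ k + 1 := by omega
        have h6 : (2 : ℤ) ^ n ∣ k :=
          (Int.prime_two.pow_dvd_of_dvd_mul_right n hnot) hdvd'
        have : d - 1 = 2 * k := by omega
        rw [this]
        calc (2 : ℤ) ^ (n + 1) = 2 * 2 ^ n := by ring
        _ ∣ 2 * k := mul_dvd_mul_left 2 h6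
      · right
        have hnot : ¬ (2 : ℤ) ∣ k := by
          obtain ⟨c, hc⟩ := hko; omega
        have h6 : (2 : ℤ) ^ n ∣ k + 1 :=
          (Int.prime_two.pow_dvd_of_dvd_mul_left n hnot) hdvd'
        have : d + 1 = 2 * (k + 1) := by omega
        rw [this]
        calc (2 : ℤ) ^ (n + 1) = 2 * 2 ^ n := by ring
        _ ∣ 2 * (k + 1) := mul_dvd_mul_left 2 h6
  refine ⟨key, ?_⟩
  rcases key with h1 | h2
  · have := Int.le_of_dvd (by omega) h1
    omega
  · exact Int.le_of_dvd (by omega) h2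
end
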